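/- arXiv:1711.04319 — 7 statements merged into one kernel-verified Lean document; each statement's English description precedes it below -/
import Mathlib

section
/- If L : L¹([0,1]) → BV([0,1]) is a continuous Markov operator (positive, preserving integrals of densities) such that for every bounded variation function g with ∫g dm = 0 one has ‖Lⁿg‖₁ → 0 as n → ∞, then there exist C ≥ 0 and λ < 0 such that for all g ∈ L¹([0,1]) with ∫g dm = 0 and all n, ‖Lⁿg‖₁ ≤ C e^{λn} ‖g‖₁. -/
open MeasureTheory Set Filter
open scoped ENNReal NNReal

noncomputable section

/-- Lebesgue measure restricted to the unit interval `[0,1]`. -/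
abbrev μI : MeasureTheory.Measure ℝ := MeasureTheory.volume.restrict (Set.Icc (0:ℝ) 1)

/-- The variation of an `L¹([0,1])` element: the infimum of the variations of its
representatives (finite iff the element has a bounded variation representative). -/
def var (f : MeasureTheory.Lp ℝ 1 μI) : ℝ≥0∞ :=
  ⨅ (h : ℝ → ℝ) (_ : ∀ᵐ x ∂μI, (f : ℝ → ℝ) x = h x), eVariationOn h (Set.Icc (0:ℝ) 1)

namespace BVAux

instance : Fact ((volume : Measure ℝ) (Icc (0:ℝ) 1) < ⊤) :=
  ⟨by rw [Real.volume_Icc]; exact ENNReal.ofReal_lt_top⟩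

instance : IsFiniteMeasure μI := by infer_instance

lemma muI_univ : μI Set.univ = 1 := by
  rw [Measure.restrict_apply_univ, Real.volume_Icc]; norm_num

lemma muI_univ_toReal : (μI Set.univ).toReal = 1 := by rw [muI_univ]; simp

lemma coeFn_finset_sum {ι : Type*} (s : Finset ι) (f : ι → MeasureTheory.Lp ℝ 1 μI) :
    ⇑(∑ i ∈ s, f i) =ᵐ[μI] fun x => ∑ i ∈ s, f i x := by
  classical
  induction s using Finset.induction_on with
  | empty => simp only [Finset.sum_empty]; exact MeasureTheory.Lp.coeFn_zero ℝ 1 μI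
  | insert a s hnot ih =>
    rw [Finset.sum_insert hnot]
    filter_upwards [MeasureTheory.Lp.coeFn_add (f a) (∑ i ∈ s, f i), ih] with x hx hx2
    simp only [Finset.sum_insert hnot, hx, Pi.add_apply, hx2]

lemma sum_evar (h₀ : ℝ → ℝ) {n : ℕ} (hn : 0 < n) :
    ∀ m : ℕ, m ≤ n →
    ∑ i ∈ Finset.range m, eVariationOn h₀ (Icc (0:ℝ) 1 ∩ Icc ((i:ℝ)/n) (((i:ℝ)+1)/n))
      = eVariationOn h₀ (Icc (0:ℝ) 1 ∩ Icc 0 ((m:ℝ)/n)) := by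
  intro m hm
  induction m with
  | zero =>
    simp only [Nat.cast_zero, zero_div, Set.Icc_self, Finset.range_zero, Finset.sum_empty]
    exact (eVariationOn.subsingleton h₀
      (Set.subsingleton_singleton.anti Set.inter_subset_right)).symm
  | succ m ih =>
    have hnR : (0:ℝ) < n := by exact_mod_cast hn
    have hm' : m ≤ n := Nat.le_of_succ_le hm
    have h1 : (0:ℝ) ≤ (m:ℝ)/n := by positivity
    have h2 : (m:ℝ)/n ≤ ((m:ℝ)+1)/n := by gcongr; linarith
    have hb : (m:ℝ)/n ∈ Icc (0:ℝ) 1 := by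
      refine ⟨h1, ?_⟩
      rw [div_le_one hnR]
      exact_mod_cast hm'
    rw [Finset.sum_range_succ, ih hm', eVariationOn.Icc_add_Icc h₀ h1 h2 hb]
    norm_num [Nat.cast_succ]

/-- The key compactness (Helly-type) lemma: a BV-bounded, L¹-bounded set is totally
bounded in L¹. -/
lemma totallyBounded_bv (c : ℝ) (hc : 0 ≤ c) :
    TotallyBounded {h : MeasureTheory.Lp ℝ 1 μI | ‖h‖ ≤ c ∧ var h ≤ ENNReal.ofReal c} := by
  rw [Metric.totallyBounded_iff]
  intro ε hε
  -- choose a fine grid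
  obtain ⟨n, hnbig⟩ := exists_nat_gt (max 1 ((c+1)/(ε/2)))
  have hnR : (0:ℝ) < n := lt_trans (lt_of_lt_of_le zero_lt_one (le_max_left _ _)) hnbig
  have hn0 : 0 < n := by exact_mod_cast hnR
  have hnε : (c+1)/n < ε/2 := by
    have h1 : (c+1)/(ε/2) < n := lt_of_le_of_lt (le_max_right _ _) hnbig
    rw [div_lt_iff₀ (half_pos hε)] at h1
    rw [div_lt_iff₀ hnR]
    linarith
  -- grid intervals and indicator functions
  set J : Fin n → Set ℝ := fun i => Ico ((i:ℝ)/n) (((i:ℝ)+1)/n) with hJ_def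
  have hJm : ∀ i : Fin n, MeasurableSet (J i) := fun i => measurableSet_Ico
  have hJfin : ∀ i : Fin n, μI (J i) ≠ ⊤ := fun i => measure_ne_top μI _
  have hJsub : ∀ i : Fin n, J i ⊆ Icc (0:ℝ) 1 := by
    intro i x hx
    obtain ⟨hx1, hx2⟩ := hx
    constructor
    · exact le_trans (by positivity) hx1
    · refine le_trans hx2.le ?_
      rw [div_le_one hnR]
      have : (i:ℕ) + 1 ≤ n := i.2
      exact_mod_cast this
  set ind : Fin n → MeasureTheory.Lp ℝ 1 μI :=
    fun i => indicatorConstLp 1 (hJm i) (hJfin i) (1:ℝ) with hind_def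
  set B : ℝ := 2*c + 2 with hB_def
  set Φ : (Fin n → ℝ) → MeasureTheory.Lp ℝ 1 μI :=
    fun v => ∑ i : Fin n, v i • ind i with hΦ_def
  have hΦc : Continuous Φ := by
    apply continuous_finset_sum
    intro i _
    exact (continuous_apply i).smul continuous_const
  have hcomp : IsCompact (Φ '' Metric.closedBall 0 B) :=
    (isCompact_closedBall _ _).image hΦc
  -- the key approximation estimate
  have happrox : ∀ h : MeasureTheory.Lp ℝ 1 μI, ‖h‖ ≤ c → var h ≤ ENNReal.ofReal c →
      ∃ s ∈ Φ '' Metric.closedBall 0 B, dist h s ≤ (c+1)/n := by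
    intro h hnorm hvar
    -- pick a good representative
    have hlt : var h < ENNReal.ofReal c + 1 :=
      lt_of_le_of_lt hvar (ENNReal.lt_add_right ENNReal.ofReal_ne_top one_ne_zero)
    rw [var, iInf_lt_iff] at hlt
    obtain ⟨h₀, hlt⟩ := hlt
    rw [iInf_lt_iff] at hlt
    obtain ⟨hae, hlt⟩ := hlt
    have hfin : ENNReal.ofReal c + 1 < ⊤ := by
      refine ENNReal.add_lt_top.mpr ⟨ENNReal.ofReal_lt_top, ENNReal.one_lt_top⟩
    have hVne : eVariationOn h₀ (Icc (0:ℝ) 1) ≠ ⊤ := (hlt.trans hfin).ne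
    have hVtoReal : (eVariationOn h₀ (Icc (0:ℝ) 1)).toReal ≤ c + 1 := by
      have hle : eVariationOn h₀ (Icc (0:ℝ) 1) ≤ ENNReal.ofReal (c+1) := by
        rw [ENNReal.ofReal_add hc zero_le_one, ENNReal.ofReal_one]
        exact hlt.le
      exact ENNReal.toReal_le_of_le_ofReal (by linarith) hle
    -- find a point where h₀ is small
    have hpt : ∃ y ∈ Icc (0:ℝ) 1, |h₀ y| ≤ c + 1 := by
      by_contra hcon
      push_neg at hcon
      have hae2 : ∀ᵐ x ∂μI, c + 1 ≤ ‖(h : ℝ → ℝ) x‖ := by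
        filter_upwards [hae, MeasureTheory.ae_restrict_mem measurableSet_Icc] with x hx hmem
        rw [Real.norm_eq_abs, hx]
        exact (hcon x hmem).le
      have hint2 : ∫ _x, (c+1) ∂μI ≤ ∫ x, ‖(h : ℝ → ℝ) x‖ ∂μI :=
        integral_mono_ae (integrable_const _) (MeasureTheory.L1.integrable_coeFn h).norm hae2
      rw [integral_const, measureReal_def, muI_univ_toReal, one_smul,
        ← MeasureTheory.L1.norm_eq_integral_norm] at hint2
      linarith
    obtain ⟨y, hy, hylt⟩ := hpt
    -- uniform bound on h₀ over [0,1]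
    have hbound : ∀ z ∈ Icc (0:ℝ) 1, |h₀ z| ≤ B := by
      intro z hz
      have hd : dist (h₀ z) (h₀ y) ≤ (eVariationOn h₀ (Icc (0:ℝ) 1)).toReal :=
        BoundedVariationOn.dist_le hVne hz hy
      rw [Real.dist_eq] at hd
      have htri : |h₀ z| - |h₀ y| ≤ |h₀ z - h₀ y| := abs_sub_abs_le_abs_sub _ _
      rw [hB_def]
      linarith
    -- grid values
    set v : Fin n → ℝ := fun i => h₀ ((i:ℝ)/n) with hv_def
    have hgrid : ∀ i : Fin n, (i:ℝ)/n ∈ Icc (0:ℝ) 1 := by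
      intro i
      constructor
      · positivity
      · rw [div_le_one hnR]
        exact_mod_cast i.2.le
    have hvball : v ∈ Metric.closedBall (0 : Fin n → ℝ) B := by
      rw [mem_closedBall_zero_iff]
      have hB0 : (0:ℝ) ≤ B := by rw [hB_def]; linarith
      rw [pi_norm_le_iff_of_nonneg hB0]
      intro i
      rw [Real.norm_eq_abs]
      exact hbound _ (hgrid i)
    refine ⟨Φ v, ⟨v, hvball, rfl⟩, ?_⟩
    -- local variations
    set Var : Fin n → ℝ≥0∞ :=
      fun i => eVariationOn h₀ (Icc (0:ℝ) 1 ∩ Icc ((i:ℝ)/n) (((i:ℝ)+1)/n)) with hVar_def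
    have hVarne : ∀ i : Fin n, Var i ≠ ⊤ :=
      fun i => ne_top_of_le_ne_top hVne (eVariationOn.mono h₀ inter_subset_left)
    set φ : ℝ → ℝ :=
      fun x => ∑ i : Fin n, (J i).indicator (fun _ => (Var i).toReal) x with hφ_def
    have hφint : Integrable φ μI :=
      integrable_finset_sum _ (fun i _ => (integrable_const _).indicator (hJm i))
    -- coeFn of Φ v
    have hΦcoe : ⇑(Φ v) =ᵐ[μI] fun x => ∑ i : Fin n, (J i).indicator (fun _ => v i) x := by
      refine (coeFn_finset_sum Finset.univ (fun i => v i • ind i)).trans ?_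
      have hptw : ∀ i : Fin n,
          ⇑(v i • ind i) =ᵐ[μI] fun x => (J i).indicator (fun _ => v i) x := by
        intro i
        refine (MeasureTheory.Lp.coeFn_smul _ _).trans ?_
        filter_upwards [MeasureTheory.indicatorConstLp_coeFn
          (p := 1) (μ := μI) (hs := hJm i) (hμs := hJfin i) (c := (1:ℝ))] with x hx
        rw [Pi.smul_apply, hx, smul_eq_mul]
        by_cases hmem : x ∈ J i
        · rw [Set.indicator_of_mem hmem, Set.indicator_of_mem hmem, mul_one]
        · rw [Set.indicator_of_notMem hmem, Set.indicator_of_notMem hmem, mul_zero]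
      filter_upwards [MeasureTheory.ae_all_iff.mpr hptw] with x hx
      exact Finset.sum_congr rfl (fun i _ => hx i)
    -- {1} is null
    have h1null : ∀ᵐ x ∂μI, x ≠ 1 := by
      have hnull : μI {(1:ℝ)} = 0 := by
        rw [Measure.restrict_apply (measurableSet_singleton _)]
        exact measure_mono_null Set.inter_subset_left Real.volume_singleton
      have hset : {x : ℝ | ¬ x ≠ 1} = {1} := by ext z; simp
      rw [MeasureTheory.ae_iff, hset]
      exact hnull
    -- pointwise bound
    have hptbd : ∀ᵐ x ∂μI, ‖(⇑(h - Φ v)) x‖ ≤ φ x := by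
      filter_upwards [MeasureTheory.Lp.coeFn_sub h (Φ v), hae, hΦcoe,
        MeasureTheory.ae_restrict_mem measurableSet_Icc, h1null] with x hx1 hx2 hx3 hxm hx1ne
      rw [hx1, Pi.sub_apply, hx2, hx3]
      obtain ⟨hx0, hxle⟩ := hxm
      have hxlt : x < 1 := lt_of_le_of_ne hxle hx1ne
      have hfl : ⌊x * n⌋₊ < n := by
        rw [Nat.floor_lt (by positivity)]
        calc x * n < 1 * n := by exact mul_lt_mul_of_pos_right hxlt hnR
          _ = n := one_mul _
      set i₀ : Fin n := ⟨⌊x * n⌋₊, hfl⟩ with hi₀_def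
      have hItoR : ((i₀ : ℕ) : ℝ) = (⌊x * n⌋₊ : ℝ) := by rw [hi₀_def]
      have hmem : x ∈ J i₀ := by
        constructor
        · rw [div_le_iff₀ hnR, hItoR]
          exact Nat.floor_le (by positivity)
        · rw [lt_div_iff₀ hnR, hItoR]
          exact Nat.lt_floor_add_one (x * n)
      have hnotmem : ∀ j : Fin n, j ≠ i₀ → x ∉ J j := by
        intro j hj hxj
        apply hj
        obtain ⟨hj1, hj2⟩ := hxj
        rw [div_le_iff₀ hnR] at hj1
        rw [lt_div_iff₀ hnR] at hj2
        have heq : ⌊x * n⌋₊ = (j : ℕ) := by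
          rw [Nat.floor_eq_iff (by positivity)]
          exact ⟨hj1, by exact_mod_cast hj2⟩
        exact Fin.ext (by simp [hi₀_def, ← heq])
      have hsum1 : ∑ i : Fin n, (J i).indicator (fun _ => v i) x = v i₀ := by
        rw [Finset.sum_eq_single i₀]
        · rw [Set.indicator_of_mem hmem]
        · intro j _ hj
          rw [Set.indicator_of_notMem (hnotmem j hj)]
        · intro habs
          exact absurd (Finset.mem_univ i₀) habs
      have hsum2 : φ x = (Var i₀).toReal := by
        simp only [hφ_def]
        rw [Finset.sum_eq_single i₀]
        · rw [Set.indicator_of_mem hmem]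
        · intro j _ hj
          rw [Set.indicator_of_notMem (hnotmem j hj)]
        · intro habs
          exact absurd (Finset.mem_univ i₀) habs
      rw [hsum1, hsum2]
      have hxmem : x ∈ Icc (0:ℝ) 1 ∩ Icc ((i₀:ℝ)/n) (((i₀:ℝ)+1)/n) :=
        ⟨⟨hx0, hxle⟩, hmem.1, hmem.2.le⟩
      have hgmem : (i₀:ℝ)/n ∈ Icc (0:ℝ) 1 ∩ Icc ((i₀:ℝ)/n) (((i₀:ℝ)+1)/n) := by
        refine ⟨hgrid i₀, le_refl _, ?_⟩
        gcongr
        linarith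
      have hdle := BoundedVariationOn.dist_le (hVarne i₀) hxmem hgmem
      rw [Real.dist_eq] at hdle
      rw [Real.norm_eq_abs]
      exact hdle
    -- integral of the majorant
    have hμJ : ∀ i : Fin n, (μI (J i)).toReal = 1/n := by
      intro i
      rw [Measure.restrict_apply (hJm i), Set.inter_eq_left.mpr (hJsub i), hJ_def,
        Real.volume_Ico]
      have h2 : (((i:ℕ):ℝ)+1)/(n:ℝ) - ((i:ℕ):ℝ)/n = 1/n := by ring
      rw [h2, ENNReal.toReal_ofReal (by positivity)]
    have hφval : ∫ x, φ x ∂μI ≤ (c+1)/n := by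
      rw [hφ_def, integral_finset_sum _ (fun i _ => (integrable_const _).indicator (hJm i))]
      have hterm : ∀ i : Fin n,
          ∫ x, (J i).indicator (fun _ => (Var i).toReal) x ∂μI = (Var i).toReal * (1/n) := by
        intro i
        rw [integral_indicator_const _ (hJm i), measureReal_def, hμJ i, smul_eq_mul]
        ring
      rw [Finset.sum_congr rfl (fun i _ => hterm i), ← Finset.sum_mul]
      have hsumVar : ∑ i : Fin n, (Var i).toReal ≤ c + 1 := by
        have h1 : ∑ i : Fin n, (Var i).toReal = (∑ i : Fin n, Var i).toReal :=
          (ENNReal.toReal_sum (fun i _ => hVarne i)).symm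
        have h2 : ∑ i : Fin n, Var i = eVariationOn h₀ (Icc (0:ℝ) 1) := by
          rw [hVar_def, Fin.sum_univ_eq_sum_range
            (fun i => eVariationOn h₀ (Icc (0:ℝ) 1 ∩ Icc ((i:ℝ)/n) (((i:ℝ)+1)/n))),
            sum_evar h₀ hn0 n le_rfl]
          have hnn : ((n:ℕ):ℝ)/(n:ℝ) = 1 := div_self hnR.ne'
          rw [hnn, Set.inter_self]
        rw [h1, h2]
        exact hVtoReal
      calc (∑ i : Fin n, (Var i).toReal) * (1/(n:ℝ)) ≤ (c+1) * (1/n) :=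
            mul_le_mul_of_nonneg_right hsumVar (by positivity)
        _ = (c+1)/n := by ring
    -- conclude
    rw [dist_eq_norm]
    rw [MeasureTheory.L1.norm_eq_integral_norm (h - Φ v)]
    calc ∫ x, ‖(⇑(h - Φ v)) x‖ ∂μI ≤ ∫ x, φ x ∂μI :=
          integral_mono_ae (MeasureTheory.L1.integrable_coeFn _).norm hφint hptbd
      _ ≤ (c+1)/n := hφval
  -- finish: cover the compact approximating set by finitely many balls
  obtain ⟨u, hufin, hucov⟩ :=
    Metric.totallyBounded_iff.mp hcomp.totallyBounded (ε/2) (half_pos hε)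
  refine ⟨u, hufin, ?_⟩
  intro h hh
  obtain ⟨s, hsmem, hds⟩ := happrox h hh.1 hh.2
  obtain ⟨z, hz, hdz⟩ : ∃ z ∈ u, s ∈ Metric.ball z (ε/2) := by
    have := hucov hsmem
    simpa using this
  refine Set.mem_iUnion₂.mpr ⟨z, hz, ?_⟩
  rw [Metric.mem_ball]
  calc dist h z ≤ dist h s + dist s z := dist_triangle _ _ _
    _ < (c+1)/n + ε/2 := by
        rw [Metric.mem_ball] at hdz
        exact add_lt_add_of_le_of_lt hds hdz
    _ ≤ ε/2 + ε/2 := by linarith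
    _ = ε := by ring

end BVAux

open BVAux

/-- mixing together with regularization `L¹ → BV` implies exponential
contraction of the zero-average space in `L¹`. -/
theorem mixing_and_regularization_imply_exponential_contraction
    (L : MeasureTheory.Lp ℝ 1 μI →L[ℝ] MeasureTheory.Lp ℝ 1 μI)
    -- Markov: positivity
    (hpos : ∀ f : MeasureTheory.Lp ℝ 1 μI, (∀ᵐ x ∂μI, 0 ≤ (f : ℝ → ℝ) x) →
      ∀ᵐ x ∂μI, 0 ≤ (L f : ℝ → ℝ) x)
    -- Markov: preservation of integrals
    (hmass : ∀ f : MeasureTheory.Lp ℝ 1 μI,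
      (∫ x, (L f : ℝ → ℝ) x ∂μI) = ∫ x, (f : ℝ → ℝ) x ∂μI)
    -- continuity (regularization) L¹ → BV
    (hreg : ∃ K : ℝ, ∀ f : MeasureTheory.Lp ℝ 1 μI,
      var (L f) ≠ ⊤ ∧ ‖L f‖ + (var (L f)).toReal ≤ K * ‖f‖)
    -- mixing: for zero-average BV elements the iterates tend to 0 in L¹
    (hmix : ∀ g : MeasureTheory.Lp ℝ 1 μI, var g ≠ ⊤ →
      (∫ x, (g : ℝ → ℝ) x ∂μI) = 0 →
      Filter.Tendsto (fun n : ℕ => ‖(L ^ n) g‖) Filter.atTop (nhds 0)) :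
    ∃ C lam : ℝ, 0 ≤ C ∧ lam < 0 ∧
      ∀ g : MeasureTheory.Lp ℝ 1 μI, (∫ x, (g : ℝ → ℝ) x ∂μI) = 0 →
        ∀ n : ℕ, ‖(L ^ n) g‖ ≤ C * Real.exp (lam * n) * ‖g‖ := by
  classical
  obtain ⟨K, hK⟩ := hreg
  set c : ℝ := max K 1 with hc_def
  have hc1 : (1:ℝ) ≤ c := le_max_right _ _
  have hc0 : (0:ℝ) ≤ c := le_trans zero_le_one hc1
  -- L is an L¹ contraction
  have hcontr : ∀ f : MeasureTheory.Lp ℝ 1 μI, ‖L f‖ ≤ ‖f‖ := by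
    intro f
    have h1 : ∀ᵐ x ∂μI, 0 ≤ (L (|f| - f) : ℝ → ℝ) x := by
      refine hpos _ ?_
      filter_upwards [MeasureTheory.Lp.coeFn_sub |f| f, MeasureTheory.Lp.coeFn_abs f] with
        x hx hx2
      rw [hx]
      simp only [Pi.sub_apply, hx2]
      have := le_abs_self (f x); linarith [abs_nonneg (f x), le_abs_self ((f : ℝ → ℝ) x)]
    have h2 : ∀ᵐ x ∂μI, 0 ≤ (L (|f| + f) : ℝ → ℝ) x := by
      refine hpos _ ?_
      filter_upwards [MeasureTheory.Lp.coeFn_add |f| f, MeasureTheory.Lp.coeFn_abs f] with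
        x hx hx2
      rw [hx]
      simp only [Pi.add_apply, hx2]
      linarith [neg_abs_le ((f : ℝ → ℝ) x)]
    rw [map_sub] at h1
    rw [map_add] at h2
    have hb : ∀ᵐ x ∂μI, |(L f : ℝ → ℝ) x| ≤ (L |f| : ℝ → ℝ) x := by
      filter_upwards [h1, h2, MeasureTheory.Lp.coeFn_sub (L |f|) (L f),
        MeasureTheory.Lp.coeFn_add (L |f|) (L f)] with x a b hsub hadd
      rw [hsub] at a
      rw [hadd] at b
      simp only [Pi.sub_apply, Pi.add_apply] at a b
      rw [abs_le]; constructor <;> linarith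
    have e1 : ‖L f‖ = ∫ x, ‖(L f : ℝ → ℝ) x‖ ∂μI := MeasureTheory.L1.norm_eq_integral_norm _
    have e2 : ‖f‖ = ∫ x, ‖(f : ℝ → ℝ) x‖ ∂μI := MeasureTheory.L1.norm_eq_integral_norm _
    rw [e1, e2]
    have step1 : ∫ x, ‖(L f : ℝ → ℝ) x‖ ∂μI ≤ ∫ x, (L |f| : ℝ → ℝ) x ∂μI := by
      refine integral_mono_ae (MeasureTheory.L1.integrable_coeFn _).norm
        (MeasureTheory.L1.integrable_coeFn _) ?_
      filter_upwards [hb] with x hx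
      simpa [Real.norm_eq_abs] using hx
    have step2 : ∫ x, (L |f| : ℝ → ℝ) x ∂μI = ∫ x, ‖(f : ℝ → ℝ) x‖ ∂μI := by
      rw [hmass]
      refine integral_congr_ae ?_
      filter_upwards [MeasureTheory.Lp.coeFn_abs f] with x hx
      rw [hx, Real.norm_eq_abs]
    linarith
  have hcontrn : ∀ (n : ℕ) (f : MeasureTheory.Lp ℝ 1 μI), ‖(L ^ n) f‖ ≤ ‖f‖ := by
    intro n
    induction n with
    | zero => intro f; simp
    | succ n ih =>
      intro f
      have : (L ^ (n+1)) f = (L ^ n) (L f) := by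
        rw [pow_succ]; rfl
      rw [this]
      exact le_trans (ih (L f)) (hcontr f)
  have hint : ∀ (n : ℕ) (g : MeasureTheory.Lp ℝ 1 μI),
      (∫ x, ((L ^ n) g : ℝ → ℝ) x ∂μI) = ∫ x, (g : ℝ → ℝ) x ∂μI := by
    intro n
    induction n with
    | zero => intro g; simp
    | succ n ih =>
      intro g
      have : (L ^ (n+1)) g = (L ^ n) (L g) := by rw [pow_succ]; rfl
      rw [this, ih (L g), hmass]
  -- the set T
  set T : Set (MeasureTheory.Lp ℝ 1 μI) :=
    {h | (‖h‖ ≤ c ∧ var h ≤ ENNReal.ofReal c) ∧ (∫ x, (h : ℝ → ℝ) x ∂μI) = 0} with hT_def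
  have hTtb : TotallyBounded T :=
    (totallyBounded_bv c hc0).subset (fun h hh => hh.1)
  have hLmem : ∀ g : MeasureTheory.Lp ℝ 1 μI, (∫ x, (g : ℝ → ℝ) x ∂μI) = 0 → ‖g‖ ≤ 1 →
      L g ∈ T := by
    intro g hg0 hg1
    obtain ⟨hvt, hbd⟩ := hK g
    have hvnn : 0 ≤ (var (L g)).toReal := ENNReal.toReal_nonneg
    have hnn : 0 ≤ ‖L g‖ := norm_nonneg _
    have hKc : K * ‖g‖ ≤ c := by
      calc K * ‖g‖ ≤ c * ‖g‖ := by
            apply mul_le_mul_of_nonneg_right (le_max_left _ _) (norm_nonneg _)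
        _ ≤ c * 1 := by apply mul_le_mul_of_nonneg_left hg1 hc0
        _ = c := mul_one c
    refine ⟨⟨by linarith, ?_⟩, by rw [hmass]; exact hg0⟩
    have : (var (L g)).toReal ≤ c := by linarith
    calc var (L g) = ENNReal.ofReal ((var (L g)).toReal) := (ENNReal.ofReal_toReal hvt).symm
      _ ≤ ENNReal.ofReal c := ENNReal.ofReal_le_ofReal this
  -- uniform mixing on T
  have key : ∃ N : ℕ, ∀ h ∈ T, ‖(L ^ N) h‖ ≤ 2⁻¹ := by
    have hd : {p : (MeasureTheory.Lp ℝ 1 μI) × (MeasureTheory.Lp ℝ 1 μI) |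
        dist p.1 p.2 < 4⁻¹} ∈ uniformity (MeasureTheory.Lp ℝ 1 μI) :=
      Metric.dist_mem_uniformity (by norm_num)
    obtain ⟨t, htT, htfin, hcov⟩ := totallyBounded_iff_subset.mp hTtb _ hd
    have hchoice : ∀ y ∈ htfin.toFinset, ∃ N : ℕ, ∀ n ≥ N, ‖(L ^ n) y‖ ≤ 4⁻¹ := by
      intro y hy
      rw [Set.Finite.mem_toFinset] at hy
      have hyT := htT hy
      have hten := hmix y (ne_top_of_le_ne_top ENNReal.ofReal_ne_top hyT.1.2) hyT.2
      have := (Metric.tendsto_atTop.mp hten) 4⁻¹ (by norm_num)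
      obtain ⟨N, hN⟩ := this
      exact ⟨N, fun n hn => by
        have := hN n hn
        rw [Real.dist_eq, sub_zero, abs_of_nonneg (norm_nonneg _)] at this
        exact this.le⟩
    choose! Nf hNf using hchoice
    set N0 : ℕ := htfin.toFinset.sup Nf with hN0
    refine ⟨N0, fun h hh => ?_⟩
    obtain ⟨y, hy, hdy⟩ : ∃ y ∈ t, dist h y < 4⁻¹ := by
      have := hcov hh
      simpa using this
    have hyF : y ∈ htfin.toFinset := htfin.mem_toFinset.mpr hy
    have h1 : ‖(L ^ N0) y‖ ≤ 4⁻¹ := hNf y hyF N0 (Finset.le_sup hyF)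
    have h2 : ‖(L ^ N0) (h - y)‖ ≤ ‖h - y‖ := hcontrn N0 _
    have h3 : ‖h - y‖ ≤ 4⁻¹ := by
      rw [← dist_eq_norm]; exact le_of_lt hdy
    have h4 : (L ^ N0) h = (L ^ N0) y + (L ^ N0) (h - y) := by
      rw [← map_add]; congr 1; abel
    calc ‖(L ^ N0) h‖ = ‖(L ^ N0) y + (L ^ N0) (h - y)‖ := by rw [h4]
      _ ≤ ‖(L ^ N0) y‖ + ‖(L ^ N0) (h - y)‖ := norm_add_le _ _
      _ ≤ 4⁻¹ + 4⁻¹ := by linarith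
      _ = 2⁻¹ := by norm_num
  obtain ⟨N, hN⟩ := key
  set m : ℕ := N + 1 with hm_def
  have hm0 : 0 < m := Nat.succ_pos _
  -- half-contraction after m steps
  have hhalf : ∀ g : MeasureTheory.Lp ℝ 1 μI, (∫ x, (g : ℝ → ℝ) x ∂μI) = 0 →
      ‖(L ^ m) g‖ ≤ 2⁻¹ * ‖g‖ := by
    intro g hg0
    rcases eq_or_ne g 0 with rfl | hg
    · simp
    · have hgn : (0:ℝ) < ‖g‖ := norm_pos_iff.mpr hg
      set u : MeasureTheory.Lp ℝ 1 μI := ‖g‖⁻¹ • g with hu_def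
      have hu1 : ‖u‖ ≤ 1 := by
        rw [hu_def, norm_smul, norm_inv, norm_norm, inv_mul_cancel₀ (ne_of_gt hgn)]
      have hu0 : (∫ x, (u : ℝ → ℝ) x ∂μI) = 0 := by
        rw [hu_def]
        rw [integral_congr_ae (MeasureTheory.Lp.coeFn_smul _ _)]
        simp only [Pi.smul_apply, smul_eq_mul]
        rw [MeasureTheory.integral_const_mul, hg0, mul_zero]
      have hmem : L u ∈ T := hLmem u hu0 hu1
      have hval : ‖(L ^ m) u‖ ≤ 2⁻¹ := by
        have : (L ^ m) u = (L ^ N) (L u) := by rw [hm_def, pow_succ]; rfl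
        rw [this]
        exact hN (L u) hmem
      have hsm : (L ^ m) u = ‖g‖⁻¹ • (L ^ m) g := by rw [hu_def, _root_.map_smul]
      rw [hsm, norm_smul, norm_inv, norm_norm] at hval
      rw [inv_mul_le_iff₀ hgn] at hval
      linarith [hval]
  -- iterate
  have hiter : ∀ k : ℕ, ∀ g : MeasureTheory.Lp ℝ 1 μI, (∫ x, (g : ℝ → ℝ) x ∂μI) = 0 →
      ‖(L ^ (m * k)) g‖ ≤ 2⁻¹ ^ k * ‖g‖ := by
    intro k
    induction k with
    | zero => intro g _; simp
    | succ k ih =>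
      intro g hg0
      have e : (L ^ (m * (k+1))) g = (L ^ (m * k)) ((L ^ m) g) := by
        rw [Nat.mul_succ, pow_add]; rfl
      have hzero : (∫ x, ((L ^ m) g : ℝ → ℝ) x ∂μI) = 0 := by rw [hint]; exact hg0
      calc ‖(L ^ (m * (k+1))) g‖ = ‖(L ^ (m * k)) ((L ^ m) g)‖ := by rw [e]
        _ ≤ 2⁻¹ ^ k * ‖(L ^ m) g‖ := ih _ hzero
        _ ≤ 2⁻¹ ^ k * (2⁻¹ * ‖g‖) := by
            apply mul_le_mul_of_nonneg_left (hhalf g hg0) (by positivity)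
        _ = 2⁻¹ ^ (k+1) * ‖g‖ := by ring
  -- assemble
  have hmR : (0:ℝ) < m := by exact_mod_cast hm0
  refine ⟨2, Real.log 2⁻¹ / m, by norm_num, ?_, ?_⟩
  · apply div_neg_of_neg_of_pos _ hmR
    rw [Real.log_inv]
    have := Real.log_pos (by norm_num : (1:ℝ) < 2)
    linarith
  · intro g hg0 n
    set k := n / m with hk
    have h1 : ‖(L ^ n) g‖ ≤ 2⁻¹ ^ k * ‖g‖ := by
      have hsum : m * k + n % m = n := Nat.div_add_mod n m
      have e : (L ^ n) g = (L ^ (m * k)) ((L ^ (n % m)) g) := by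
        conv_lhs => rw [← hsum]
        rw [pow_add]; rfl
      rw [e]
      calc ‖(L ^ (m * k)) ((L ^ (n % m)) g)‖ ≤ 2⁻¹ ^ k * ‖(L ^ (n % m)) g‖ :=
            hiter k _ (by rw [hint]; exact hg0)
        _ ≤ 2⁻¹ ^ k * ‖g‖ := by
            apply mul_le_mul_of_nonneg_left (hcontrn _ g) (by positivity)
    have h2 : (2⁻¹:ℝ) ^ k ≤ 2 * Real.exp (Real.log 2⁻¹ / ↑m * ↑n) := by
      have hltn : n < m * (k + 1) := by
        rw [Nat.mul_succ]
        have h6 : n % m < m := Nat.mod_lt n hm0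
        have h5 : m * k + n % m = n := Nat.div_add_mod n m
        omega
      have hle : (n:ℝ) / m ≤ (k:ℝ) + 1 := by
        rw [div_le_iff₀ hmR]
        have : (n:ℝ) < (m:ℝ) * ((k:ℝ) + 1) := by exact_mod_cast hltn
        linarith
      have hexp : Real.exp (Real.log 2⁻¹ / ↑m * ↑n) = (2⁻¹:ℝ) ^ ((n:ℝ)/m) := by
        rw [Real.rpow_def_of_pos (by norm_num : (0:ℝ) < 2⁻¹)]
        congr 1; ring
      rw [hexp]
      have h3 : (2⁻¹:ℝ) ^ ((k:ℝ)+1) ≤ (2⁻¹:ℝ) ^ ((n:ℝ)/m) :=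
        Real.rpow_le_rpow_of_exponent_ge (by norm_num) (by norm_num) hle
      have h4 : (2⁻¹:ℝ) ^ ((k:ℝ)+1) = 2⁻¹ * 2⁻¹ ^ (k:ℕ) := by
        rw [Real.rpow_add (by norm_num), Real.rpow_one, Real.rpow_natCast]; ring
      rw [h4] at h3
      linarith
    calc ‖(L ^ n) g‖ ≤ 2⁻¹ ^ k * ‖g‖ := h1
      _ ≤ (2 * Real.exp (Real.log 2⁻¹ / ↑m * ↑n)) * ‖g‖ :=
          mul_le_mul_of_nonneg_right h2 (norm_nonneg _)
      _ = 2 * Real.exp (Real.log 2⁻¹ / ↑m * ↑n) * ‖g‖ := by ring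
end
end

section
/- Let L₀ be a Markov operator on measures on [0,1] such that: (i) for each zero-average g ∈ BV, ‖L₀ⁿ g‖₁ → 0; (ii) L₀ : L¹ → BV is continuous. Then L₀ has a unique fixed probability measure f₀ ∈ BV. -/
open MeasureTheory Set Filter
open scoped ENNReal NNReal

noncomputable section

/-- The unit interval `[0,1]`. -/
abbrev II : Set ℝ := Set.Icc (0:ℝ) 1

/-- Lebesgue measure restricted to `[0,1]`. -/
abbrev volI : MeasureTheory.Measure ℝ := MeasureTheory.volume.restrict II

/-- The reflecting boundary map `π(x) = min_{i ∈ ℤ} |x - 2i|`. -/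
def reflMap (x : ℝ) : ℝ := ⨅ i : ℤ, |x - 2 * (i : ℝ)|

/-- The Wasserstein–Kantorovich norm `‖μ‖_W = sup {∫ g dμ : ‖g‖_∞ ≤ 1, Lip(g) ≤ 1}`. -/
def Wnorm (m : MeasureTheory.SignedMeasure ℝ) : ℝ :=
  ⨆ g : {g : ℝ → ℝ // (∀ x, |g x| ≤ 1) ∧ LipschitzWith 1 g},
    (∫ x, g.1 x ∂m.toJordanDecomposition.posPart -
     ∫ x, g.1 x ∂m.toJordanDecomposition.negPart)

/-- The total variation (`L¹`) norm of a signed measure. -/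
def tvNorm (m : MeasureTheory.SignedMeasure ℝ) : ℝ :=
  (m.totalVariation Set.univ).toReal

/-- The bounded variation norm `‖g‖_BV = ‖g‖₁ + Var_{[0,1]}(g)` of a function on `[0,1]`. -/
def bvNorm (g : ℝ → ℝ) : ℝ :=
  (∫ x in II, |g x|) + (eVariationOn g II).toReal

/-- `m` is the absolutely continuous measure with density `h`, supported in `[0,1]`. -/
def IsL1Density (m : MeasureTheory.SignedMeasure ℝ) (h : ℝ → ℝ) : Prop :=
  MeasureTheory.Integrable h MeasureTheory.volume ∧ (∀ x, x ∉ II → h x = 0) ∧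
    m = MeasureTheory.volume.withDensityᵥ h

/-- `m` has a bounded variation density `h` on `[0,1]`. -/
def IsBVDensity (m : MeasureTheory.SignedMeasure ℝ) (h : ℝ → ℝ) : Prop :=
  IsL1Density m h ∧ eVariationOn h II ≠ ⊤

/-- The signed measure with (zero-extended) density `f` w.r.t. Lebesgue measure. -/
def densSM (f : ℝ → ℝ) : MeasureTheory.SignedMeasure ℝ :=
  MeasureTheory.volume.withDensityᵥ f

/-- Convolution of two (positive) measures on `ℝ`. -/
def posConv (a b : MeasureTheory.Measure ℝ) : MeasureTheory.Measure ℝ :=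
  (a.prod b).map (fun p => p.1 + p.2)

instance (a b : MeasureTheory.Measure ℝ) [MeasureTheory.IsFiniteMeasure a]
    [MeasureTheory.IsFiniteMeasure b] : MeasureTheory.IsFiniteMeasure (posConv a b) := by
  unfold posConv; infer_instance

/-- Convolution of two finite signed measures, via Jordan decomposition. -/
def mConv (a b : MeasureTheory.SignedMeasure ℝ) : MeasureTheory.SignedMeasure ℝ :=
  (posConv a.toJordanDecomposition.posPart b.toJordanDecomposition.posPart +
    posConv a.toJordanDecomposition.negPart b.toJordanDecomposition.negPart).toSignedMeasure -
  (posConv a.toJordanDecomposition.posPart b.toJordanDecomposition.negPart +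
    posConv a.toJordanDecomposition.negPart b.toJordanDecomposition.posPart).toSignedMeasure

/-- The reflecting-boundary convolution `a ∗̂ b = π_*(a ∗ b)`. -/
def reflConvM (a b : MeasureTheory.SignedMeasure ℝ) : MeasureTheory.SignedMeasure ℝ :=
  (mConv a b).map reflMap

/-- The annealed transfer operator of the system with additive noise:
`L_{ρ,T} m = ρ ∗̂ (L_T m)` where `L_T` is the pushforward by `T`. -/
def annealedM (ρ : ℝ → ℝ) (T : ℝ → ℝ) (m : MeasureTheory.SignedMeasure ℝ) :
    MeasureTheory.SignedMeasure ℝ :=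
  reflConvM (densSM ρ) (m.map T)

/-- `T` is a nonsingular Borel self-map of `[0,1]`. -/
def Nonsingular (T : ℝ → ℝ) : Prop :=
  Measurable T ∧ Set.MapsTo T II II ∧
    ∀ A : Set ℝ, MeasurableSet A → MeasureTheory.volume A = 0 → volI (T ⁻¹' A) = 0

/-- A Markov operator: positive and total-mass preserving. -/
def IsMarkov (L : MeasureTheory.SignedMeasure ℝ → MeasureTheory.SignedMeasure ℝ) : Prop :=
  (∀ m : MeasureTheory.SignedMeasure ℝ, (∀ A : Set ℝ, 0 ≤ m A) → ∀ A : Set ℝ, 0 ≤ L m A) ∧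
  (∀ m : MeasureTheory.SignedMeasure ℝ, L m Set.univ = m Set.univ)

/-- A BV noise kernel which is a probability density on `[0,1]`. -/
def IsBVKernel (ρ : ℝ → ℝ) : Prop :=
  MeasureTheory.Integrable ρ MeasureTheory.volume ∧ (∀ x, x ∉ II → ρ x = 0) ∧
    (∀ x, 0 ≤ ρ x) ∧ (∫ x, ρ x) = 1 ∧ eVariationOn ρ II ≠ ⊤


namespace AuxBV

lemma totalVariation_univ (s : SignedMeasure ℝ) :
    s.totalVariation Set.univ = s.toJordanDecomposition.posPart Set.univ
      + s.toJordanDecomposition.negPart Set.univ := rfl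

lemma tvNorm_nonneg (s : SignedMeasure ℝ) : 0 ≤ tvNorm s := ENNReal.toReal_nonneg

lemma sm_apply (s : SignedMeasure ℝ) {B : Set ℝ} (hB : MeasurableSet B) :
    s B = (s.toJordanDecomposition.posPart B).toReal
      - (s.toJordanDecomposition.negPart B).toReal := by
  conv_lhs => rw [← s.toSignedMeasure_toJordanDecomposition]
  rw [MeasureTheory.JordanDecomposition.toSignedMeasure,
    MeasureTheory.Measure.toSignedMeasure_sub_apply hB]
  rfl

lemma tvNorm_eq_toReal_add (s : SignedMeasure ℝ) :
    tvNorm s = (s.toJordanDecomposition.posPart Set.univ).toReal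
      + (s.toJordanDecomposition.negPart Set.univ).toReal := by
  rw [tvNorm, totalVariation_univ, ENNReal.toReal_add (measure_ne_top _ _) (measure_ne_top _ _)]

lemma tv_ge (s : SignedMeasure ℝ) {B : Set ℝ} (hB : MeasurableSet B) :
    s B - s Bᶜ ≤ tvNorm s := by
  rw [sm_apply s hB, sm_apply s hB.compl, tvNorm_eq_toReal_add]
  have h1 : (s.toJordanDecomposition.posPart B).toReal
      ≤ (s.toJordanDecomposition.posPart Set.univ).toReal :=
    ENNReal.toReal_mono (measure_ne_top _ _) (measure_mono (subset_univ _))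
  have h2 : (s.toJordanDecomposition.negPart Bᶜ).toReal
      ≤ (s.toJordanDecomposition.negPart Set.univ).toReal :=
    ENNReal.toReal_mono (measure_ne_top _ _) (measure_mono (subset_univ _))
  have h3 : (0:ℝ) ≤ (s.toJordanDecomposition.negPart B).toReal := ENNReal.toReal_nonneg
  have h4 : (0:ℝ) ≤ (s.toJordanDecomposition.posPart Bᶜ).toReal := ENNReal.toReal_nonneg
  linarith

lemma tv_exists (s : SignedMeasure ℝ) :
    ∃ B : Set ℝ, MeasurableSet B ∧ tvNorm s = s B - s Bᶜ := by
  obtain ⟨S, hS, -, -, hpos, hneg⟩ := s.toJordanDecomposition.exists_compl_positive_negative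
  refine ⟨Sᶜ, hS.compl, ?_⟩
  rw [sm_apply s hS.compl, sm_apply s hS.compl.compl, compl_compl, tvNorm_eq_toReal_add]
  have hppu : s.toJordanDecomposition.posPart Set.univ = s.toJordanDecomposition.posPart Sᶜ := by
    rw [← measure_add_measure_compl hS.compl, compl_compl, hpos, add_zero]
  have hnpu : s.toJordanDecomposition.negPart Set.univ = s.toJordanDecomposition.negPart S := by
    rw [← measure_add_measure_compl hS, hneg, add_zero]
  rw [hppu, hnpu, hneg, hpos]
  simp

lemma tvNorm_add_le (a b : SignedMeasure ℝ) : tvNorm (a + b) ≤ tvNorm a + tvNorm b := by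
  obtain ⟨B, hB, hEq⟩ := tv_exists (a + b)
  rw [hEq]
  have : (a + b) B - (a + b) Bᶜ = (a B - a Bᶜ) + (b B - b Bᶜ) := by
    rw [MeasureTheory.VectorMeasure.add_apply, MeasureTheory.VectorMeasure.add_apply]; ring
  rw [this]
  exact add_le_add (tv_ge a hB) (tv_ge b hB)

lemma tvNorm_neg (a : SignedMeasure ℝ) : tvNorm (-a) = tvNorm a := by
  rw [tvNorm, tvNorm, MeasureTheory.SignedMeasure.totalVariation_neg]

lemma tvNorm_zero : tvNorm 0 = 0 := by
  rw [tvNorm, MeasureTheory.SignedMeasure.totalVariation_zero]; simp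

lemma eq_of_tvNorm_zero {s : SignedMeasure ℝ} (h : tvNorm s = 0) : s = 0 := by
  have huniv : s.totalVariation Set.univ = 0 := by
    have := ENNReal.toReal_eq_zero_iff (s.totalVariation Set.univ) |>.mp h
    rcases this with h0 | htop
    · exact h0
    · exfalso
      rw [totalVariation_univ] at htop
      exact (ENNReal.add_ne_top.mpr ⟨measure_ne_top _ _, measure_ne_top _ _⟩) htop
  ext A hA
  rw [MeasureTheory.VectorMeasure.zero_apply]
  exact s.null_of_totalVariation_zero (le_antisymm (huniv ▸ measure_mono (subset_univ _)) zero_le)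

lemma tvNorm_pos_eq (s : SignedMeasure ℝ) (hpos : ∀ A : Set ℝ, 0 ≤ s A) :
    tvNorm s = s Set.univ := by
  apply le_antisymm
  · obtain ⟨B, hB, hEq⟩ := tv_exists s
    rw [hEq]
    have : s Set.univ = s B + s Bᶜ := by
      rw [← MeasureTheory.VectorMeasure.of_union (disjoint_compl_right) hB hB.compl,
        union_compl_self]
    nlinarith [hpos B, hpos Bᶜ]
  · have := tv_ge s MeasurableSet.univ
    have he : s (Set.univ : Set ℝ)ᶜ = 0 := by
      rw [compl_univ]; exact s.empty
    linarith

lemma tvNorm_sub_le (a b : SignedMeasure ℝ) : tvNorm (a - b) ≤ tvNorm a + tvNorm b := by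
  rw [sub_eq_add_neg]
  calc tvNorm (a + -b) ≤ tvNorm a + tvNorm (-b) := tvNorm_add_le _ _
  _ = tvNorm a + tvNorm b := by rw [tvNorm_neg]

lemma toSM_nonneg (μ : Measure ℝ) [IsFiniteMeasure μ] (A : Set ℝ) : 0 ≤ μ.toSignedMeasure A := by
  by_cases hA : MeasurableSet A
  · rw [Measure.toSignedMeasure_apply_measurable hA]; exact ENNReal.toReal_nonneg
  · rw [MeasureTheory.VectorMeasure.not_measurable _ hA]

lemma tvNorm_toSM (μ : Measure ℝ) [IsFiniteMeasure μ] :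
    tvNorm μ.toSignedMeasure = μ.toSignedMeasure Set.univ := by
  apply tvNorm_pos_eq; exact toSM_nonneg μ

lemma markov_contraction (L₀ : MeasureTheory.SignedMeasure ℝ →ₗ[ℝ] MeasureTheory.SignedMeasure ℝ)
    (hM : IsMarkov ⇑L₀) (m : SignedMeasure ℝ) : tvNorm (L₀ m) ≤ tvNorm m := by
  set p := m.toJordanDecomposition.posPart.toSignedMeasure with hp
  set q := m.toJordanDecomposition.negPart.toSignedMeasure with hq
  have hm : m = p - q := (m.toSignedMeasure_toJordanDecomposition).symm
  have hppos : ∀ A, 0 ≤ p A := toSM_nonneg _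
  have hqpos : ∀ A, 0 ≤ q A := toSM_nonneg _
  have hLp : ∀ A, 0 ≤ (L₀ p) A := hM.1 p hppos
  have hLq : ∀ A, 0 ≤ (L₀ q) A := hM.1 q hqpos
  have h1 : L₀ m = L₀ p - L₀ q := by rw [hm, map_sub]
  calc tvNorm (L₀ m) ≤ tvNorm (L₀ p) + tvNorm (L₀ q) := h1 ▸ tvNorm_sub_le _ _
    _ = (L₀ p) Set.univ + (L₀ q) Set.univ := by
        rw [tvNorm_pos_eq _ hLp, tvNorm_pos_eq _ hLq]
    _ = p Set.univ + q Set.univ := by rw [hM.2 p, hM.2 q]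
    _ = tvNorm m := by
        rw [tvNorm_eq_toReal_add, hp, hq,
          Measure.toSignedMeasure_apply_measurable MeasurableSet.univ,
          Measure.toSignedMeasure_apply_measurable MeasurableSet.univ]
        rfl

lemma tv_le_L1 {g : ℝ → ℝ} (hg : Integrable g volume) :
    tvNorm (densSM g) ≤ ∫ x, |g x| := by
  obtain ⟨B, hB, hEq⟩ := tv_exists (densSM g)
  rw [hEq, densSM, withDensityᵥ_apply hg hB, withDensityᵥ_apply hg hB.compl]
  have h1 : ∫ x in B, g x ≤ ∫ x in B, |g x| :=
    setIntegral_mono_on hg.integrableOn hg.abs.integrableOn hB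
      (fun x _ => le_abs_self (g x))
  have h2 : - ∫ x in Bᶜ, g x ≤ ∫ x in Bᶜ, |g x| := by
    rw [← integral_neg]
    exact setIntegral_mono_on hg.neg.integrableOn hg.abs.integrableOn hB.compl
      (fun x _ => neg_le_abs (g x))
  have h3 := integral_add_compl hB hg.abs
  linarith

lemma densSM_nonneg {g : ℝ → ℝ} (hg : Integrable g volume) (hpos : 0 ≤ᵐ[volume] g) :
    ∀ A : Set ℝ, 0 ≤ densSM g A := by
  intro A
  by_cases hA : MeasurableSet A
  · rw [densSM, withDensityᵥ_apply hg hA]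
    exact setIntegral_nonneg_of_ae_restrict (ae_restrict_of_ae hpos)
  · rw [densSM, MeasureTheory.VectorMeasure.not_measurable _ hA]

lemma densSM_univ {g : ℝ → ℝ} (hg : Integrable g volume) :
    densSM g Set.univ = ∫ x, g x := by
  rw [densSM, withDensityᵥ_apply hg MeasurableSet.univ, setIntegral_univ]


lemma evar_add_le (f g : ℝ → ℝ) (s : Set ℝ) :
    eVariationOn (fun x => f x + g x) s ≤ eVariationOn f s + eVariationOn g s := by
  apply iSup_le
  rintro ⟨n, ⟨u, hu, us⟩⟩
  calc ∑ i ∈ Finset.range n, edist (f (u (i+1)) + g (u (i+1))) (f (u i) + g (u i))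
      ≤ ∑ i ∈ Finset.range n, (edist (f (u (i+1))) (f (u i)) + edist (g (u (i+1))) (g (u i))) :=
        Finset.sum_le_sum fun i _ => edist_add_add_le _ _ _ _
    _ = (∑ i ∈ Finset.range n, edist (f (u (i+1))) (f (u i)))
        + ∑ i ∈ Finset.range n, edist (g (u (i+1))) (g (u i)) := Finset.sum_add_distrib
    _ ≤ eVariationOn f s + eVariationOn g s :=
        add_le_add (eVariationOn.sum_le hu us) (eVariationOn.sum_le hu us)

lemma evar_neg (f : ℝ → ℝ) (s : Set ℝ) :
    eVariationOn (fun x => -f x) s = eVariationOn f s := by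
  apply le_antisymm <;>
  · apply iSup_le
    rintro ⟨n, ⟨u, hu, us⟩⟩
    refine le_trans (le_of_eq ?_) (eVariationOn.sum_le (n := n) hu us)
    congr 1; ext i; simp [edist_neg_neg]

lemma evar_sub_le (f g : ℝ → ℝ) (s : Set ℝ) :
    eVariationOn (fun x => f x - g x) s ≤ eVariationOn f s + eVariationOn g s := by
  have : (fun x => f x - g x) = fun x => f x + (-(g x)) := by ext x; ring
  rw [this]
  exact le_trans (evar_add_le f (fun x => -g x) s) (by rw [evar_neg])


theorem helly_mono (M : ℝ) (u : ℕ → ℝ → ℝ) (hmono : ∀ n, MonotoneOn (u n) II)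
    (hbd : ∀ n, ∀ x ∈ II, |u n x| ≤ M) :
    ∃ φ : ℕ → ℕ, StrictMono φ ∧ ∃ v : ℝ → ℝ, Monotone v ∧ (∀ x, |v x| ≤ M) ∧
      ∀ᵐ x ∂(MeasureTheory.volume.restrict II),
        Tendsto (fun j : ℕ => u (φ j) x) atTop (nhds (v x)) := by
  have hM : 0 ≤ M := le_trans (abs_nonneg _) (hbd 0 0 ⟨le_refl 0, by norm_num⟩)
  obtain ⟨E, hE⟩ := exists_surjective_nat ℚ
  set e : ℕ → ℝ := fun n => max 0 (min 1 ((E n : ℚ) : ℝ)) with he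
  have e_mem : ∀ n, e n ∈ II := fun n =>
    ⟨le_max_left _ _, max_le (by norm_num) (min_le_left _ _)⟩
  have e_btwn : ∀ {x y : ℝ}, 0 ≤ x → y ≤ 1 → x < y → ∃ k, x < e k ∧ e k < y := by
    intro x y hx hy hxy
    obtain ⟨q, hq1, hq2⟩ := exists_rat_btwn hxy
    obtain ⟨k, rfl⟩ := hE q
    refine ⟨k, ?_⟩
    have h0 : e k = ((E k : ℚ) : ℝ) := by
      rw [he]
      dsimp only
      rw [min_eq_right (le_trans hq2.le hy), max_eq_right (le_trans hx hq1.le)]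
    rw [h0]; exact ⟨hq1, hq2⟩
  -- diagonal extraction
  set F : ℕ → (ℕ → Icc (-M) M) := fun n k =>
    ⟨u n (e k), abs_le.mp (hbd n (e k) (e_mem k))⟩ with hF
  obtain ⟨G, φ, hφ, hconv⟩ := SeqCompactSpace.tendsto_subseq F
  set c : ℕ → ℝ := fun k => (G k : ℝ) with hc
  have hck : ∀ k, Tendsto (fun j => u (φ j) (e k)) atTop (nhds (c k)) := by
    intro k
    have h1 : Tendsto (fun j => (F ∘ φ) j k) atTop (nhds (G k)) := tendsto_pi_nhds.mp hconv k
    exact (continuous_subtype_val.tendsto (G k)).comp h1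
  have hcb : ∀ k, -M ≤ c k ∧ c k ≤ M := fun k => ⟨(G k).2.1, (G k).2.2⟩
  -- upper and lower envelopes
  set v : ℝ → ℝ := fun x => sSup (insert (-M) (c '' {k | e k ≤ x})) with hv
  set w : ℝ → ℝ := fun x => sInf (insert M (c '' {k | x ≤ e k})) with hw
  have hvbddA : ∀ x, BddAbove (insert (-M) (c '' {k | e k ≤ x})) := by
    intro x
    refine ⟨M, ?_⟩
    rintro y (rfl | ⟨k, -, rfl⟩)
    · linarith
    · exact (hcb k).2
  have hwbddB : ∀ x, BddBelow (insert M (c '' {k | x ≤ e k})) := by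
    intro x
    refine ⟨-M, ?_⟩
    rintro y (rfl | ⟨k, -, rfl⟩)
    · linarith
    · exact (hcb k).1
  have hvmono : Monotone v := by
    intro x y hxy
    apply csSup_le_csSup (hvbddA y) ⟨-M, mem_insert _ _⟩
    rintro z (rfl | ⟨k, hk, rfl⟩)
    · exact mem_insert _ _
    · exact mem_insert_of_mem _ ⟨k, le_trans hk hxy, rfl⟩
  have hvbd : ∀ x, |v x| ≤ M := by
    intro x
    rw [abs_le]
    constructor
    · exact le_csSup (hvbddA x) (mem_insert _ _)
    · apply csSup_le ⟨-M, mem_insert _ _⟩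
      rintro y (rfl | ⟨k, -, rfl⟩)
      · linarith
      · exact (hcb k).2
  -- bounds on liminf / limsup
  have hbdd1 : ∀ x ∈ II, IsBoundedUnder (· ≤ ·) atTop (fun j : ℕ => u (φ j) x) := by
    intro x hx
    exact Filter.isBoundedUnder_of ⟨M, fun j => (abs_le.mp (hbd (φ j) x hx)).2⟩
  have hbdd2 : ∀ x ∈ II, IsBoundedUnder (· ≥ ·) atTop (fun j : ℕ => u (φ j) x) := by
    intro x hx
    exact Filter.isBoundedUnder_of ⟨-M, fun j => (abs_le.mp (hbd (φ j) x hx)).1⟩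
  have key1 : ∀ x ∈ II, v x ≤ liminf (fun j : ℕ => u (φ j) x) atTop := by
    intro x hx
    apply csSup_le ⟨-M, mem_insert _ _⟩
    rintro y (rfl | ⟨k, hk, rfl⟩)
    · apply le_liminf_of_le (hbdd1 x hx).isCoboundedUnder_ge
      exact Filter.Eventually.of_forall fun j => (abs_le.mp (hbd (φ j) x hx)).1
    · have h1 : c k = liminf (fun j => u (φ j) (e k)) atTop := (hck k).liminf_eq.symm
      rw [h1]
      apply liminf_le_liminf (Filter.Eventually.of_forall fun j =>
        hmono (φ j) (e_mem k) hx hk) ?_ ?_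
      · exact Filter.isBoundedUnder_of ⟨-M, fun j =>
          (abs_le.mp (hbd (φ j) (e k) (e_mem k))).1⟩
      · exact (hbdd1 x hx).isCoboundedUnder_ge
  have key2 : ∀ x ∈ II, limsup (fun j : ℕ => u (φ j) x) atTop ≤ w x := by
    intro x hx
    apply le_csInf ⟨M, mem_insert _ _⟩
    rintro y (rfl | ⟨k, hk, rfl⟩)
    · apply limsup_le_of_le (hbdd2 x hx).isCoboundedUnder_le
      exact Filter.Eventually.of_forall fun j => (abs_le.mp (hbd (φ j) x hx)).2
    · have h1 : c k = limsup (fun j => u (φ j) (e k)) atTop := (hck k).limsup_eq.symm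
      rw [h1]
      apply limsup_le_limsup (Filter.Eventually.of_forall fun j =>
        hmono (φ j) hx (e_mem k) hk) ?_ ?_
      · exact (hbdd2 x hx).isCoboundedUnder_le
      · exact Filter.isBoundedUnder_of ⟨M, fun j =>
          (abs_le.mp (hbd (φ j) (e k) (e_mem k))).2⟩
  -- jump set is countable
  set J : Set ℝ := {x | x ∈ II ∧ v x < w x} with hJ
  have hsep : ∀ x ∈ J, ∀ y ∈ J, x < y → w x ≤ v y := by
    rintro x ⟨hx, -⟩ y ⟨hy, -⟩ hxy
    obtain ⟨k, hk1, hk2⟩ := e_btwn hx.1 hy.2 hxy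
    calc w x ≤ c k := csInf_le (hwbddB x) (mem_insert_of_mem _ ⟨k, hk1.le, rfl⟩)
      _ ≤ v y := le_csSup (hvbddA y) (mem_insert_of_mem _ ⟨k, hk2.le, rfl⟩)
  have hJc : J.Countable := by
    have : ∀ x : J, ∃ q : ℚ, v x.1 < (q:ℝ) ∧ (q:ℝ) < w x.1 := fun x => exists_rat_btwn x.2.2
    choose r hr1 hr2 using this
    have hinj : Function.Injective r := by
      intro a b hab
      by_contra hne
      have hne' : a.1 ≠ b.1 := fun h => hne (Subtype.ext h)
      rcases lt_or_gt_of_ne hne' with h | h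
      · have := hsep a.1 a.2 b.1 b.2 h
        have := hr2 a; have := hr1 b
        have : (r a : ℝ) < (r b : ℝ) := by
          calc (r a : ℝ) < w a.1 := hr2 a
            _ ≤ v b.1 := hsep a.1 a.2 b.1 b.2 h
            _ < (r b : ℝ) := hr1 b
        rw [hab] at this; exact lt_irrefl _ this
      · have : (r b : ℝ) < (r a : ℝ) := by
          calc (r b : ℝ) < w b.1 := hr2 b
            _ ≤ v a.1 := hsep b.1 b.2 a.1 a.2 h
            _ < (r a : ℝ) := hr1 a
        rw [hab] at this; exact lt_irrefl _ this
    exact Set.countable_iff_exists_injective.mpr ⟨fun x => Encodable.encode (r x),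
      fun a b hab => hinj (Encodable.encode_injective hab)⟩
  -- conclusion
  refine ⟨φ, hφ, v, hvmono, hvbd, ?_⟩
  have hnull : (MeasureTheory.volume.restrict II) (J ∪ IIᶜ) = 0 := by
    apply measure_union_null
    · exact le_antisymm (le_trans (Measure.restrict_le_self J)
        (le_of_eq (hJc.measure_zero _))) zero_le
    · rw [Measure.restrict_apply' measurableSet_Icc, compl_inter_self]
      exact measure_empty
  rw [MeasureTheory.ae_iff]
  apply measure_mono_null ?_ hnull
  intro x hx
  simp only [mem_setOf_eq] at hx
  by_contra hcon
  simp only [mem_union, mem_compl_iff, not_or, not_not] at hcon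
  obtain ⟨hxJ, hxII⟩ := hcon
  have hwv : w x ≤ v x := by
    by_contra hlt
    exact hxJ ⟨hxII, lt_of_not_ge hlt⟩
  exact hx (tendsto_of_le_liminf_of_limsup_le (key1 x hxII)
    (le_trans (key2 x hxII) hwv) (hbdd1 x hxII) (hbdd2 x hxII))

lemma volume_II : (MeasureTheory.volume II) = 1 := by
  rw [Real.volume_Icc]; norm_num

lemma bv_sup_bound {h : ℝ → ℝ} {K : ℝ} (hint : Integrable h volume)
    (hvar : eVariationOn h II ≠ ⊤) (hbv : bvNorm h ≤ K) :
    ∀ x ∈ II, |h x| ≤ 2*K + 1 := by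
  have hvar' : (eVariationOn h II).toReal ≤ K := by
    have h1 : (0:ℝ) ≤ ∫ x in II, |h x| := integral_nonneg fun x => abs_nonneg _
    rw [bvNorm] at hbv; linarith
  have hinteg : (∫ x in II, |h x|) ≤ K := by
    have h2 : (0:ℝ) ≤ (eVariationOn h II).toReal := ENNReal.toReal_nonneg
    rw [bvNorm] at hbv; linarith
  have hex : ∃ y ∈ II, |h y| ≤ K + 1 := by
    by_contra hcon
    push_neg at hcon
    have : (K+1) ≤ ∫ x in II, |h x| := by
      have := setIntegral_mono_on (integrableOn_const (by rw [volume_II]; norm_num))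
        hint.abs.integrableOn measurableSet_Icc (fun x hx => (hcon x hx).le)
      rwa [setIntegral_const, measureReal_def, volume_II, ENNReal.toReal_one, one_smul] at this
    linarith
  obtain ⟨y, hy, hhy⟩ := hex
  intro x hx
  have hdist : |h x - h y| ≤ (eVariationOn h II).toReal := by
    rw [← Real.dist_eq, dist_edist]
    exact ENNReal.toReal_mono hvar (eVariationOn.edist_le h hx hy)
  calc |h x| ≤ |h y| + |h x - h y| := by
        have := abs_sub_abs_le_abs_sub (h x) (h y); linarith [abs_sub_abs_le_abs_sub (h x) (h y)]
    _ ≤ (K + 1) + K := add_le_add hhy (le_trans hdist hvar')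
    _ = 2*K + 1 := by ring

lemma vft_bound {h : ℝ → ℝ} (hvar : eVariationOn h II ≠ ⊤) {x : ℝ} (hx : x ∈ II) :
    |variationOnFromTo h II 0 x| ≤ (eVariationOn h II).toReal := by
  rw [variationOnFromTo.eq_of_le h II hx.1,
    abs_of_nonneg ENNReal.toReal_nonneg]
  exact ENNReal.toReal_mono hvar (eVariationOn.mono h inter_subset_left)

lemma lbv {h : ℝ → ℝ} (hvar : eVariationOn h II ≠ ⊤) : LocallyBoundedVariationOn h II :=
  BoundedVariationOn.locallyBoundedVariationOn hvar


theorem bv_seq_compact (C : ℝ) (f : ℕ → ℝ → ℝ)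
    (hint : ∀ n, Integrable (f n) volume)
    (hsupp : ∀ n x, x ∉ II → f n x = 0)
    (hvar : ∀ n, eVariationOn (f n) II ≠ ⊤)
    (hvarle : ∀ n, (eVariationOn (f n) II).toReal ≤ C)
    (hbd : ∀ n, ∀ x ∈ II, |f n x| ≤ C) :
    ∃ ψ : ℕ → ℕ, StrictMono ψ ∧ ∃ F : ℝ → ℝ, Measurable F ∧ (∀ x, x ∉ II → F x = 0) ∧
      (∀ x, |F x| ≤ 3*C) ∧ Integrable F volume ∧
      (∀ᵐ x ∂volume, Tendsto (fun j => f (ψ j) x) atTop (nhds (F x))) ∧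
      Tendsto (fun j => ∫ x, |f (ψ j) x - F x|) atTop (nhds 0) := by
  have hC : 0 ≤ C := le_trans (abs_nonneg _) (hbd 0 0 ⟨le_refl 0, by norm_num⟩)
  set p : ℕ → ℝ → ℝ := fun n => variationOnFromTo (f n) II 0 with hp
  set q : ℕ → ℝ → ℝ := fun n => (variationOnFromTo (f n) II 0) - (f n) with hq
  have h0II : (0:ℝ) ∈ II := ⟨le_refl 0, by norm_num⟩
  have hpmono : ∀ n, MonotoneOn (p n) II := fun n =>
    variationOnFromTo.monotoneOn (lbv (hvar n)) h0II
  have hqmono : ∀ n, MonotoneOn (q n) II := fun n =>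
    variationOnFromTo.sub_self_monotoneOn (lbv (hvar n)) h0II
  have hpbd : ∀ n, ∀ x ∈ II, |p n x| ≤ C := fun n x hx =>
    le_trans (vft_bound (hvar n) hx) (hvarle n)
  have hqbd : ∀ n, ∀ x ∈ II, |q n x| ≤ 2*C := by
    intro n x hx
    have h1 := hpbd n x hx
    have h2 := hbd n x hx
    have : q n x = p n x - f n x := rfl
    rw [this, ] at *
    calc |p n x - f n x| ≤ |p n x| + |f n x| := abs_sub _ _
      _ ≤ 2*C := by linarith
  obtain ⟨φ₁, hφ₁, vp, hvpm, hvpb, hvpae⟩ := helly_mono C p hpmono hpbd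
  obtain ⟨φ₂, hφ₂, vq, hvqm, hvqb, hvqae⟩ :=
    helly_mono (2*C) (fun j => q (φ₁ j)) (fun j => hqmono _) (fun j => hqbd _)
  set ψ : ℕ → ℕ := φ₁ ∘ φ₂ with hψ
  have hψm : StrictMono ψ := hφ₁.comp hφ₂
  set F : ℝ → ℝ := Set.indicator II (fun y => vp y - vq y) with hF
  have hFmeas : Measurable F :=
    ((hvpm.measurable).sub (hvqm.measurable)).indicator measurableSet_Icc
  have hFsupp : ∀ x, x ∉ II → F x = 0 := fun x hx => indicator_of_notMem hx _
  have hFbd : ∀ x, |F x| ≤ 3*C := by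
    intro x
    by_cases hx : x ∈ II
    · rw [hF, indicator_of_mem hx]
      calc |vp x - vq x| ≤ |vp x| + |vq x| := abs_sub _ _
        _ ≤ 3*C := by linarith [hvpb x, hvqb x]
    · rw [hFsupp x hx, abs_zero]; linarith
  -- integrability of F
  have hbnd_int : Integrable (Set.indicator II fun _ => (3*C : ℝ)) volume := by
    rw [integrable_indicator_iff measurableSet_Icc]
    exact integrableOn_const (by rw [volume_II]; norm_num)
  have hFint : Integrable F volume := by
    apply Integrable.mono' hbnd_int hFmeas.aestronglyMeasurable
    apply Filter.Eventually.of_forall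
    intro x
    by_cases hx : x ∈ II
    · rw [Real.norm_eq_abs, indicator_of_mem hx]; exact hFbd x
    · rw [Real.norm_eq_abs, hFsupp x hx, abs_zero, indicator_of_notMem hx]
  -- a.e. convergence
  have haeconv : ∀ᵐ x ∂volume, Tendsto (fun j => f (ψ j) x) atTop (nhds (F x)) := by
    have hE : ∀ᵐ x ∂(volume.restrict II),
        Tendsto (fun j => p (ψ j) x) atTop (nhds (vp x)) ∧
        Tendsto (fun j => q (ψ j) x) atTop (nhds (vq x)) := by
      filter_upwards [hvpae, hvqae] with x h1 h2
      exact ⟨h1.comp (hφ₂.tendsto_atTop), h2⟩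
    rw [MeasureTheory.ae_iff] at hE ⊢
    rw [Measure.restrict_apply' measurableSet_Icc] at hE
    apply measure_mono_null ?_ hE
    intro x hx
    simp only [mem_setOf_eq, mem_inter_iff] at hx ⊢
    by_cases hxII : x ∈ II
    · refine ⟨?_, hxII⟩
      intro hcon
      apply hx
      have : ∀ j, f (ψ j) x = p (ψ j) x - q (ψ j) x := fun j => (sub_sub_cancel _ _).symm
      have h3 : Tendsto (fun j => p (ψ j) x - q (ψ j) x) atTop (nhds (vp x - vq x)) :=
        hcon.1.sub hcon.2
      have h4 : F x = vp x - vq x := indicator_of_mem hxII _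
      rw [h4]
      exact h3.congr (fun j => (this j).symm)
    · exfalso
      apply hx
      have : ∀ j, f (ψ j) x = 0 := fun j => hsupp _ x hxII
      rw [hFsupp x hxII]
      exact tendsto_const_nhds.congr (fun j => (this j).symm)
  -- L¹ convergence by dominated convergence
  refine ⟨ψ, hψm, F, hFmeas, hFsupp, hFbd, hFint, haeconv, ?_⟩
  have hbnd_int4 : Integrable (Set.indicator II fun _ => (4*C : ℝ)) volume := by
    rw [integrable_indicator_iff measurableSet_Icc]
    exact integrableOn_const (by rw [volume_II]; norm_num)
  have := MeasureTheory.tendsto_integral_of_dominated_convergence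
    (F := fun j x => |f (ψ j) x - F x|) (f := fun _ => (0:ℝ))
    (bound := Set.indicator II fun _ => (4*C : ℝ))
    (fun j => ((hint (ψ j)).sub hFint).abs.aestronglyMeasurable)
    hbnd_int4
    (fun j => by
      apply Filter.Eventually.of_forall
      intro x
      by_cases hx : x ∈ II
      · rw [Real.norm_eq_abs, abs_abs, indicator_of_mem hx]
        calc |f (ψ j) x - F x| ≤ |f (ψ j) x| + |F x| := abs_sub _ _
          _ ≤ 4*C := by linarith [hbd (ψ j) x hx, hFbd x]
      · rw [Real.norm_eq_abs, abs_abs, indicator_of_notMem hx, hsupp _ x hx,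
          hFsupp x hx, sub_zero, abs_zero])
    (by
      filter_upwards [haeconv] with x hx
      have : Tendsto (fun j => |f (ψ j) x - F x|) atTop (nhds (|F x - F x|)) :=
        (hx.sub tendsto_const_nhds).abs
      simpa using this)
  simpa using this

lemma IsBVDensity_sub {m1 m2 : SignedMeasure ℝ} {h1 h2 : ℝ → ℝ}
    (H1 : IsBVDensity m1 h1) (H2 : IsBVDensity m2 h2) :
    IsBVDensity (m1 - m2) (fun x => h1 x - h2 x) := by
  obtain ⟨⟨hi1, hs1, hd1⟩, hv1⟩ := H1
  obtain ⟨⟨hi2, hs2, hd2⟩, hv2⟩ := H2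
  refine ⟨⟨hi1.sub hi2, fun x hx => by
    show h1 x - h2 x = 0
    rw [hs1 x hx, hs2 x hx, sub_zero], ?_⟩, ?_⟩
  · rw [hd1, hd2, ← withDensityᵥ_sub' hi1 hi2]
  · exact ne_top_of_le_ne_top (ENNReal.add_ne_top.mpr ⟨hv1, hv2⟩) (evar_sub_le h1 h2 II)


end AuxBV

open AuxBV
set_option maxHeartbeats 1000000

/-- a Markov operator which is mixing on zero-average BV measures and
regularizing from `L¹` to `BV` has a unique fixed probability measure, which has a
bounded variation density. -/
theorem exists_unique_fixed_probability
    (L₀ : MeasureTheory.SignedMeasure ℝ →ₗ[ℝ] MeasureTheory.SignedMeasure ℝ)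
    (hMarkov : IsMarkov ⇑L₀)
    (hmix : ∀ (g : MeasureTheory.SignedMeasure ℝ) (h : ℝ → ℝ), IsBVDensity g h →
      g Set.univ = 0 →
      Filter.Tendsto (fun n : ℕ => tvNorm ((⇑L₀)^[n] g)) Filter.atTop (nhds 0))
    (hreg : ∃ K : ℝ, ∀ (m : MeasureTheory.SignedMeasure ℝ) (h : ℝ → ℝ),
      IsL1Density m h →
      ∃ h' : ℝ → ℝ, IsBVDensity (L₀ m) h' ∧ bvNorm h' ≤ K * tvNorm m) :
    ∃! f₀ : MeasureTheory.SignedMeasure ℝ,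
      (∃ h : ℝ → ℝ, IsBVDensity f₀ h) ∧
      (∀ A : Set ℝ, 0 ≤ f₀ A) ∧ f₀ Set.univ = 1 ∧ L₀ f₀ = f₀ := by
  obtain ⟨K, hK⟩ := hreg
  -- base density : Lebesgue measure on [0,1]
  set h₀ : ℝ → ℝ := Set.indicator II (fun _ => (1:ℝ)) with hh₀def
  have hh₀int : Integrable h₀ volume := by
    rw [hh₀def, integrable_indicator_iff measurableSet_Icc]
    exact integrableOn_const (by rw [volume_II]; norm_num)
  have hh₀supp : ∀ x, x ∉ II → h₀ x = 0 := fun x hx => indicator_of_notMem hx _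
  have hh₀var : eVariationOn h₀ II = 0 := by
    apply eVariationOn.constant_on
    rintro _ ⟨a, ha, rfl⟩ _ ⟨b, hb, rfl⟩
    rw [hh₀def]; simp [indicator_of_mem ha, indicator_of_mem hb]
  have hh₀int1 : (∫ x, h₀ x) = 1 := by
    rw [hh₀def, integral_indicator measurableSet_Icc, setIntegral_const, measureReal_def, volume_II]
    simp
  set μ : ℕ → SignedMeasure ℝ := fun n => (⇑L₀)^[n] (densSM h₀) with hμdef
  have hsucc : ∀ n, μ (n+1) = L₀ (μ n) := fun n => Function.iterate_succ_apply' _ _ _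
  have hL1 : ∀ n, ∃ h, IsL1Density (μ n) h := by
    intro n
    induction n with
    | zero => exact ⟨h₀, hh₀int, hh₀supp, rfl⟩
    | succ n ih =>
      obtain ⟨h, hh⟩ := ih
      obtain ⟨h', hh', -⟩ := hK (μ n) h hh
      exact ⟨h', (hsucc n) ▸ hh'.1⟩
  have hpos : ∀ n, ∀ A : Set ℝ, 0 ≤ μ n A := by
    intro n
    induction n with
    | zero =>
      exact densSM_nonneg hh₀int (Filter.Eventually.of_forall fun x =>
        indicator_nonneg (fun _ _ => zero_le_one) x)
    | succ n ih => rw [hsucc n]; exact hMarkov.1 _ ih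
  have hmass : ∀ n, μ n Set.univ = 1 := by
    intro n
    induction n with
    | zero => rw [hμdef]; simpa [densSM_univ hh₀int] using hh₀int1
    | succ n ih => rw [hsucc n, hMarkov.2 (μ n), ih]
  have htv1 : ∀ n, tvNorm (μ n) = 1 := fun n => by
    rw [tvNorm_pos_eq _ (hpos n), hmass n]
  have hbv : ∀ n, ∃ h, IsBVDensity (μ (n+1)) h ∧ bvNorm h ≤ K := by
    intro n
    obtain ⟨h, hh⟩ := hL1 n
    obtain ⟨h', h1, h2⟩ := hK (μ n) h hh
    rw [htv1 n, mul_one] at h2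
    exact ⟨h', (hsucc n) ▸ h1, h2⟩
  choose g hg hgbv using hbv
  have hgint : ∀ n, Integrable (g n) volume := fun n => (hg n).1.1
  have hgsupp : ∀ n x, x ∉ II → g n x = 0 := fun n => (hg n).1.2.1
  have hgdens : ∀ n, μ (n+1) = densSM (g n) := fun n => (hg n).1.2.2
  have hgvar : ∀ n, eVariationOn (g n) II ≠ ⊤ := fun n => (hg n).2
  have hK0 : 0 ≤ K := le_trans (add_nonneg (integral_nonneg fun x => abs_nonneg _)
    ENNReal.toReal_nonneg) (hgbv 0)
  set C : ℝ := 2*K + 1 with hCdef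
  have hvarle : ∀ n, (eVariationOn (g n) II).toReal ≤ C := by
    intro n
    have h1 : (0:ℝ) ≤ ∫ x in II, |g n x| := integral_nonneg fun x => abs_nonneg _
    have := hgbv n
    rw [bvNorm] at this
    rw [hCdef]; linarith
  have hbd : ∀ n, ∀ x ∈ II, |g n x| ≤ C :=
    fun n => bv_sup_bound (hgint n) (hgvar n) (hgbv n)
  obtain ⟨ψ, hψ, F, hFmeas, hFsupp, hFbd, hFint, haeconv, hL1conv⟩ :=
    bv_seq_compact C g hgint hgsupp hgvar hvarle hbd
  -- nonnegativity of the limit density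
  have hgae : ∀ n, 0 ≤ᵐ[volume] (g n) := by
    intro n
    apply ae_nonneg_of_forall_setIntegral_nonneg (hgint n)
    intro s hs _
    rw [← withDensityᵥ_apply (hgint n) hs]
    have := hpos (n+1) s
    rwa [hgdens n] at this
  have hFae : 0 ≤ᵐ[volume] F := by
    have h1 : ∀ᵐ x ∂volume, (∀ j : ℕ, 0 ≤ g (ψ j) x) := ae_all_iff.mpr fun j => hgae (ψ j)
    filter_upwards [h1, haeconv] with x hx1 hx2
    exact ge_of_tendsto hx2 (Filter.Eventually.of_forall fun j => hx1 j)
  set ν : SignedMeasure ℝ := densSM F with hνdef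
  have hνpos : ∀ A : Set ℝ, 0 ≤ ν A := densSM_nonneg hFint hFae
  have hdiff : ∀ j, tvNorm (μ (ψ j + 1) - ν) ≤ ∫ x, |g (ψ j) x - F x| := by
    intro j
    have heq : μ (ψ j + 1) - ν = densSM (fun x => g (ψ j) x - F x) := by
      rw [hgdens (ψ j), hνdef, densSM, densSM, densSM, ← withDensityᵥ_sub' (hgint _) hFint]
    rw [heq]
    exact tv_le_L1 ((hgint _).sub hFint)
  -- total mass of ν is 1
  have hgconst : ∀ j, (∫ x, g (ψ j) x) = 1 := by
    intro j
    have := hmass (ψ j + 1)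
    rwa [hgdens (ψ j), densSM_univ (hgint _)] at this
  have hνmass : ν Set.univ = 1 := by
    have hsub : ∀ j, |(∫ x, g (ψ j) x) - ∫ x, F x| ≤ ∫ x, |g (ψ j) x - F x| := by
      intro j
      rw [← integral_sub (hgint _) hFint, ← Real.norm_eq_abs]
      refine le_trans (norm_integral_le_integral_norm _) (le_of_eq ?_)
      simp [Real.norm_eq_abs]
    have h2 : Tendsto (fun j => (∫ x, g (ψ j) x) - ∫ x, F x) atTop (nhds 0) :=
      squeeze_zero_norm (fun j => hsub j) hL1conv
    have h3 : Tendsto (fun _ : ℕ => (1:ℝ) - ∫ x, F x) atTop (nhds 0) :=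
      h2.congr (fun j => by rw [hgconst j])
    have h4 : (1:ℝ) - ∫ x, F x = 0 := tendsto_nhds_unique tendsto_const_nhds h3
    rw [hνdef, densSM_univ hFint]
    linarith
  -- the difference of consecutive iterates mixes to 0
  set D : SignedMeasure ℝ := μ 1 - μ 0 with hDdef
  have hh₀bv : IsBVDensity (μ 0) h₀ := ⟨⟨hh₀int, hh₀supp, rfl⟩, by rw [hh₀var]; exact ENNReal.zero_ne_top⟩
  have hDbv : IsBVDensity D (fun x => g 0 x - h₀ x) := IsBVDensity_sub ((hgdens 0) ▸ (hg 0)) hh₀bv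
  have hDuniv : D Set.univ = 0 := by
    rw [hDdef, MeasureTheory.VectorMeasure.sub_apply, hmass 1, hmass 0, sub_self]
  have hmixD := hmix D _ hDbv hDuniv
  have hiterD : ∀ n, (⇑L₀)^[n] D = μ (n+1) - μ n := by
    intro n
    induction n with
    | zero => simp [hDdef]
    | succ n ih =>
      rw [Function.iterate_succ_apply', ih, map_sub, ← hsucc (n+1), ← hsucc n]
  have hψ1 : Tendsto (fun j => ψ j + 1) atTop atTop :=
    tendsto_atTop_mono (fun j => le_trans (hψ.id_le j) (Nat.le_succ _)) tendsto_id
  have hterm2 : Tendsto (fun j => tvNorm (μ (ψ j + 2) - μ (ψ j + 1))) atTop (nhds 0) := by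
    have heq : (fun j => tvNorm (μ (ψ j + 2) - μ (ψ j + 1)))
        = (fun n => tvNorm ((⇑L₀)^[n] D)) ∘ (fun j => ψ j + 1) := by
      funext j
      simp only [Function.comp_apply, hiterD (ψ j + 1)]
    rw [heq]
    exact hmixD.comp hψ1
  -- ν is a fixed point
  have hfix : L₀ ν = ν := by
    have key : ∀ j, tvNorm (L₀ ν - ν) ≤ (∫ x, |g (ψ j) x - F x|)
        + (tvNorm (μ (ψ j + 2) - μ (ψ j + 1)) + (∫ x, |g (ψ j) x - F x|)) := by
      intro j
      have hdecomp : L₀ ν - ν = (L₀ ν - L₀ (μ (ψ j + 1)))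
          + ((μ (ψ j + 2) - μ (ψ j + 1)) + (μ (ψ j + 1) - ν)) := by
        rw [hsucc (ψ j + 1)]
        abel
      have hterm1 : tvNorm (L₀ ν - L₀ (μ (ψ j + 1))) ≤ ∫ x, |g (ψ j) x - F x| := by
        rw [← map_sub]
        refine le_trans (markov_contraction L₀ hMarkov _) ?_
        have : ν - μ (ψ j + 1) = -(μ (ψ j + 1) - ν) := by abel
        rw [this, tvNorm_neg]
        exact hdiff j
      calc tvNorm (L₀ ν - ν)
          ≤ tvNorm (L₀ ν - L₀ (μ (ψ j + 1)))
            + tvNorm ((μ (ψ j + 2) - μ (ψ j + 1)) + (μ (ψ j + 1) - ν)) := by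
            rw [hdecomp]; exact tvNorm_add_le _ _
        _ ≤ tvNorm (L₀ ν - L₀ (μ (ψ j + 1)))
            + (tvNorm (μ (ψ j + 2) - μ (ψ j + 1)) + tvNorm (μ (ψ j + 1) - ν)) :=
            add_le_add le_rfl (tvNorm_add_le _ _)
        _ ≤ (∫ x, |g (ψ j) x - F x|)
            + (tvNorm (μ (ψ j + 2) - μ (ψ j + 1)) + (∫ x, |g (ψ j) x - F x|)) :=
            add_le_add hterm1 (add_le_add le_rfl (hdiff j))
    have hlim : Tendsto (fun j => (∫ x, |g (ψ j) x - F x|)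
        + (tvNorm (μ (ψ j + 2) - μ (ψ j + 1)) + (∫ x, |g (ψ j) x - F x|))) atTop (nhds 0) := by
      have := hL1conv.add (hterm2.add hL1conv)
      simpa using this
    have h0 : tvNorm (L₀ ν - ν) ≤ 0 := ge_of_tendsto hlim (Filter.Eventually.of_forall key)
    have := le_antisymm h0 (tvNorm_nonneg _)
    exact sub_eq_zero.mp (eq_of_tvNorm_zero this)
  -- BV density of ν via regularization at the fixed point
  obtain ⟨G', hG'bv, -⟩ := hK ν F ⟨hFint, hFsupp, rfl⟩
  rw [hfix] at hG'bv
  -- conclusion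
  refine ⟨ν, ⟨⟨G', hG'bv⟩, hνpos, hνmass, hfix⟩, ?_⟩
  rintro y ⟨⟨hy, hybv⟩, hypos, hymass, hyfix⟩
  have hdbv : IsBVDensity (y - ν) (fun x => hy x - G' x) := IsBVDensity_sub hybv hG'bv
  have hduniv : (y - ν) Set.univ = 0 := by
    rw [MeasureTheory.VectorMeasure.sub_apply, hymass, hνmass, sub_self]
  have hdfix : ∀ n, (⇑L₀)^[n] (y - ν) = y - ν := by
    intro n
    induction n with
    | zero => rfl
    | succ n ih => rw [Function.iterate_succ_apply', ih, map_sub, hyfix, hfix]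
  have hmixd := hmix (y - ν) _ hdbv hduniv
  have hconst : Tendsto (fun _ : ℕ => tvNorm (y - ν)) atTop (nhds 0) :=
    hmixd.congr (fun n => by rw [hdfix n])
  have : tvNorm (y - ν) = 0 := tendsto_nhds_unique tendsto_const_nhds hconst
  exact sub_eq_zero.mp (eq_of_tvNorm_zero this)
end
end

section
/- Strong statistical stability: Under assumptions (LR0)–(LR3) of the linear response theorem (fixed probability measures f_δ ∈ BV with uniformly bounded BV norm, mixing and regularization of L₀, and ‖(L₀ − L_δ)f_δ‖₁ ≤ K'δ), one has lim_{δ→0} ‖f_δ − f₀‖₁ = 0; more precisely ‖f_δ − f₀‖₁ ≤ 2C e^{λN} + ε_δ N for every N, where ε_δ = ‖(L₀ − L_δ)f_δ‖₁ and C, λ < 0 are the exponential contraction constants of L₀ on zero-average L¹ densities. -/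
open MeasureTheory Set Filter
open scoped ENNReal NNReal

noncomputable section

lemma tvNorm_nonneg (s : SignedMeasure ℝ) : 0 ≤ tvNorm s := ENNReal.toReal_nonneg

lemma tvNorm_zero : tvNorm 0 = 0 := by
  simp [tvNorm, SignedMeasure.totalVariation_zero]

lemma tvNorm_neg (s : SignedMeasure ℝ) : tvNorm (-s) = tvNorm s := by
  simp [tvNorm, SignedMeasure.totalVariation_neg]

lemma tvNorm_eq_exists (s : SignedMeasure ℝ) :
    ∃ i : Set ℝ, MeasurableSet i ∧ 0 ≤ s i ∧ s iᶜ ≤ 0 ∧ tvNorm s = s i - s iᶜ := by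
  obtain ⟨i, hi₁, hi₂, hi₃, hpos, hneg⟩ := s.toJordanDecomposition_spec
  have h1 : (s.toJordanDecomposition.posPart Set.univ).toReal = s i := by
    rw [hpos, SignedMeasure.toMeasureOfZeroLE_apply _ hi₂ hi₁ MeasurableSet.univ]
    simp
  have h2 : (s.toJordanDecomposition.negPart Set.univ).toReal = -s iᶜ := by
    rw [hneg, SignedMeasure.toMeasureOfLEZero_apply _ hi₃ hi₁.compl MeasurableSet.univ]
    simp
  have hsi : 0 ≤ s i := h1 ▸ ENNReal.toReal_nonneg
  have hsic : s iᶜ ≤ 0 := by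
    have := h2 ▸ ENNReal.toReal_nonneg
    linarith
  refine ⟨i, hi₁, hsi, hsic, ?_⟩
  rw [tvNorm, SignedMeasure.totalVariation, Measure.add_apply,
    ENNReal.toReal_add (measure_ne_top _ _) (measure_ne_top _ _), h1, h2]
  ring

lemma tvNorm_eq_of_nonneg (s : SignedMeasure ℝ) (h : ∀ A, 0 ≤ s A) :
    tvNorm s = s Set.univ := by
  obtain ⟨i, hi, hpos, hneg, heq⟩ := tvNorm_eq_exists s
  have hzero : s iᶜ = 0 := le_antisymm hneg (h _)
  have huniv : s Set.univ = s i + s iᶜ := by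
    rw [← VectorMeasure.of_union (disjoint_compl_right) hi hi.compl, Set.union_compl_self]
  rw [heq, huniv, hzero]; ring

lemma toSignedMeasure_nonneg (μ : Measure ℝ) [IsFiniteMeasure μ] (A : Set ℝ) :
    0 ≤ μ.toSignedMeasure A := by
  by_cases hA : MeasurableSet A
  · rw [Measure.toSignedMeasure_apply_measurable hA]; exact ENNReal.toReal_nonneg
  · rw [VectorMeasure.not_measurable _ hA]

lemma tvNorm_sub_toSM_le (μ ν : Measure ℝ) [IsFiniteMeasure μ] [IsFiniteMeasure ν] :
    tvNorm (μ.toSignedMeasure - ν.toSignedMeasure) ≤ (μ Set.univ).toReal + (ν Set.univ).toReal := by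
  obtain ⟨i, hi, hpos, hneg, heq⟩ := tvNorm_eq_exists (μ.toSignedMeasure - ν.toSignedMeasure)
  rw [heq]
  rw [VectorMeasure.sub_apply, VectorMeasure.sub_apply,
    Measure.toSignedMeasure_apply_measurable hi, Measure.toSignedMeasure_apply_measurable hi,
    Measure.toSignedMeasure_apply_measurable hi.compl,
    Measure.toSignedMeasure_apply_measurable hi.compl]
  have h1 : (μ i).toReal ≤ (μ Set.univ).toReal :=
    ENNReal.toReal_mono (measure_ne_top _ _) (measure_mono (Set.subset_univ _))
  have h2 : (ν iᶜ).toReal ≤ (ν Set.univ).toReal :=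
    ENNReal.toReal_mono (measure_ne_top _ _) (measure_mono (Set.subset_univ _))
  have h3 : 0 ≤ (ν i).toReal := ENNReal.toReal_nonneg
  have h4 : 0 ≤ (μ iᶜ).toReal := ENNReal.toReal_nonneg
  simp only [Measure.real] at *
  linarith

lemma jd_decomp (s : SignedMeasure ℝ) :
    s = s.toJordanDecomposition.posPart.toSignedMeasure -
        s.toJordanDecomposition.negPart.toSignedMeasure := by
  conv_lhs => rw [← s.toSignedMeasure_toJordanDecomposition]
  rfl

lemma tvNorm_eq_jd (s : SignedMeasure ℝ) :
    tvNorm s = (s.toJordanDecomposition.posPart Set.univ).toReal +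
      (s.toJordanDecomposition.negPart Set.univ).toReal := by
  rw [tvNorm, SignedMeasure.totalVariation, Measure.add_apply,
    ENNReal.toReal_add (measure_ne_top _ _) (measure_ne_top _ _)]

lemma tvNorm_add_le (a b : SignedMeasure ℝ) : tvNorm (a + b) ≤ tvNorm a + tvNorm b := by
  have hab : a + b =
      (a.toJordanDecomposition.posPart + b.toJordanDecomposition.posPart).toSignedMeasure -
      (a.toJordanDecomposition.negPart + b.toJordanDecomposition.negPart).toSignedMeasure := by
    rw [Measure.toSignedMeasure_add, Measure.toSignedMeasure_add]
    conv_lhs => rw [jd_decomp a, jd_decomp b]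
    abel
  rw [hab]
  refine le_trans (tvNorm_sub_toSM_le _ _) ?_
  rw [Measure.add_apply, Measure.add_apply,
    ENNReal.toReal_add (measure_ne_top _ _) (measure_ne_top _ _),
    ENNReal.toReal_add (measure_ne_top _ _) (measure_ne_top _ _),
    tvNorm_eq_jd a, tvNorm_eq_jd b]
  linarith

lemma tvNorm_sub_le (a b : SignedMeasure ℝ) : tvNorm (a - b) ≤ tvNorm a + tvNorm b := by
  rw [sub_eq_add_neg]
  exact le_trans (tvNorm_add_le _ _) (by rw [tvNorm_neg])

lemma markov_tv (Lop : MeasureTheory.SignedMeasure ℝ →ₗ[ℝ] MeasureTheory.SignedMeasure ℝ)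
    (h : IsMarkov ⇑Lop) (m : SignedMeasure ℝ) : tvNorm (Lop m) ≤ tvNorm m := by
  have hLm : Lop m = Lop m.toJordanDecomposition.posPart.toSignedMeasure -
      Lop m.toJordanDecomposition.negPart.toSignedMeasure := by
    conv_lhs => rw [jd_decomp m]
    rw [map_sub]
  rw [hLm]
  refine le_trans (tvNorm_sub_le _ _) ?_
  rw [tvNorm_eq_of_nonneg _ (h.1 _ (toSignedMeasure_nonneg _)),
    tvNorm_eq_of_nonneg _ (h.1 _ (toSignedMeasure_nonneg _)), h.2, h.2,
    Measure.toSignedMeasure_apply_measurable MeasurableSet.univ,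
    Measure.toSignedMeasure_apply_measurable MeasurableSet.univ, tvNorm_eq_jd]
  exact le_rfl

lemma iterate_map_sub2 (Lop : MeasureTheory.SignedMeasure ℝ →ₗ[ℝ] MeasureTheory.SignedMeasure ℝ)
    (n : ℕ) (a b : SignedMeasure ℝ) :
    (⇑Lop)^[n] (a - b) = (⇑Lop)^[n] a - (⇑Lop)^[n] b := by
  induction n with
  | zero => simp
  | succ n ih =>
    rw [Function.iterate_succ_apply', Function.iterate_succ_apply',
      Function.iterate_succ_apply', ih, map_sub]

lemma iterate_tv (Lop : MeasureTheory.SignedMeasure ℝ →ₗ[ℝ] MeasureTheory.SignedMeasure ℝ)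
    (h : IsMarkov ⇑Lop) (n : ℕ) (m : SignedMeasure ℝ) :
    tvNorm ((⇑Lop)^[n] m) ≤ tvNorm m := by
  induction n with
  | zero => simp
  | succ n ih =>
    rw [Function.iterate_succ_apply']
    exact le_trans (markov_tv Lop h _) ih

/-- strong statistical stability: under the assumptions (LR0)–(LR3),
`‖f_δ − f₀‖₁ → 0`; more precisely `‖f_δ − f₀‖₁ ≤ 2Ce^{λN} + ε_δ N` for every `N`,
where `ε_δ = ‖(L₀ − L_δ) f_δ‖₁`. -/
theorem strong_statistical_stability
    (δbar : ℝ) (hδbar : 0 < δbar)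
    (L : ℝ → MeasureTheory.SignedMeasure ℝ →ₗ[ℝ] MeasureTheory.SignedMeasure ℝ)
    (hMarkov : ∀ δ ∈ Set.Ico (0:ℝ) δbar, IsMarkov ⇑(L δ))
    (f : ℝ → MeasureTheory.SignedMeasure ℝ) (M : ℝ)
    -- (LR0): fixed probability measures with uniformly bounded BV densities
    (hfix : ∀ δ ∈ Set.Ico (0:ℝ) δbar, (L δ) (f δ) = f δ ∧ (∀ A : Set ℝ, 0 ≤ f δ A) ∧
      f δ Set.univ = 1 ∧ ∃ h : ℝ → ℝ, IsBVDensity (f δ) h ∧ bvNorm h ≤ M)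
    -- exponential contraction of L₀ on zero-average L¹ densities (from mixing + regularization)
    (C lam : ℝ) (hC : 0 ≤ C) (hlam : lam < 0)
    (hcontr : ∀ (g : MeasureTheory.SignedMeasure ℝ) (h : ℝ → ℝ), IsL1Density g h →
      g Set.univ = 0 → ∀ n : ℕ, tvNorm ((⇑(L 0))^[n] g) ≤ C * Real.exp (lam * n) * tvNorm g)
    -- (LR3): small perturbation
    (K' : ℝ)
    (hsmall : ∀ δ ∈ Set.Ico (0:ℝ) δbar, tvNorm ((L 0) (f δ) - (L δ) (f δ)) ≤ K' * δ) :
    (∀ δ ∈ Set.Ico (0:ℝ) δbar, ∀ N : ℕ,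
      tvNorm (f δ - f 0) ≤ 2 * C * Real.exp (lam * N)
        + tvNorm ((L 0) (f δ) - (L δ) (f δ)) * N) ∧
    Filter.Tendsto (fun δ : ℝ => tvNorm (f δ - f 0)) (nhdsWithin 0 (Set.Ioi 0)) (nhds 0) := by
  have h0mem : (0:ℝ) ∈ Set.Ico (0:ℝ) δbar := ⟨le_refl 0, hδbar⟩
  obtain ⟨h0fix, h0pos, h0mass, g0, hg0, -⟩ := hfix 0 h0mem
  have key : ∀ δ ∈ Set.Ico (0:ℝ) δbar, ∀ N : ℕ,
      tvNorm (f δ - f 0) ≤ 2 * C * Real.exp (lam * N)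
        + tvNorm ((L 0) (f δ) - (L δ) (f δ)) * N := by
    intro δ hδ N
    obtain ⟨hδfix, hδpos, hδmass, gδ, hgδ, -⟩ := hfix δ hδ
    have hdens : IsL1Density (f δ - f 0) (fun x => gδ x - g0 x) := by
      obtain ⟨⟨hint0, hvan0, heq0⟩, -⟩ := hg0
      obtain ⟨⟨hintδ, hvanδ, heqδ⟩, -⟩ := hgδ
      refine ⟨hintδ.sub hint0, fun x hx => by show gδ x - g0 x = 0; rw [hvanδ x hx, hvan0 x hx]; ring, ?_⟩
      rw [heqδ, heq0, ← MeasureTheory.withDensityᵥ_sub hintδ hint0]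
      rfl
    have hzero : (f δ - f 0) Set.univ = 0 := by
      rw [MeasureTheory.VectorMeasure.sub_apply, hδmass, h0mass]; ring
    have htv2 : tvNorm (f δ - f 0) ≤ 2 := by
      have h1 : tvNorm (f δ) = 1 := by rw [tvNorm_eq_of_nonneg _ hδpos, hδmass]
      have h2 : tvNorm (f 0) = 1 := by rw [tvNorm_eq_of_nonneg _ h0pos, h0mass]
      have := tvNorm_sub_le (f δ) (f 0); linarith
    have hcontrN := hcontr (f δ - f 0) _ hdens hzero N
    have hCexp : 0 ≤ C * Real.exp (lam * N) := mul_nonneg hC (Real.exp_pos _).le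
    have hc2 : tvNorm ((⇑(L 0))^[N] (f δ - f 0)) ≤ 2 * C * Real.exp (lam * N) := by
      nlinarith [tvNorm_nonneg ((⇑(L 0))^[N] (f δ - f 0))]
    set ε := tvNorm ((L 0) (f δ) - (L δ) (f δ)) with hεdef
    have hεeq : tvNorm (f δ - (L 0) (f δ)) = ε := by
      rw [hεdef, hδfix]
      rw [show f δ - (L 0) (f δ) = -((L 0) (f δ) - f δ) by abel]
      exact tvNorm_neg _
    have htel : ∀ n : ℕ, tvNorm (f δ - (⇑(L 0))^[n] (f δ)) ≤ n * ε := by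
      intro n; induction n with
      | zero => simp [tvNorm_zero]
      | succ n ih =>
        have hsplit : f δ - (⇑(L 0))^[n+1] (f δ) =
            (f δ - (⇑(L 0))^[n] (f δ)) + (⇑(L 0))^[n] (f δ - (L 0) (f δ)) := by
          rw [iterate_map_sub2, Function.iterate_succ_apply]
          abel
        rw [hsplit]
        refine le_trans (tvNorm_add_le _ _) ?_
        have h3 := iterate_tv (L 0) (hMarkov 0 h0mem) n (f δ - (L 0) (f δ))
        rw [hεeq] at h3
        push_cast
        linarith
    have hdecomp : f δ - f 0 = (f δ - (⇑(L 0))^[N] (f δ)) + (⇑(L 0))^[N] (f δ - f 0) := by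
      rw [iterate_map_sub2, Function.iterate_fixed h0fix]
      abel
    calc tvNorm (f δ - f 0)
        ≤ tvNorm (f δ - (⇑(L 0))^[N] (f δ)) + tvNorm ((⇑(L 0))^[N] (f δ - f 0)) := by
          nth_rewrite 1 [hdecomp]; exact tvNorm_add_le _ _
      _ ≤ N * ε + 2 * C * Real.exp (lam * N) := add_le_add (htel N) hc2
      _ = 2 * C * Real.exp (lam * N) + ε * N := by ring
  refine ⟨key, ?_⟩
  rw [Metric.tendsto_nhdsWithin_nhds]
  intro ε hε
  obtain ⟨N, hN⟩ := exists_pow_lt_of_lt_one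
    (show (0:ℝ) < ε / (2 * (2 * C + 1)) by positivity) (Real.exp_lt_one_iff.mpr hlam)
  refine ⟨min δbar (ε / (2 * ((N : ℝ) * |K'| + 1))), lt_min hδbar (by positivity), ?_⟩
  intro x hx hdist
  have hx0 : 0 < x := hx
  rw [Real.dist_eq, sub_zero, abs_of_pos hx0] at hdist
  have hxmem : x ∈ Set.Ico (0:ℝ) δbar := ⟨hx0.le, lt_of_lt_of_le hdist (min_le_left _ _)⟩
  have hxb : x < ε / (2 * ((N : ℝ) * |K'| + 1)) := lt_of_lt_of_le hdist (min_le_right _ _)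
  have hb := key x hxmem N
  have hs := hsmall x hxmem
  rw [Real.dist_eq, sub_zero, abs_of_nonneg (tvNorm_nonneg _)]
  have hexpN : Real.exp (lam * N) = (Real.exp lam) ^ N := by
    rw [mul_comm, Real.exp_nat_mul]
  have h1 : 2 * C * Real.exp (lam * N) < ε / 2 := by
    rw [hexpN]
    have hp : (0:ℝ) ≤ (Real.exp lam) ^ N := pow_nonneg (Real.exp_pos _).le _
    have hq : (2*C+1) * (Real.exp lam ^ N) < (2*C+1) * (ε / (2*(2*C+1))) :=
      mul_lt_mul_of_pos_left hN (by positivity)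
    have heq2 : (2*C+1) * (ε / (2*(2*C+1))) = ε / 2 := by
      field_simp
    nlinarith [hp, hC]
  have hK : tvNorm ((L 0) (f x) - (L x) (f x)) ≤ |K'| * x :=
    le_trans hs (mul_le_mul_of_nonneg_right (le_abs_self K') hx0.le)
  have hd : (0:ℝ) < (N : ℝ) * |K'| + 1 := by positivity
  have hxd : x * ((N : ℝ) * |K'| + 1) < ε / 2 := by
    rw [show ε / (2 * ((N : ℝ) * |K'| + 1)) = (ε / 2) / ((N : ℝ) * |K'| + 1) by
      rw [div_div]] at hxb
    exact (lt_div_iff₀ hd).mp hxb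
  have h3 : tvNorm ((L 0) (f x) - (L x) (f x)) * N ≤ |K'| * x * N :=
    mul_le_mul_of_nonneg_right hK (Nat.cast_nonneg N)
  have h4 : |K'| * x * (N : ℝ) ≤ x * ((N : ℝ) * |K'| + 1) := by nlinarith [hx0.le]
  linarith
end
end

section
/- For f a finite signed Borel measure on [0,1] with f([0,1]) = 0 and g ∈ L¹([0,1]), the reflecting-boundary convolution satisfies ‖f ∗̂ g‖_W ≤ ‖f‖_W · ‖g‖₁. -/
open MeasureTheory Set Filter
open scoped ENNReal NNReal

noncomputable section

lemma reflMap_bddBelow (z : ℝ) : BddBelow (Set.range fun i : ℤ => |z - 2 * (i : ℝ)|) :=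
  ⟨0, by rintro _ ⟨i, rfl⟩; exact abs_nonneg _⟩

lemma reflMap_lipschitz : LipschitzWith 1 reflMap := by
  apply LipschitzWith.of_dist_le_mul
  intro x y
  have key : ∀ a b : ℝ, reflMap a ≤ reflMap b + |a - b| := by
    intro a b
    have h1 : ∀ i : ℤ, reflMap a - |a - b| ≤ |b - 2 * (i : ℝ)| := by
      intro i
      have h0 : reflMap a ≤ |a - 2 * (i : ℝ)| := ciInf_le (reflMap_bddBelow a) i
      have h2 : |a - 2 * (i : ℝ)| ≤ |b - 2 * (i : ℝ)| + |a - b| := by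
        have he : a - 2 * (i : ℝ) = (b - 2 * (i : ℝ)) + (a - b) := by ring
        rw [he]; exact abs_add_le _ _
      linarith
    have h3 : reflMap a - |a - b| ≤ reflMap b := le_ciInf h1
    linarith
  rw [Real.dist_eq, Real.dist_eq, NNReal.coe_one, one_mul, abs_sub_le_iff]
  constructor
  · have := key x y; linarith
  · have := key y x; rw [abs_sub_comm] at this; linarith

lemma integrable_adm {φ : ℝ → ℝ} (hb : ∀ x, |φ x| ≤ 1) (hc : Continuous φ)
    (μ : Measure ℝ) [IsFiniteMeasure μ] : Integrable φ μ :=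
  (integrable_const 1).mono' hc.aestronglyMeasurable
    (Eventually.of_forall fun x => by simpa using hb x)

lemma pairing_bound (μ : Measure ℝ) [IsFiniteMeasure μ] {φ : ℝ → ℝ}
    (hb : ∀ x, |φ x| ≤ 1) (hc : Continuous φ) : ∫ x, φ x ∂μ ≤ (μ Set.univ).toReal := by
  calc ∫ x, φ x ∂μ ≤ ∫ _, (1:ℝ) ∂μ :=
        integral_mono (integrable_adm hb hc μ) (integrable_const 1) fun x => (abs_le.1 (hb x)).2
    _ = (μ Set.univ).toReal := by simp [measureReal_def]

lemma wnorm_bddAbove (f : SignedMeasure ℝ) :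
    BddAbove (Set.range fun g : {g : ℝ → ℝ // (∀ x, |g x| ≤ 1) ∧ LipschitzWith 1 g} =>
      (∫ x, g.1 x ∂f.toJordanDecomposition.posPart -
       ∫ x, g.1 x ∂f.toJordanDecomposition.negPart)) := by
  refine ⟨(f.toJordanDecomposition.posPart Set.univ).toReal +
    (f.toJordanDecomposition.negPart Set.univ).toReal, ?_⟩
  rintro _ ⟨⟨φ, hb, hl⟩, rfl⟩
  have h1 := pairing_bound f.toJordanDecomposition.posPart hb hl.continuous
  have h2 := pairing_bound f.toJordanDecomposition.negPart
    (φ := fun x => -φ x) (by simpa using hb) hl.continuous.neg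
  rw [integral_neg] at h2
  simp only
  linarith

lemma pairing_le (f : SignedMeasure ℝ) {φ : ℝ → ℝ} (hb : ∀ x, |φ x| ≤ 1)
    (hl : LipschitzWith 1 φ) :
    (∫ x, φ x ∂f.toJordanDecomposition.posPart -
     ∫ x, φ x ∂f.toJordanDecomposition.negPart) ≤ Wnorm f :=
  le_ciSup (wnorm_bddAbove f) (⟨φ, hb, hl⟩ :
    {g : ℝ → ℝ // (∀ x, |g x| ≤ 1) ∧ LipschitzWith 1 g})

lemma Wnorm_nonneg (f : SignedMeasure ℝ) : 0 ≤ Wnorm f := by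
  have := pairing_le f (φ := fun _ => 0) (by simp) (LipschitzWith.const' 0)
  simpa using this

lemma jordan_swap (m : SignedMeasure ℝ) (A B : Measure ℝ) [IsFiniteMeasure A] [IsFiniteMeasure B]
    (h : m = A.toSignedMeasure - B.toSignedMeasure) :
    m.toJordanDecomposition.posPart + B = m.toJordanDecomposition.negPart + A := by
  ext s hs
  have h1 : m s = (A s).toReal - (B s).toReal := by
    rw [h, VectorMeasure.sub_apply, Measure.toSignedMeasure_apply_measurable hs,
      Measure.toSignedMeasure_apply_measurable hs]
    rfl
  have h2 : m s = (m.toJordanDecomposition.posPart s).toReal -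
      (m.toJordanDecomposition.negPart s).toReal := by
    conv_lhs => rw [← m.toSignedMeasure_toJordanDecomposition]
    rw [JordanDecomposition.toSignedMeasure, VectorMeasure.sub_apply,
      Measure.toSignedMeasure_apply_measurable hs, Measure.toSignedMeasure_apply_measurable hs]
    rfl
  have h3 : (m.toJordanDecomposition.posPart s).toReal + (B s).toReal =
      (m.toJordanDecomposition.negPart s).toReal + (A s).toReal := by linarith
  rw [Measure.add_apply, Measure.add_apply]
  rw [← ENNReal.toReal_eq_toReal_iff' (by finiteness) (by finiteness)]
  rw [ENNReal.toReal_add (by finiteness) (by finiteness),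
    ENNReal.toReal_add (by finiteness) (by finiteness)]
  exact h3

lemma jordan_integral (m : SignedMeasure ℝ) (A B : Measure ℝ) [IsFiniteMeasure A]
    [IsFiniteMeasure B] (h : m = A.toSignedMeasure - B.toSignedMeasure) {φ : ℝ → ℝ}
    (hb : ∀ x, |φ x| ≤ 1) (hc : Continuous φ) :
    ∫ x, φ x ∂m.toJordanDecomposition.posPart - ∫ x, φ x ∂m.toJordanDecomposition.negPart
      = ∫ x, φ x ∂A - ∫ x, φ x ∂B := by
  have hswap := jordan_swap m A B h
  have hint : ∫ x, φ x ∂(m.toJordanDecomposition.posPart + B) =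
      ∫ x, φ x ∂(m.toJordanDecomposition.negPart + A) := by rw [hswap]
  rw [integral_add_measure (integrable_adm hb hc _) (integrable_adm hb hc _),
    integral_add_measure (integrable_adm hb hc _) (integrable_adm hb hc _)] at hint
  linarith

lemma map_toSM_sub (X Y : Measure ℝ) [IsFiniteMeasure X] [IsFiniteMeasure Y] {π : ℝ → ℝ}
    (hπ : Measurable π) :
    haveI := X.isFiniteMeasure_map π; haveI := Y.isFiniteMeasure_map π
    (X.toSignedMeasure - Y.toSignedMeasure).map π =
      (X.map π).toSignedMeasure - (Y.map π).toSignedMeasure := by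
  haveI := X.isFiniteMeasure_map π; haveI := Y.isFiniteMeasure_map π
  ext s hs
  rw [VectorMeasure.map_apply _ hπ hs, VectorMeasure.sub_apply, VectorMeasure.sub_apply,
    Measure.toSignedMeasure_apply_measurable (hπ hs),
    Measure.toSignedMeasure_apply_measurable (hπ hs),
    Measure.toSignedMeasure_apply_measurable hs, Measure.toSignedMeasure_apply_measurable hs,
    measureReal_def, measureReal_def, measureReal_def, measureReal_def,
    Measure.map_apply hπ hs, Measure.map_apply hπ hs]

lemma integrable_prod_shift (a c : Measure ℝ) [IsFiniteMeasure a] [IsFiniteMeasure c]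
    {ψ : ℝ → ℝ} (hb : ∀ x, |ψ x| ≤ 1) (hm : Measurable ψ) :
    Integrable (fun p : ℝ × ℝ => ψ (p.1 + p.2)) (a.prod c) :=
  (integrable_const 1).mono'
    ((hm.comp (measurable_fst.add measurable_snd)).aestronglyMeasurable)
    (Eventually.of_forall fun p => by simpa using hb _)

lemma integral_posConv (a c : Measure ℝ) [IsFiniteMeasure a] [IsFiniteMeasure c]
    {ψ : ℝ → ℝ} (hb : ∀ x, |ψ x| ≤ 1) (hm : Measurable ψ) :
    ∫ z, ψ z ∂(posConv a c) = ∫ y, ∫ x, ψ (x + y) ∂a ∂c := by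
  unfold posConv
  rw [integral_map (φ := fun p : ℝ × ℝ => p.1 + p.2) (measurable_fst.add measurable_snd).aemeasurable hm.aestronglyMeasurable]
  exact integral_prod_symm _ (integrable_prod_shift a c hb hm)

lemma integrable_inner_shift (a c : Measure ℝ) [IsFiniteMeasure a] [IsFiniteMeasure c]
    {ψ : ℝ → ℝ} (hb : ∀ x, |ψ x| ≤ 1) (hm : Measurable ψ) :
    Integrable (fun y => ∫ x, ψ (x + y) ∂a) c :=
  (integrable_prod_shift a c hb hm).integral_prod_right

lemma densSM_mass_bound (b : SignedMeasure ℝ) (g : ℝ → ℝ) (hbg : b = volume.withDensityᵥ g)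
    (hg : Integrable g volume) (hgsupp : ∀ x, x ∉ II → g x = 0) :
    (b.toJordanDecomposition.posPart Set.univ).toReal +
    (b.toJordanDecomposition.negPart Set.univ).toReal
      ≤ ∫ x in II, |g x| := by
  set A : Measure ℝ := volume.withDensity fun x => ENNReal.ofReal (g x) with hA
  set B : Measure ℝ := volume.withDensity fun x => ENNReal.ofReal (-g x) with hB
  haveI : IsFiniteMeasure A := isFiniteMeasure_withDensity_ofReal hg.2
  haveI : IsFiniteMeasure B := isFiniteMeasure_withDensity_ofReal hg.neg.2
  have hrep : b = A.toSignedMeasure - B.toSignedMeasure :=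
    hbg.trans (withDensityᵥ_eq_withDensity_pos_part_sub_withDensity_neg_part hg)
  have hswap := jordan_swap b A B hrep
  set bp := b.toJordanDecomposition.posPart with hbp'
  set bn := b.toJordanDecomposition.negPart with hbn'
  obtain ⟨s, hs, h1, h2⟩ := b.toJordanDecomposition.mutuallySingular
  have hbp : bp Set.univ ≤ A Set.univ := by
    have e1 : bp Set.univ = bp sᶜ := by
      rw [← measure_add_measure_compl hs, h1, zero_add]
    have e2 : (bp + B) sᶜ = (bn + A) sᶜ := by rw [hswap]
    rw [Measure.add_apply, Measure.add_apply, h2, zero_add] at e2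
    calc bp Set.univ = bp sᶜ := e1
      _ ≤ bp sᶜ + B sᶜ := le_self_add
      _ = A sᶜ := e2
      _ ≤ A Set.univ := measure_mono (subset_univ _)
  have hbn : bn Set.univ ≤ B Set.univ := by
    have e1 : bn Set.univ = bn s := by
      rw [← measure_add_measure_compl hs, h2, add_zero]
    have e2 : (bp + B) s = (bn + A) s := by rw [hswap]
    rw [Measure.add_apply, Measure.add_apply, h1, zero_add] at e2
    calc bn Set.univ = bn s := e1
      _ ≤ bn s + A s := le_self_add
      _ = B s := e2.symm
      _ ≤ B Set.univ := measure_mono (subset_univ _)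
  have hofg : ∀ x : ℝ, ENNReal.ofReal (g x) = ENNReal.ofReal (max (g x) 0) := by
    intro x
    rcases le_total 0 (g x) with h | h
    · rw [max_eq_left h]
    · rw [max_eq_right h, ENNReal.ofReal_of_nonpos h, ENNReal.ofReal_zero]
  have hofng : ∀ x : ℝ, ENNReal.ofReal (-g x) = ENNReal.ofReal (max (-g x) 0) := by
    intro x
    rcases le_total 0 (-g x) with h | h
    · rw [max_eq_left h]
    · rw [max_eq_right h, ENNReal.ofReal_of_nonpos h, ENNReal.ofReal_zero]
  have hngint : Integrable (fun x => max (-g x) 0) volume := by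
    simpa using hg.neg.pos_part
  have hAval : (A Set.univ).toReal = ∫ x, max (g x) 0 := by
    have e : A Set.univ = ENNReal.ofReal (∫ x, max (g x) 0) := by
      rw [hA, withDensity_apply _ MeasurableSet.univ, setLIntegral_univ, lintegral_congr hofg,
        ← ofReal_integral_eq_lintegral_ofReal hg.pos_part
          (Eventually.of_forall fun x => le_max_right _ _)]
    have hnn : (0:ℝ) ≤ ∫ x, max (g x) 0 := integral_nonneg fun x => le_max_right _ _
    rw [e, ENNReal.toReal_ofReal hnn]
  have hBval : (B Set.univ).toReal = ∫ x, max (-g x) 0 := by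
    have e : B Set.univ = ENNReal.ofReal (∫ x, max (-g x) 0) := by
      rw [hB, withDensity_apply _ MeasurableSet.univ, setLIntegral_univ, lintegral_congr hofng,
        ← ofReal_integral_eq_lintegral_ofReal hngint
          (Eventually.of_forall fun x => le_max_right _ _)]
    have hnn : (0:ℝ) ≤ ∫ x, max (-g x) 0 := integral_nonneg fun x => le_max_right _ _
    rw [e, ENNReal.toReal_ofReal hnn]
  have habs : ∫ x in II, |g x| = (∫ x, max (g x) 0) + ∫ x, max (-g x) 0 := by
    rw [setIntegral_eq_integral_of_forall_compl_eq_zero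
      (fun x hx => by rw [hgsupp x hx]; simp)]
    rw [← integral_add hg.pos_part hngint]
    apply integral_congr_ae
    filter_upwards with x
    rcases le_total 0 (g x) with h | h
    · rw [abs_of_nonneg h, max_eq_left h, max_eq_right (by linarith), add_zero]
    · rw [abs_of_nonpos h, max_eq_right h, max_eq_left (by linarith), zero_add]
  have t1 : (bp Set.univ).toReal ≤ (A Set.univ).toReal :=
    ENNReal.toReal_mono (by finiteness) hbp
  have t2 : (bn Set.univ).toReal ≤ (B Set.univ).toReal :=
    ENNReal.toReal_mono (by finiteness) hbn
  rw [habs]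
  rw [hAval] at t1; rw [hBval] at t2
  linarith

/-- for a zero-average finite signed measure `f` on `[0,1]` and `g ∈ L¹([0,1])`,
the reflecting-boundary convolution satisfies `‖f ∗̂ g‖_W ≤ ‖f‖_W · ‖g‖₁`. -/
theorem reflConv_Wnorm_bound
    (f : MeasureTheory.SignedMeasure ℝ)
    (hsupp : ∀ A : Set ℝ, MeasurableSet A → A ⊆ IIᶜ → f A = 0)
    (hzero : f II = 0)
    (g : ℝ → ℝ) (hg : MeasureTheory.Integrable g MeasureTheory.volume)
    (hgsupp : ∀ x, x ∉ II → g x = 0) :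
    Wnorm (reflConvM f (densSM g)) ≤ Wnorm f * ∫ x in II, |g x| := by
  haveI : Nonempty {h : ℝ → ℝ // (∀ x, |h x| ≤ 1) ∧ LipschitzWith 1 h} :=
    ⟨⟨fun _ => 0, fun x => by simp, LipschitzWith.const' 0⟩⟩
  set b : SignedMeasure ℝ := densSM g with hbdef
  set fp := f.toJordanDecomposition.posPart with hfp
  set fn := f.toJordanDecomposition.negPart with hfn
  set bp := b.toJordanDecomposition.posPart with hbp
  set bn := b.toJordanDecomposition.negPart with hbn
  have hmass : (bp Set.univ).toReal + (bn Set.univ).toReal ≤ ∫ x in II, |g x| :=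
    densSM_mass_bound b g (by rw [hbdef]; rfl) hg hgsupp
  have hWnn := Wnorm_nonneg f
  haveI := (posConv fp bp + posConv fn bn).isFiniteMeasure_map reflMap
  haveI := (posConv fp bn + posConv fn bp).isFiniteMeasure_map reflMap
  have hrepr : reflConvM f b =
      (Measure.map reflMap (posConv fp bp + posConv fn bn)).toSignedMeasure -
      (Measure.map reflMap (posConv fp bn + posConv fn bp)).toSignedMeasure := by
    unfold reflConvM mConv
    exact map_toSM_sub _ _ reflMap_lipschitz.continuous.measurable
  apply ciSup_le
  rintro ⟨φ, hb1, hl⟩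
  simp only
  set ψ : ℝ → ℝ := fun x => φ (reflMap x) with hψ
  have hψb : ∀ x, |ψ x| ≤ 1 := fun x => hb1 _
  have hψc : Continuous ψ := hl.continuous.comp reflMap_lipschitz.continuous
  have hψm : Measurable ψ := hψc.measurable
  have hshift : ∀ y : ℝ, LipschitzWith 1 (fun x : ℝ => ψ (x + y)) := by
    intro y
    have h3 : LipschitzWith 1 (fun x : ℝ => x + y) :=
      LipschitzWith.of_dist_le_mul fun a c => by
        rw [Real.dist_eq, Real.dist_eq, NNReal.coe_one, one_mul]
        have he : a + y - (c + y) = a - c := by ring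
        rw [he]
    have := hl.comp (reflMap_lipschitz.comp h3); rw [mul_one, mul_one] at this; exact this
  -- pointwise bound on the kernel
  have hKle : ∀ y : ℝ, (∫ x, ψ (x + y) ∂fp) - (∫ x, ψ (x + y) ∂fn) ≤ Wnorm f :=
    fun y => pairing_le f (fun x => hψb _) (hshift y)
  have hKge : ∀ y : ℝ, -((∫ x, ψ (x + y) ∂fp) - (∫ x, ψ (x + y) ∂fn)) ≤ Wnorm f := by
    intro y
    have := pairing_le f (φ := fun x => -ψ (x + y)) (fun x => by simpa using hψb (x + y))
      (hshift y).neg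
    rw [integral_neg, integral_neg] at this
    linarith
  -- rewrite the pairing
  have step1 : (∫ x, φ x ∂(reflConvM f b).toJordanDecomposition.posPart -
      ∫ x, φ x ∂(reflConvM f b).toJordanDecomposition.negPart)
      = (∫ y, ∫ x, ψ (x + y) ∂fp ∂bp + ∫ y, ∫ x, ψ (x + y) ∂fn ∂bn)
        - (∫ y, ∫ x, ψ (x + y) ∂fp ∂bn + ∫ y, ∫ x, ψ (x + y) ∂fn ∂bp) := by
    rw [jordan_integral _ _ _ hrepr hb1 hl.continuous]
    rw [integral_map reflMap_lipschitz.continuous.measurable.aemeasurable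
        hl.continuous.aestronglyMeasurable,
      integral_map reflMap_lipschitz.continuous.measurable.aemeasurable
        hl.continuous.aestronglyMeasurable]
    rw [integral_add_measure (integrable_adm hψb hψc _) (integrable_adm hψb hψc _),
      integral_add_measure (integrable_adm hψb hψc _) (integrable_adm hψb hψc _)]
    rw [integral_posConv fp bp hψb hψm, integral_posConv fn bn hψb hψm,
      integral_posConv fp bn hψb hψm, integral_posConv fn bp hψb hψm]
  have hi1 : Integrable (fun y => ∫ x, ψ (x + y) ∂fp) bp := integrable_inner_shift fp bp hψb hψm
  have hi2 : Integrable (fun y => ∫ x, ψ (x + y) ∂fn) bp := integrable_inner_shift fn bp hψb hψm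
  have hi3 : Integrable (fun y => ∫ x, ψ (x + y) ∂fp) bn := integrable_inner_shift fp bn hψb hψm
  have hi4 : Integrable (fun y => ∫ x, ψ (x + y) ∂fn) bn := integrable_inner_shift fn bn hψb hψm
  have bnd1 : ∫ y, ((∫ x, ψ (x + y) ∂fp) - ∫ x, ψ (x + y) ∂fn) ∂bp
      ≤ Wnorm f * (bp Set.univ).toReal := by
    calc ∫ y, ((∫ x, ψ (x + y) ∂fp) - ∫ x, ψ (x + y) ∂fn) ∂bp
        ≤ ∫ _, Wnorm f ∂bp := integral_mono (hi1.sub hi2) (integrable_const _) hKle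
      _ = (bp Set.univ).toReal • Wnorm f := integral_const _
      _ = Wnorm f * (bp Set.univ).toReal := by rw [smul_eq_mul, mul_comm]
  have bnd2 : ∫ y, -((∫ x, ψ (x + y) ∂fp) - ∫ x, ψ (x + y) ∂fn) ∂bn
      ≤ Wnorm f * (bn Set.univ).toReal := by
    calc ∫ y, -((∫ x, ψ (x + y) ∂fp) - ∫ x, ψ (x + y) ∂fn) ∂bn
        ≤ ∫ _, Wnorm f ∂bn := integral_mono ((hi3.sub hi4).neg) (integrable_const _) hKge
      _ = (bn Set.univ).toReal • Wnorm f := integral_const _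
      _ = Wnorm f * (bn Set.univ).toReal := by rw [smul_eq_mul, mul_comm]
  rw [step1]
  rw [integral_sub hi1 hi2] at bnd1
  rw [integral_neg, integral_sub hi3 hi4] at bnd2
  have hfinal : Wnorm f * ((bp Set.univ).toReal + (bn Set.univ).toReal)
      ≤ Wnorm f * ∫ x in II, |g x| := mul_le_mul_of_nonneg_left hmass hWnn
  nlinarith [hfinal]
end
end

section
/- Let D_δ = Id + δS : [0,1] → [0,1] be a family of continuous bijections where S is 1-Lipschitz with S(0) = S(1) = 0, and let T : [0,1] → [0,1] be a nonsingular Borel map. Then the transfer operators satisfy ‖L_{D_δ ∘ T} f − L_T f‖_W ≤ δ ‖f‖₁ for all f ∈ L¹([0,1]). -/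
open MeasureTheory Set Filter
open scoped ENNReal NNReal

noncomputable section

/-- helper: map of a difference of toSignedMeasures -/
lemma toSM_map_sub (p q : Measure ℝ) [IsFiniteMeasure p] [IsFiniteMeasure q]
    (φ : ℝ → ℝ) (hφ : Measurable φ) :
    (p.toSignedMeasure - q.toSignedMeasure).map φ =
      (p.map φ).toSignedMeasure - (q.map φ).toSignedMeasure := by
  ext i hi
  rw [VectorMeasure.map_apply _ hφ hi, VectorMeasure.sub_apply, VectorMeasure.sub_apply,
    Measure.toSignedMeasure_apply_measurable (hφ hi),
    Measure.toSignedMeasure_apply_measurable (hφ hi),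
    Measure.toSignedMeasure_apply_measurable hi,
    Measure.toSignedMeasure_apply_measurable hi,
    map_measureReal_apply hφ hi, map_measureReal_apply hφ hi]

/-- helper: Jordan parts of a difference of finite measures -/
lemma jordan_add_eq (a b : Measure ℝ) [IsFiniteMeasure a] [IsFiniteMeasure b]
    (m : SignedMeasure ℝ) (hm : m = a.toSignedMeasure - b.toSignedMeasure) :
    m.toJordanDecomposition.posPart + b = a + m.toJordanDecomposition.negPart := by
  have h1 : m.toJordanDecomposition.posPart.toSignedMeasure -
      m.toJordanDecomposition.negPart.toSignedMeasure =
      a.toSignedMeasure - b.toSignedMeasure := by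
    rw [← hm]
    have := m.toSignedMeasure_toJordanDecomposition
    rw [JordanDecomposition.toSignedMeasure] at this
    exact this
  have h2 : m.toJordanDecomposition.posPart.toSignedMeasure + b.toSignedMeasure =
      a.toSignedMeasure + m.toJordanDecomposition.negPart.toSignedMeasure := by
    have := sub_eq_sub_iff_add_eq_add.mp h1
    linear_combination (norm := abel) this
  rw [← Measure.toSignedMeasure_add, ← Measure.toSignedMeasure_add,
    Measure.toSignedMeasure_eq_toSignedMeasure_iff] at h2
  exact h2

/-- for `D_δ = Id + δS` with `S` 1-Lipschitz, `S(0)=S(1)=0`, and a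
nonsingular Borel map `T`, the transfer operators satisfy
`‖L_{D_δ ∘ T} f − L_T f‖_W ≤ δ ‖f‖₁`. -/
theorem transfer_perturbation_Wnorm
    (δ : ℝ) (hδ : 0 ≤ δ)
    (S : ℝ → ℝ) (hS : LipschitzWith 1 S) (hS0 : S 0 = 0) (hS1 : S 1 = 0)
    (hD : Set.BijOn (fun x => x + δ * S x) II II)
    (hDc : ContinuousOn (fun x => x + δ * S x) II)
    (T : ℝ → ℝ) (hT : Nonsingular T)
    (f : ℝ → ℝ) (hf : MeasureTheory.Integrable f MeasureTheory.volume)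
    (hfsupp : ∀ x, x ∉ II → f x = 0) :
    Wnorm ((densSM f).map (fun x => T x + δ * S (T x)) - (densSM f).map T)
      ≤ δ * ∫ x in II, |f x| := by
  have hTm : Measurable T := hT.1
  have hSc : Continuous S := hS.continuous
  set DT : ℝ → ℝ := fun x => T x + δ * S (T x) with hDT
  have hDTm : Measurable DT := hTm.add ((hSc.measurable.comp hTm).const_mul δ)
  -- the positive and negative density measures
  set μp : Measure ℝ := volume.withDensity (fun x => ENNReal.ofReal (f x)) with hμp
  set μn : Measure ℝ := volume.withDensity (fun x => ENNReal.ofReal (-f x)) with hμn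
  haveI : IsFiniteMeasure μp := isFiniteMeasure_withDensity_ofReal hf.2
  haveI : IsFiniteMeasure μn := isFiniteMeasure_withDensity_ofReal hf.neg.2
  have hdens : densSM f = μp.toSignedMeasure - μn.toSignedMeasure :=
    withDensityᵥ_eq_withDensity_pos_part_sub_withDensity_neg_part hf
  set a : Measure ℝ := μp.map DT + μn.map T with ha
  set b : Measure ℝ := μn.map DT + μp.map T with hb
  set m : SignedMeasure ℝ := (densSM f).map DT - (densSM f).map T with hm
  have hmab : m = a.toSignedMeasure - b.toSignedMeasure := by
    have h₁ : a.toSignedMeasure = (μp.map DT).toSignedMeasure + (μn.map T).toSignedMeasure :=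
      Measure.toSignedMeasure_add _ _
    have h₂ : b.toSignedMeasure = (μn.map DT).toSignedMeasure + (μp.map T).toSignedMeasure :=
      Measure.toSignedMeasure_add _ _
    rw [hm, hdens, toSM_map_sub _ _ _ hDTm, toSM_map_sub _ _ _ hTm, h₁, h₂]
    abel
  have hjordan := jordan_add_eq a b m hmab
  -- bound for each test function
  rw [Wnorm]
  have hne : Nonempty {g : ℝ → ℝ // (∀ x, |g x| ≤ 1) ∧ LipschitzWith 1 g} :=
    ⟨⟨fun _ => 0, fun x => by simp, (LipschitzWith.const 0).weaken (by norm_num)⟩⟩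
  apply ciSup_le
  rintro ⟨g, hg1, hgL⟩
  simp only
  have hgc : Continuous g := hgL.continuous
  -- integrability of g w.r.t. any finite measure
  have hgint : ∀ (ν : Measure ℝ) [IsFiniteMeasure ν], Integrable g ν := by
    intro ν _
    refine Integrable.mono' (integrable_const 1) hgc.aestronglyMeasurable ?_
    exact ae_of_all _ fun x => by simpa using hg1 x
  -- step: ∫g dpos - ∫g dneg = ∫g da - ∫g db
  have hga : ∫ x, g x ∂a = ∫ x, g x ∂(μp.map DT) + ∫ x, g x ∂(μn.map T) :=
    integral_add_measure (hgint _) (hgint _)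
  have hgb : ∫ x, g x ∂b = ∫ x, g x ∂(μn.map DT) + ∫ x, g x ∂(μp.map T) :=
    integral_add_measure (hgint _) (hgint _)
  have key : ∫ x, g x ∂m.toJordanDecomposition.posPart -
      ∫ x, g x ∂m.toJordanDecomposition.negPart = ∫ x, g x ∂a - ∫ x, g x ∂b := by
    have h3 := congrArg (fun ν => ∫ x, g x ∂ν) hjordan
    have e1 : ∫ x, g x ∂(m.toJordanDecomposition.posPart + b) =
        ∫ x, g x ∂m.toJordanDecomposition.posPart + ∫ x, g x ∂b :=
      integral_add_measure (hgint _) (hgint _)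
    have e2 : ∫ x, g x ∂(a + m.toJordanDecomposition.negPart) =
        ∫ x, g x ∂a + ∫ x, g x ∂m.toJordanDecomposition.negPart :=
      integral_add_measure (hgint _) (hgint _)
    rw [e1, e2] at h3
    linarith
  rw [key]
  -- express as integrals against μp, μn
  have hmap : ∀ (φ : ℝ → ℝ) (hφ : Measurable φ) (ν : Measure ℝ) [IsFiniteMeasure ν],
      ∫ x, g x ∂(ν.map φ) = ∫ x, g (φ x) ∂ν := by
    intro φ hφ ν _
    exact integral_map hφ.aemeasurable hgc.aestronglyMeasurable
  have hab : ∫ x, g x ∂a - ∫ x, g x ∂b =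
      (∫ x, g (DT x) ∂μp - ∫ x, g (T x) ∂μp) -
      (∫ x, g (DT x) ∂μn - ∫ x, g (T x) ∂μn) := by
    rw [hga, hgb, hmap DT hDTm, hmap T hTm, hmap DT hDTm, hmap T hTm]
    ring
  rw [hab]
  -- turn withDensity integrals into weighted Lebesgue integrals
  have hfae : AEMeasurable f volume := hf.aemeasurable
  have hwd : ∀ (h : ℝ → ℝ), AEStronglyMeasurable h volume → (∀ x, |h x| ≤ 1) →
      ∫ x, h x ∂μp - ∫ x, h x ∂μn = ∫ x, f x * h x := by
    intro h hh hb1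
    have h1 : ∫ x, h x ∂μp = ∫ x, (f x).toNNReal • h x := by
      rw [hμp]
      exact integral_withDensity_eq_integral_smul₀ hfae.real_toNNReal h
    have h2 : ∫ x, h x ∂μn = ∫ x, (-f x).toNNReal • h x := by
      rw [hμn]
      exact integral_withDensity_eq_integral_smul₀ hfae.neg.real_toNNReal h
    have hint1 : Integrable (fun x => (f x).toNNReal • h x) volume := by
      refine Integrable.mono' hf.abs
        ((hfae.real_toNNReal.coe_nnreal_real.aestronglyMeasurable).smul hh) ?_
      refine ae_of_all _ fun x => ?_
      rw [NNReal.smul_def, smul_eq_mul, Real.norm_eq_abs, abs_mul, Real.coe_toNNReal',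
        abs_of_nonneg (le_max_right _ _)]
      calc max (f x) 0 * |h x| ≤ |f x| * 1 := by
            apply mul_le_mul (max_le (le_abs_self _) (abs_nonneg _)) (hb1 x) (abs_nonneg _)
              (abs_nonneg _)
        _ = |f x| := mul_one _
    have hint2 : Integrable (fun x => (-f x).toNNReal • h x) volume := by
      refine Integrable.mono' hf.abs
        ((hfae.neg.real_toNNReal.coe_nnreal_real.aestronglyMeasurable).smul hh) ?_
      refine ae_of_all _ fun x => ?_
      rw [NNReal.smul_def, smul_eq_mul, Real.norm_eq_abs, abs_mul, Real.coe_toNNReal',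
        abs_of_nonneg (le_max_right _ _)]
      calc max (-f x) 0 * |h x| ≤ |f x| * 1 := by
            apply mul_le_mul (max_le (neg_le_abs _) (abs_nonneg _)) (hb1 x) (abs_nonneg _)
              (abs_nonneg _)
        _ = |f x| := mul_one _
    rw [h1, h2, ← integral_sub hint1 hint2]
    congr 1
    funext x
    rw [NNReal.smul_def, NNReal.smul_def, smul_eq_mul, smul_eq_mul, ← sub_mul,
      Real.coe_toNNReal', Real.coe_toNNReal']
    congr 1
    rcases le_total 0 (f x) with hx | hx
    · rw [max_eq_left hx, max_eq_right (by linarith)]; ring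
    · rw [max_eq_right hx, max_eq_left (by linarith)]; ring
  have hDTae : AEStronglyMeasurable (fun x => g (DT x)) volume :=
    (hgc.measurable.comp hDTm).aestronglyMeasurable
  have hTae : AEStronglyMeasurable (fun x => g (T x)) volume :=
    (hgc.measurable.comp hTm).aestronglyMeasurable
  have e1 := hwd (fun x => g (DT x)) hDTae (fun x => hg1 _)
  have e2 := hwd (fun x => g (T x)) hTae (fun x => hg1 _)
  have hfinal : (∫ x, g (DT x) ∂μp - ∫ x, g (T x) ∂μp) -
      (∫ x, g (DT x) ∂μn - ∫ x, g (T x) ∂μn) =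
      ∫ x, f x * (g (DT x) - g (T x)) := by
    have hi1 : Integrable (fun x => f x * g (DT x)) volume := by
      refine Integrable.mono' hf.abs (hf.aestronglyMeasurable.mul hDTae) ?_
      refine ae_of_all _ fun x => ?_
      rw [Real.norm_eq_abs, abs_mul]
      calc |f x| * |g (DT x)| ≤ |f x| * 1 :=
            mul_le_mul_of_nonneg_left (hg1 _) (abs_nonneg _)
        _ = |f x| := mul_one _
    have hi2 : Integrable (fun x => f x * g (T x)) volume := by
      refine Integrable.mono' hf.abs (hf.aestronglyMeasurable.mul hTae) ?_
      refine ae_of_all _ fun x => ?_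
      rw [Real.norm_eq_abs, abs_mul]
      calc |f x| * |g (T x)| ≤ |f x| * 1 :=
            mul_le_mul_of_nonneg_left (hg1 _) (abs_nonneg _)
        _ = |f x| := mul_one _
    have : (∫ x, g (DT x) ∂μp - ∫ x, g (DT x) ∂μn) -
        (∫ x, g (T x) ∂μp - ∫ x, g (T x) ∂μn) =
        ∫ x, f x * (g (DT x) - g (T x)) := by
      rw [e1, e2, ← integral_sub hi1 hi2]
      congr 1; funext x; ring
    linarith
  rw [hfinal]
  -- final pointwise bound
  have hbound : ∀ x, |f x * (g (DT x) - g (T x))| ≤ δ * |f x| := by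
    intro x
    by_cases hx : x ∈ II
    · have hTx : T x ∈ II := hT.2.1 hx
      have hgdiff : |g (DT x) - g (T x)| ≤ δ := by
        have := hgL.dist_le_mul (DT x) (T x)
        rw [Real.dist_eq, Real.dist_eq] at this
        have hd : |DT x - T x| = δ * |S (T x)| := by
          rw [hDT]; simp only; rw [show T x + δ * S (T x) - T x = δ * S (T x) by ring,
            abs_mul, abs_of_nonneg hδ]
        have hSb : |S (T x)| ≤ 1 := by
          have := hS.dist_le_mul (T x) 0
          rw [Real.dist_eq, Real.dist_eq, hS0, sub_zero, sub_zero] at this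
          calc |S (T x)| ≤ 1 * |T x| := by exact_mod_cast this
            _ ≤ 1 := by rw [one_mul, abs_of_nonneg hTx.1]; exact hTx.2
        calc |g (DT x) - g (T x)| ≤ 1 * |DT x - T x| := by exact_mod_cast this
          _ = δ * |S (T x)| := by rw [one_mul, hd]
          _ ≤ δ * 1 := mul_le_mul_of_nonneg_left hSb hδ
          _ = δ := mul_one _
      rw [abs_mul, mul_comm]
      exact mul_le_mul_of_nonneg_right hgdiff (abs_nonneg _)
    · rw [hfsupp x hx]; simp [mul_nonneg hδ (abs_nonneg _)]
  have hIeq : ∫ x in II, |f x| = ∫ x, |f x| := by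
    apply setIntegral_eq_integral_of_forall_compl_eq_zero
    intro x hx
    rw [hfsupp x hx, abs_zero]
  rw [hIeq]
  have hprod : Integrable (fun x => f x * (g (DT x) - g (T x))) volume := by
    refine Integrable.mono' (hf.abs.const_mul δ)
      (hf.aestronglyMeasurable.mul (hDTae.sub hTae)) ?_
    exact ae_of_all _ fun x => by rw [Real.norm_eq_abs]; exact hbound x
  calc ∫ x, f x * (g (DT x) - g (T x)) ≤ |∫ x, f x * (g (DT x) - g (T x))| := le_abs_self _
    _ ≤ ∫ x, |f x * (g (DT x) - g (T x))| := by
        have := norm_integral_le_integral_norm (μ := volume)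
          (fun x => f x * (g (DT x) - g (T x)))
        simp only [Real.norm_eq_abs] at this
        simpa [abs_mul] using this
    _ ≤ ∫ x, δ * |f x| := integral_mono hprod.abs (hf.abs.const_mul δ)
        (fun x => hbound x)
    _ = δ * ∫ x, |f x| := by rw [integral_const_mul]
end
end

section
/- Derivative operator for noise perturbations: Suppose ρ_ξ ∈ BV([0,1]) and there is a finite signed Borel measure ρ̇ such that ‖(ρ_ξ − ρ₀)/ξ − ρ̇‖_w → 0 as ξ → 0 (where ‖·‖_w is either the L¹ norm or the Wasserstein–Kantorovich norm). Let T be nonsingular and f₀ ∈ L¹([0,1]). Then lim_{ξ→0} ‖ (L_{ξ,T} − L_{0,T})f₀ / ξ − ρ̇ ∗̂ L_T(f₀) ‖_w = 0. -/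
open MeasureTheory Set Filter
open scoped ENNReal NNReal

noncomputable section

/-! ### Auxiliary lemmas -/

namespace NoisePerturbAux

open MeasureTheory

/-- Jordan representation. -/
lemma jordan_rep (m : SignedMeasure ℝ) :
    m = m.toJordanDecomposition.posPart.toSignedMeasure
      - m.toJordanDecomposition.negPart.toSignedMeasure := by
  conv_lhs => rw [← m.toSignedMeasure_toJordanDecomposition]
  rfl

lemma measure_add_eq_of_toSM_sub_eq {P Q P' Q' : Measure ℝ} [IsFiniteMeasure P]
    [IsFiniteMeasure Q] [IsFiniteMeasure P'] [IsFiniteMeasure Q']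
    (h : P.toSignedMeasure - Q.toSignedMeasure = P'.toSignedMeasure - Q'.toSignedMeasure) :
    P + Q' = P' + Q := by
  ext A hA
  have h2 : (P.toSignedMeasure - Q.toSignedMeasure) A
      = (P'.toSignedMeasure - Q'.toSignedMeasure) A := by rw [h]
  rw [Measure.toSignedMeasure_sub_apply hA, Measure.toSignedMeasure_sub_apply hA] at h2
  rw [Measure.add_apply, Measure.add_apply]
  refine (ENNReal.toReal_eq_toReal_iff' ?_ ?_).1 ?_
  · exact ENNReal.add_ne_top.2 ⟨measure_ne_top _ _, measure_ne_top _ _⟩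
  · exact ENNReal.add_ne_top.2 ⟨measure_ne_top _ _, measure_ne_top _ _⟩
  · rw [ENNReal.toReal_add (measure_ne_top _ _) (measure_ne_top _ _),
      ENNReal.toReal_add (measure_ne_top _ _) (measure_ne_top _ _)]
    simp only [measureReal_def] at h2
    linarith

lemma toSM_sub_congr {X₁ X₂ Y₁ Y₂ : Measure ℝ} [IsFiniteMeasure X₁] [IsFiniteMeasure X₂]
    [IsFiniteMeasure Y₁] [IsFiniteMeasure Y₂] (h : X₁ + Y₂ = Y₁ + X₂) :
    X₁.toSignedMeasure - X₂.toSignedMeasure = Y₁.toSignedMeasure - Y₂.toSignedMeasure := by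
  have h' : (X₁ + Y₂).toSignedMeasure = (Y₁ + X₂).toSignedMeasure :=
    Measure.toSignedMeasure_congr h
  rw [Measure.toSignedMeasure_add, Measure.toSignedMeasure_add] at h'
  rw [sub_eq_sub_iff_add_eq_add]
  exact h'

lemma posConv_add_left (μ ν q : Measure ℝ) [SFinite μ] [SFinite ν] [SFinite q] :
    posConv (μ + ν) q = posConv μ q + posConv ν q := by
  unfold posConv
  rw [Measure.add_prod, Measure.map_add _ _ (show Measurable (fun p : ℝ × ℝ => p.1 + p.2) from measurable_fst.add measurable_snd)]

lemma posConv_smul_left (c : ℝ≥0) (μ q : Measure ℝ) [IsFiniteMeasure μ] [IsFiniteMeasure q] :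
    posConv (c • μ) q = c • posConv μ q := by
  unfold posConv
  have hprod : (c • μ).prod q = c • (μ.prod q) := by
    refine Measure.prod_eq (μ := c • μ) (ν := q) fun s t hs ht => ?_
    rw [Measure.smul_apply, Measure.prod_prod, Measure.smul_apply]
    exact (smul_mul_assoc _ _ _).symm
  rw [hprod, Measure.map_smul]

lemma posConv_univ (p q : Measure ℝ) [IsFiniteMeasure p] [IsFiniteMeasure q] :
    posConv p q Set.univ = p Set.univ * q Set.univ := by
  unfold posConv
  rw [Measure.map_apply (show Measurable (fun p : ℝ × ℝ => p.1 + p.2) from measurable_fst.add measurable_snd) MeasurableSet.univ,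
    Set.preimage_univ, ← Set.univ_prod_univ, Measure.prod_prod]

lemma toSM_map (μ : Measure ℝ) [IsFiniteMeasure μ] {f : ℝ → ℝ} (hf : Measurable f) :
    (μ.toSignedMeasure).map f = (μ.map f).toSignedMeasure := by
  ext A hA
  rw [VectorMeasure.map_apply _ hf hA, Measure.toSignedMeasure_apply_measurable (hf hA),
    Measure.toSignedMeasure_apply_measurable hA, map_measureReal_apply hf hA]

lemma sm_map_sub (s t : SignedMeasure ℝ) (f : ℝ → ℝ) :
    (s - t).map f = s.map f - t.map f :=
  map_sub (VectorMeasure.mapGm (M := ℝ) f) s t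

/-- Representation lemma for `mConv`. -/
lemma mConv_rep (a b : SignedMeasure ℝ) (P Q : Measure ℝ) [IsFiniteMeasure P] [IsFiniteMeasure Q]
    (h : a = P.toSignedMeasure - Q.toSignedMeasure) :
    mConv a b = (posConv P b.toJordanDecomposition.posPart
        + posConv Q b.toJordanDecomposition.negPart).toSignedMeasure
      - (posConv P b.toJordanDecomposition.negPart
        + posConv Q b.toJordanDecomposition.posPart).toSignedMeasure := by
  have h1 : a.toJordanDecomposition.posPart + Q = P + a.toJordanDecomposition.negPart :=
    measure_add_eq_of_toSM_sub_eq ((jordan_rep a).symm.trans h)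
  set ap := a.toJordanDecomposition.posPart
  set an := a.toJordanDecomposition.negPart
  set bp := b.toJordanDecomposition.posPart
  set bn := b.toJordanDecomposition.negPart
  show (posConv ap bp + posConv an bn).toSignedMeasure
      - (posConv ap bn + posConv an bp).toSignedMeasure = _
  apply toSM_sub_congr
  have e1 : posConv ap bp + posConv Q bp = posConv P bp + posConv an bp := by
    rw [← posConv_add_left, ← posConv_add_left, h1]
  have e2 : posConv ap bn + posConv Q bn = posConv P bn + posConv an bn := by
    rw [← posConv_add_left, ← posConv_add_left, h1]
  calc posConv ap bp + posConv an bn + (posConv P bn + posConv Q bp)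
      = (posConv ap bp + posConv Q bp) + (posConv an bn + posConv P bn) := by abel
    _ = (posConv P bp + posConv an bp) + (posConv an bn + posConv P bn) := by rw [e1]
    _ = (posConv P bn + posConv an bn) + (posConv P bp + posConv an bp) := by abel
    _ = (posConv ap bn + posConv Q bn) + (posConv P bp + posConv an bp) := by rw [← e2]
    _ = posConv P bp + posConv Q bn + (posConv ap bn + posConv an bp) := by abel

lemma reflMap_le_add (x y : ℝ) : reflMap x ≤ reflMap y + |x - y| := by
  have key : ∀ i : ℤ, reflMap x - |x - y| ≤ |y - 2 * (i : ℝ)| := by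
    intro i
    have h1 : reflMap x ≤ |x - 2 * (i : ℝ)| :=
      ciInf_le ⟨0, by rintro _ ⟨j, rfl⟩; positivity⟩ i
    have h2 : |x - 2 * (i : ℝ)| ≤ |y - 2 * (i : ℝ)| + |x - y| := by
      have : x - 2 * (i : ℝ) = (y - 2 * (i : ℝ)) + (x - y) := by ring
      rw [this]
      exact abs_add_le _ _
    linarith
  have h3 : reflMap x - |x - y| ≤ reflMap y := le_ciInf key
  linarith

lemma lipschitzWith_reflMap : LipschitzWith 1 reflMap := by
  apply LipschitzWith.of_dist_le_mul
  intro x y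
  rw [Real.dist_eq, Real.dist_eq, NNReal.coe_one, one_mul]
  have h1 := reflMap_le_add x y
  have h2 := reflMap_le_add y x
  rw [abs_sub_comm y x] at h2
  exact abs_sub_le_iff.2 ⟨by linarith, by linarith⟩

lemma measurable_reflMap : Measurable reflMap :=
  lipschitzWith_reflMap.continuous.measurable

lemma integrable_of_bounded {g : ℝ → ℝ} {C : ℝ} (hg : Continuous g) (hb : ∀ x, |g x| ≤ C)
    (μ : Measure ℝ) [IsFiniteMeasure μ] : Integrable g μ :=
  (integrable_const C).mono' hg.aestronglyMeasurable
    (Filter.Eventually.of_forall fun x => by simpa [Real.norm_eq_abs] using hb x)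

lemma integrable_of_bounded_prod {g : ℝ × ℝ → ℝ} {C : ℝ} (hg : Continuous g)
    (hb : ∀ x, |g x| ≤ C) (μ : Measure (ℝ × ℝ)) [IsFiniteMeasure μ] : Integrable g μ :=
  (integrable_const C).mono' hg.aestronglyMeasurable
    (Filter.Eventually.of_forall fun x => by simpa [Real.norm_eq_abs] using hb x)

/-- Transfer of the pairing along a representation `ν = P - Q`. -/
lemma pair_eq {ν : SignedMeasure ℝ} {P Q : Measure ℝ} [IsFiniteMeasure P] [IsFiniteMeasure Q]
    (h : ν = P.toSignedMeasure - Q.toSignedMeasure) {g : ℝ → ℝ} {C : ℝ}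
    (hgc : Continuous g) (hb : ∀ x, |g x| ≤ C) :
    (∫ x, g x ∂ν.toJordanDecomposition.posPart)
      - ∫ x, g x ∂ν.toJordanDecomposition.negPart
    = (∫ x, g x ∂P) - ∫ x, g x ∂Q := by
  have h1 : ν.toJordanDecomposition.posPart + Q = P + ν.toJordanDecomposition.negPart :=
    measure_add_eq_of_toSM_sub_eq ((jordan_rep ν).symm.trans h)
  have h2 : ∫ x, g x ∂(ν.toJordanDecomposition.posPart + Q)
      = ∫ x, g x ∂(P + ν.toJordanDecomposition.negPart) := by rw [h1]
  rw [integral_add_measure (integrable_of_bounded hgc hb _) (integrable_of_bounded hgc hb _),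
    integral_add_measure (integrable_of_bounded hgc hb _) (integrable_of_bounded hgc hb _)] at h2
  linarith

/-- Representation of `reflConvM` as a difference of explicit pushforward measures. -/
lemma reflConvM_rep (m b : SignedMeasure ℝ) :
    reflConvM m b =
      ((posConv m.toJordanDecomposition.posPart b.toJordanDecomposition.posPart
        + posConv m.toJordanDecomposition.negPart b.toJordanDecomposition.negPart).map
          reflMap).toSignedMeasure
      - ((posConv m.toJordanDecomposition.posPart b.toJordanDecomposition.negPart
        + posConv m.toJordanDecomposition.negPart b.toJordanDecomposition.posPart).map
          reflMap).toSignedMeasure := by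
  show (mConv m b).map reflMap = _
  rw [show mConv m b = _ - _ from rfl, sm_map_sub, toSM_map _ measurable_reflMap,
    toSM_map _ measurable_reflMap]

lemma integral_posConv (p q : Measure ℝ) [IsFiniteMeasure p] [IsFiniteMeasure q]
    {h : ℝ → ℝ} {C : ℝ} (hc : Continuous h) (hb : ∀ x, |h x| ≤ C) :
    ∫ z, h z ∂(posConv p q) = ∫ y, (∫ x, h (x + y) ∂p) ∂q := by
  unfold posConv
  rw [MeasureTheory.integral_map (show Measurable (fun p : ℝ × ℝ => p.1 + p.2) from measurable_fst.add measurable_snd).aemeasurable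
    hc.aestronglyMeasurable]
  have hint : Integrable (fun z : ℝ × ℝ => h (z.1 + z.2)) (p.prod q) :=
    integrable_of_bounded_prod (hc.comp (continuous_fst.add continuous_snd))
      (fun z => hb _) _
  rw [MeasureTheory.integral_prod _ hint]
  exact MeasureTheory.integral_integral_swap (f := fun x y => h (x + y)) hint

lemma lipschitz_comp_reflMap_add {g : ℝ → ℝ} (hg : LipschitzWith 1 g) (y : ℝ) :
    LipschitzWith 1 (fun x => g (reflMap (x + y))) := by
  have h1 : LipschitzWith 1 (fun x : ℝ => x + y) :=
    LipschitzWith.of_dist_le_mul fun a b => by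
      simp [Real.dist_eq, NNReal.coe_one]
  have := (hg.comp lipschitzWith_reflMap).comp h1
  rw [one_mul, one_mul] at this
  exact this

lemma tvNorm_eq (b : SignedMeasure ℝ) :
    tvNorm b = (b.toJordanDecomposition.posPart Set.univ).toReal
      + (b.toJordanDecomposition.negPart Set.univ).toReal := by
  unfold tvNorm SignedMeasure.totalVariation
  rw [Measure.add_apply, ENNReal.toReal_add (measure_ne_top _ _) (measure_ne_top _ _)]

lemma tvNorm_nonneg (m : SignedMeasure ℝ) : 0 ≤ tvNorm m := ENNReal.toReal_nonneg

lemma tvNorm_reflConv_le (m b : SignedMeasure ℝ) :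
    tvNorm (reflConvM m b) ≤ tvNorm m * tvNorm b := by
  set mp := m.toJordanDecomposition.posPart
  set mn := m.toJordanDecomposition.negPart
  set bp := b.toJordanDecomposition.posPart
  set bn := b.toJordanDecomposition.negPart
  set ν := reflConvM m b with hν
  set B₁ := ((posConv mp bp + posConv mn bn).map reflMap) with hB₁
  set B₂ := ((posConv mp bn + posConv mn bp).map reflMap) with hB₂
  haveI : IsFiniteMeasure B₁ := Measure.isFiniteMeasure_map _ _
  haveI : IsFiniteMeasure B₂ := Measure.isFiniteMeasure_map _ _
  have hrep : ν = B₁.toSignedMeasure - B₂.toSignedMeasure := reflConvM_rep m b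
  have h1 : ν.toJordanDecomposition.posPart + B₂ = B₁ + ν.toJordanDecomposition.negPart :=
    measure_add_eq_of_toSM_sub_eq ((jordan_rep ν).symm.trans hrep)
  set νp := ν.toJordanDecomposition.posPart
  set νn := ν.toJordanDecomposition.negPart
  obtain ⟨S, hS, hpS, hnS⟩ := ν.toJordanDecomposition.mutuallySingular
  have eSc : νp Sᶜ + B₂ Sᶜ = B₁ Sᶜ + νn Sᶜ := by
    have := congrArg (fun μ : Measure ℝ => μ Sᶜ) h1
    simpa [Measure.add_apply] using this
  have eS : νp S + B₂ S = B₁ S + νn S := by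
    have := congrArg (fun μ : Measure ℝ => μ S) h1
    simpa [Measure.add_apply] using this
  have hup : νp Set.univ ≤ B₁ Set.univ := by
    have h2 : νp Set.univ = νp Sᶜ := by
      rw [← measure_add_measure_compl hS, hpS, zero_add]
    rw [h2]
    calc νp Sᶜ ≤ νp Sᶜ + B₂ Sᶜ := le_self_add
      _ = B₁ Sᶜ + νn Sᶜ := eSc
      _ = B₁ Sᶜ := by rw [hnS, add_zero]
      _ ≤ B₁ Set.univ := measure_mono (Set.subset_univ _)
  have hun : νn Set.univ ≤ B₂ Set.univ := by
    have h2 : νn Set.univ = νn S := by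
      rw [← measure_add_measure_compl hS, hnS, add_zero]
    rw [h2]
    calc νn S ≤ B₁ S + νn S := le_add_self
      _ = νp S + B₂ S := eS.symm
      _ = B₂ S := by rw [hpS, zero_add]
      _ ≤ B₂ Set.univ := measure_mono (Set.subset_univ _)
  have hB₁u : B₁ Set.univ = mp Set.univ * bp Set.univ + mn Set.univ * bn Set.univ := by
    rw [hB₁, Measure.map_apply measurable_reflMap MeasurableSet.univ, Set.preimage_univ,
      Measure.add_apply, posConv_univ, posConv_univ]
  have hB₂u : B₂ Set.univ = mp Set.univ * bn Set.univ + mn Set.univ * bp Set.univ := by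
    rw [hB₂, Measure.map_apply measurable_reflMap MeasurableSet.univ, Set.preimage_univ,
      Measure.add_apply, posConv_univ, posConv_univ]
  have key : tvNorm ν ≤ (B₁ Set.univ).toReal + (B₂ Set.univ).toReal := by
    rw [tvNorm_eq]
    gcongr
    · exact measure_ne_top _ _
    · exact measure_ne_top _ _
  refine key.trans (le_of_eq ?_)
  rw [hB₁u, hB₂u, tvNorm_eq m, tvNorm_eq b,
    ENNReal.toReal_add (by finiteness) (by finiteness),
    ENNReal.toReal_add (by finiteness) (by finiteness),
    ENNReal.toReal_mul, ENNReal.toReal_mul, ENNReal.toReal_mul, ENNReal.toReal_mul]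
  ring

/-- The index type for the `Wnorm` supremum. -/
abbrev Gty := {g : ℝ → ℝ // (∀ x, |g x| ≤ 1) ∧ LipschitzWith 1 g}

def gzero : Gty :=
  ⟨fun _ => 0, fun _ => by simp, (LipschitzWith.const 0).weaken zero_le_one⟩

instance : Nonempty Gty := ⟨gzero⟩

lemma pair_le_bound (m : SignedMeasure ℝ) (g : Gty) :
    (∫ x, g.1 x ∂m.toJordanDecomposition.posPart)
      - ∫ x, g.1 x ∂m.toJordanDecomposition.negPart
    ≤ (m.toJordanDecomposition.posPart Set.univ).toReal
      + (m.toJordanDecomposition.negPart Set.univ).toReal := by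
  obtain ⟨g, hb, hl⟩ := g
  have h1 : ∫ x, g x ∂m.toJordanDecomposition.posPart
      ≤ (m.toJordanDecomposition.posPart Set.univ).toReal := by
    calc ∫ x, g x ∂m.toJordanDecomposition.posPart
        ≤ ∫ _x, (1 : ℝ) ∂m.toJordanDecomposition.posPart :=
          integral_mono (integrable_of_bounded hl.continuous hb _) (integrable_const 1)
            (fun x => (abs_le.1 (hb x)).2)
      _ = (m.toJordanDecomposition.posPart Set.univ).toReal := by simp [integral_const, measureReal_def]
  have h2 : -∫ x, g x ∂m.toJordanDecomposition.negPart
      ≤ (m.toJordanDecomposition.negPart Set.univ).toReal := by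
    rw [← integral_neg]
    calc ∫ x, -g x ∂m.toJordanDecomposition.negPart
        ≤ ∫ _x, (1 : ℝ) ∂m.toJordanDecomposition.negPart :=
          integral_mono ((integrable_of_bounded hl.continuous hb _).neg) (integrable_const 1)
            (fun x => by linarith [(abs_le.1 (hb x)).1])
      _ = (m.toJordanDecomposition.negPart Set.univ).toReal := by simp [integral_const, measureReal_def]
  linarith

lemma Wnorm_bddAbove (m : SignedMeasure ℝ) :
    BddAbove (Set.range fun g : Gty =>
      (∫ x, g.1 x ∂m.toJordanDecomposition.posPart)
        - ∫ x, g.1 x ∂m.toJordanDecomposition.negPart) := by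
  refine ⟨(m.toJordanDecomposition.posPart Set.univ).toReal
    + (m.toJordanDecomposition.negPart Set.univ).toReal, ?_⟩
  rintro _ ⟨g, rfl⟩
  exact pair_le_bound m g

lemma le_Wnorm (m : SignedMeasure ℝ) (g : Gty) :
    (∫ x, g.1 x ∂m.toJordanDecomposition.posPart)
      - ∫ x, g.1 x ∂m.toJordanDecomposition.negPart ≤ Wnorm m :=
  le_ciSup (Wnorm_bddAbove m) g

lemma Wnorm_nonneg (m : SignedMeasure ℝ) : 0 ≤ Wnorm m := by
  have := le_Wnorm m gzero
  simpa [gzero] using this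

lemma param_integral_lipschitz (p : Measure ℝ) [IsFiniteMeasure p] {g : ℝ → ℝ}
    (hgl : LipschitzWith 1 g) (hb : ∀ x, |g x| ≤ 1) :
    LipschitzWith (p Set.univ).toReal.toNNReal (fun y => ∫ x, g (reflMap (x + y)) ∂p) := by
  have hint : ∀ y : ℝ, Integrable (fun x => g (reflMap (x + y))) p := fun y =>
    integrable_of_bounded (lipschitz_comp_reflMap_add hgl y).continuous (fun x => hb _) p
  apply LipschitzWith.of_dist_le_mul
  intro y y'
  rw [Real.dist_eq, Real.dist_eq, Real.coe_toNNReal _ ENNReal.toReal_nonneg]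
  rw [← integral_sub (hint y) (hint y')]
  have hptw : ∀ x : ℝ, |g (reflMap (x + y)) - g (reflMap (x + y'))| ≤ |y - y'| := by
    intro x
    have h1 := hgl.dist_le_mul (reflMap (x + y)) (reflMap (x + y'))
    have h2 := lipschitzWith_reflMap.dist_le_mul (x + y) (x + y')
    rw [Real.dist_eq, Real.dist_eq, NNReal.coe_one, one_mul] at h1 h2
    have h3 : x + y - (x + y') = y - y' := by ring
    rw [h3] at h2
    linarith
  calc |∫ x, (g (reflMap (x + y)) - g (reflMap (x + y'))) ∂p|
      ≤ ∫ x, |g (reflMap (x + y)) - g (reflMap (x + y'))| ∂p := by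
        simpa [Real.norm_eq_abs] using
          norm_integral_le_integral_norm (fun x => g (reflMap (x + y)) - g (reflMap (x + y')))
            (μ := p)
    _ ≤ ∫ _x, |y - y'| ∂p :=
        integral_mono ((hint y).sub (hint y')).abs (integrable_const _) hptw
    _ = (p Set.univ).toReal * |y - y'| := by simp [integral_const, smul_eq_mul, measureReal_def]

lemma param_integral_bound (p : Measure ℝ) [IsFiniteMeasure p] {g : ℝ → ℝ}
    (hgl : LipschitzWith 1 g) (hb : ∀ x, |g x| ≤ 1) (y : ℝ) :
    |∫ x, g (reflMap (x + y)) ∂p| ≤ (p Set.univ).toReal := by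
  have h := norm_integral_le_integral_norm (fun x => g (reflMap (x + y))) (μ := p)
  rw [Real.norm_eq_abs] at h
  refine h.trans ?_
  calc ∫ x, ‖g (reflMap (x + y))‖ ∂p
      ≤ ∫ _x, (1 : ℝ) ∂p := by
        refine integral_mono ?_ (integrable_const 1) (fun x => by
          simpa [Real.norm_eq_abs] using hb (reflMap (x + y)))
        exact (integrable_of_bounded (lipschitz_comp_reflMap_add hgl y).continuous
          (fun x => hb _) p).abs.congr (Filter.Eventually.of_forall fun x => by
            simp [Real.norm_eq_abs])
    _ = (p Set.univ).toReal := by simp [integral_const, measureReal_def]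

lemma Wnorm_reflConv_le (m b : SignedMeasure ℝ) :
    Wnorm (reflConvM m b) ≤ Wnorm m * tvNorm b := by
  set mp := m.toJordanDecomposition.posPart
  set mn := m.toJordanDecomposition.negPart
  set bp := b.toJordanDecomposition.posPart
  set bn := b.toJordanDecomposition.negPart
  haveI : IsFiniteMeasure ((posConv mp bp + posConv mn bn).map reflMap) :=
    Measure.isFiniteMeasure_map _ _
  haveI : IsFiniteMeasure ((posConv mp bn + posConv mn bp).map reflMap) :=
    Measure.isFiniteMeasure_map _ _
  apply ciSup_le
  rintro ⟨g, hgb, hgl⟩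
  have hgc : Continuous g := hgl.continuous
  have hrc : Continuous fun z : ℝ => g (reflMap z) :=
    hgc.comp lipschitzWith_reflMap.continuous
  have hrb : ∀ z : ℝ, |g (reflMap z)| ≤ 1 := fun z => hgb _
  rw [pair_eq (reflConvM_rep m b) hgc hgb]
  rw [MeasureTheory.integral_map measurable_reflMap.aemeasurable hgc.aestronglyMeasurable,
    MeasureTheory.integral_map measurable_reflMap.aemeasurable hgc.aestronglyMeasurable,
    integral_add_measure (integrable_of_bounded hrc hrb _) (integrable_of_bounded hrc hrb _),
    integral_add_measure (integrable_of_bounded hrc hrb _) (integrable_of_bounded hrc hrb _),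
    integral_posConv _ _ hrc hrb, integral_posConv _ _ hrc hrb,
    integral_posConv _ _ hrc hrb, integral_posConv _ _ hrc hrb]
  set F : Measure ℝ → ℝ → ℝ := fun p y => ∫ x, g (reflMap (x + y)) ∂p with hF
  have hFint : ∀ (p q : Measure ℝ), IsFiniteMeasure p → IsFiniteMeasure q →
      Integrable (F p) q := by
    intro p q hp hq
    exact integrable_of_bounded (param_integral_lipschitz p hgl hgb).continuous
      (fun y => param_integral_bound p hgl hgb y) q
  set inner : ℝ → ℝ := fun y => F mp y - F mn y with hinner
  have hinnerInt : ∀ (q : Measure ℝ), IsFiniteMeasure q → Integrable inner q := fun q hq =>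
    (hFint mp q inferInstance hq).sub (hFint mn q inferInstance hq)
  have inner_le : ∀ y, inner y ≤ Wnorm m := by
    intro y
    exact le_Wnorm m ⟨fun x => g (reflMap (x + y)), fun x => hgb _,
      lipschitz_comp_reflMap_add hgl y⟩
  have neg_inner_le : ∀ y, -inner y ≤ Wnorm m := by
    intro y
    have hb' : ∀ x : ℝ, |(-g (reflMap (x + y)) : ℝ)| ≤ 1 := fun x => by
      simpa [abs_neg] using hgb (reflMap (x + y))
    have hl' : LipschitzWith 1 fun x : ℝ => -g (reflMap (x + y)) :=
      (lipschitz_comp_reflMap_add hgl y).neg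
    have h' : (∫ x, -g (reflMap (x + y)) ∂mp) - ∫ x, -g (reflMap (x + y)) ∂mn ≤ Wnorm m :=
      le_Wnorm m ⟨fun x => -g (reflMap (x + y)), hb', hl'⟩
    rw [integral_neg, integral_neg] at h'
    simp only [hinner, hF]
    linarith
  have h1 : ∫ y, inner y ∂bp ≤ Wnorm m * (bp Set.univ).toReal := by
    calc ∫ y, inner y ∂bp ≤ ∫ _y, Wnorm m ∂bp :=
        integral_mono (hinnerInt bp inferInstance) (integrable_const _) inner_le
      _ = (bp Set.univ).toReal * Wnorm m := by simp [integral_const, smul_eq_mul, measureReal_def]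
      _ = Wnorm m * (bp Set.univ).toReal := mul_comm _ _
  have h2 : -∫ y, inner y ∂bn ≤ Wnorm m * (bn Set.univ).toReal := by
    rw [← integral_neg]
    calc ∫ y, -inner y ∂bn ≤ ∫ _y, Wnorm m ∂bn :=
        integral_mono (hinnerInt bn inferInstance).neg (integrable_const _) neg_inner_le
      _ = (bn Set.univ).toReal * Wnorm m := by simp [integral_const, smul_eq_mul, measureReal_def]
      _ = Wnorm m * (bn Set.univ).toReal := mul_comm _ _
  have hsplit_p : ∫ y, inner y ∂bp = ∫ y, F mp y ∂bp - ∫ y, F mn y ∂bp :=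
    integral_sub (hFint mp bp inferInstance inferInstance) (hFint mn bp inferInstance inferInstance)
  have hsplit_n : ∫ y, inner y ∂bn = ∫ y, F mp y ∂bn - ∫ y, F mn y ∂bn :=
    integral_sub (hFint mp bn inferInstance inferInstance) (hFint mn bn inferInstance inferInstance)
  have hfin : Wnorm m * (bp Set.univ).toReal + Wnorm m * (bn Set.univ).toReal
      = Wnorm m * tvNorm b := by rw [tvNorm_eq b]; ring
  have := add_le_add h1 h2
  rw [hsplit_p, hsplit_n] at this
  linarith [this, hfin.le]

lemma mConv_sub_left (a a' b : SignedMeasure ℝ) :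
    mConv (a - a') b = mConv a b - mConv a' b := by
  have h : a - a' = (a.toJordanDecomposition.posPart
        + a'.toJordanDecomposition.negPart).toSignedMeasure
      - (a.toJordanDecomposition.negPart + a'.toJordanDecomposition.posPart).toSignedMeasure := by
    rw [Measure.toSignedMeasure_add, Measure.toSignedMeasure_add]
    nth_rewrite 1 [jordan_rep a]
    nth_rewrite 1 [jordan_rep a']
    abel
  rw [mConv_rep _ b _ _ h]
  have expand : mConv a b - mConv a' b =
      ((posConv a.toJordanDecomposition.posPart b.toJordanDecomposition.posPart
        + posConv a.toJordanDecomposition.negPart b.toJordanDecomposition.negPart).toSignedMeasure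
      - (posConv a.toJordanDecomposition.posPart b.toJordanDecomposition.negPart
        + posConv a.toJordanDecomposition.negPart b.toJordanDecomposition.posPart).toSignedMeasure)
      - ((posConv a'.toJordanDecomposition.posPart b.toJordanDecomposition.posPart
        + posConv a'.toJordanDecomposition.negPart b.toJordanDecomposition.negPart).toSignedMeasure
      - (posConv a'.toJordanDecomposition.posPart b.toJordanDecomposition.negPart
        + posConv a'.toJordanDecomposition.negPart b.toJordanDecomposition.posPart).toSignedMeasure) := rfl
  rw [expand]
  simp only [posConv_add_left, Measure.toSignedMeasure_add]
  abel

lemma real_smul_sm (c : ℝ) (hc : 0 ≤ c) (μ : Measure ℝ) [IsFiniteMeasure μ] :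
    (c.toNNReal • μ).toSignedMeasure = c • μ.toSignedMeasure := by
  rw [Measure.toSignedMeasure_smul]
  ext A hA
  rw [VectorMeasure.smul_apply, VectorMeasure.smul_apply]
  simp [NNReal.smul_def, Real.coe_toNNReal c hc]

lemma mConv_smul_left (c : ℝ) (hc : 0 ≤ c) (a b : SignedMeasure ℝ) :
    mConv (c • a) b = c • mConv a b := by
  have hp : (c • a).toJordanDecomposition.posPart
      = c.toNNReal • a.toJordanDecomposition.posPart := by
    rw [SignedMeasure.toJordanDecomposition_smul_real,
      JordanDecomposition.real_smul_posPart_nonneg _ _ hc]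
  have hn : (c • a).toJordanDecomposition.negPart
      = c.toNNReal • a.toJordanDecomposition.negPart := by
    rw [SignedMeasure.toJordanDecomposition_smul_real,
      JordanDecomposition.real_smul_negPart_nonneg _ _ hc]
  show (posConv (c • a).toJordanDecomposition.posPart b.toJordanDecomposition.posPart
      + posConv (c • a).toJordanDecomposition.negPart b.toJordanDecomposition.negPart).toSignedMeasure
    - (posConv (c • a).toJordanDecomposition.posPart b.toJordanDecomposition.negPart
      + posConv (c • a).toJordanDecomposition.negPart b.toJordanDecomposition.posPart).toSignedMeasure
    = c • mConv a b
  simp only [hp, hn, posConv_smul_left, ← smul_add]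
  rw [real_smul_sm c hc, real_smul_sm c hc]
  exact (smul_sub c _ _).symm

lemma reflConvM_sub_left (a a' b : SignedMeasure ℝ) :
    reflConvM (a - a') b = reflConvM a b - reflConvM a' b := by
  unfold reflConvM
  rw [mConv_sub_left, sm_map_sub]

lemma reflConvM_smul_left (c : ℝ) (hc : 0 ≤ c) (a b : SignedMeasure ℝ) :
    reflConvM (c • a) b = c • reflConvM a b := by
  unfold reflConvM
  rw [mConv_smul_left c hc, VectorMeasure.map_smul]

end NoisePerturbAux


/-- derivative operator for noise perturbations: if `(ρ_ξ − ρ₀)/ξ → ρ̇` in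
the weak norm (`L¹` or Wasserstein–Kantorovich), then
`(L_{ξ,T} − L_{0,T})f₀/ξ → ρ̇ ∗̂ L_T f₀` in the same norm. -/
theorem noise_perturbation_derivative
    (N : MeasureTheory.SignedMeasure ℝ → ℝ) (hN : N = tvNorm ∨ N = Wnorm)
    (ρ : ℝ → ℝ → ℝ) (hρ : ∀ ξ : ℝ, 0 ≤ ξ → IsBVKernel (ρ ξ))
    (ρdot : MeasureTheory.SignedMeasure ℝ)
    (hdot : Filter.Tendsto
      (fun ξ : ℝ => N (ξ⁻¹ • (densSM (ρ ξ) - densSM (ρ 0)) - ρdot))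
      (nhdsWithin 0 (Set.Ioi 0)) (nhds 0))
    (T : ℝ → ℝ) (hT : Nonsingular T)
    (f₀ : ℝ → ℝ) (hf₀ : MeasureTheory.Integrable f₀ MeasureTheory.volume)
    (hf₀supp : ∀ x, x ∉ II → f₀ x = 0) :
    Filter.Tendsto
      (fun ξ : ℝ => N (ξ⁻¹ • (annealedM (ρ ξ) T (densSM f₀) - annealedM (ρ 0) T (densSM f₀))
        - reflConvM ρdot ((densSM f₀).map T)))
      (nhdsWithin 0 (Set.Ioi 0)) (nhds 0) := by
  classical
  set B : MeasureTheory.SignedMeasure ℝ := (densSM f₀).map T with hB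
  have hbound : ∀ s : MeasureTheory.SignedMeasure ℝ, N (reflConvM s B) ≤ N s * tvNorm B := by
    rcases hN with h | h <;> subst h
    · exact fun s => NoisePerturbAux.tvNorm_reflConv_le s B
    · exact fun s => NoisePerturbAux.Wnorm_reflConv_le s B
  have hnn : ∀ s : MeasureTheory.SignedMeasure ℝ, 0 ≤ N s := by
    rcases hN with h | h <;> subst h
    · exact NoisePerturbAux.tvNorm_nonneg
    · exact NoisePerturbAux.Wnorm_nonneg
  have hg0 : Filter.Tendsto
      (fun ξ : ℝ => N (ξ⁻¹ • (densSM (ρ ξ) - densSM (ρ 0)) - ρdot) * tvNorm B)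
      (nhdsWithin 0 (Set.Ioi 0)) (nhds 0) := by
    have := hdot.mul_const (tvNorm B)
    rwa [zero_mul] at this
  apply squeeze_zero' ?_ ?_ hg0
  · filter_upwards [self_mem_nhdsWithin] with ξ hξ using hnn _
  · filter_upwards [self_mem_nhdsWithin] with ξ hξ
    have hξ0 : (0:ℝ) < ξ := hξ
    have h1 : annealedM (ρ ξ) T (densSM f₀) - annealedM (ρ 0) T (densSM f₀)
        = reflConvM (densSM (ρ ξ) - densSM (ρ 0)) B :=
      (NoisePerturbAux.reflConvM_sub_left _ _ _).symm
    have heq : ξ⁻¹ • (annealedM (ρ ξ) T (densSM f₀) - annealedM (ρ 0) T (densSM f₀))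
        - reflConvM ρdot B
        = reflConvM (ξ⁻¹ • (densSM (ρ ξ) - densSM (ρ 0)) - ρdot) B := by
      rw [h1, ← NoisePerturbAux.reflConvM_smul_left _ (inv_nonneg.2 hξ0.le),
        ← NoisePerturbAux.reflConvM_sub_left]
    rw [heq]
    exact hbound _
end
end

section
/- Derivative of the uniform noise kernel with respect to noise radius: Let ρ_ξ = (a+ξ)^{-1} 1_{[−(a+ξ)/2, (a+ξ)/2]} for a > 0. Then in the Wasserstein–Kantorovich norm, lim_{ξ→0} ‖ (ρ_ξ − ρ₀)/ξ − ρ̇ ‖_W = 0 where ρ̇ = −a^{-2} 1_{[−a/2, a/2]} + (a^{-1}/2) δ_{−a/2} + (a^{-1}/2) δ_{a/2}, with δ_x the Dirac measure at x. -/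
open MeasureTheory Set Filter
open scoped ENNReal NNReal

noncomputable section

section AuxProof

open MeasureTheory

/-- Bounded continuous functions are integrable against finite measures. -/
lemma integrable_of_bdd {μ : Measure ℝ} [IsFiniteMeasure μ] {g : ℝ → ℝ}
    (hc : Continuous g) (hb : ∀ x, |g x| ≤ 1) : Integrable g μ :=
  ⟨hc.aestronglyMeasurable,
    HasFiniteIntegral.of_bounded (C := 1) (Filter.Eventually.of_forall fun x => by
      simpa [Real.norm_eq_abs] using hb x)⟩

/-- Integration of a bounded continuous function against the Jordan decomposition of
`μ.toSignedMeasure - ν.toSignedMeasure`. -/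
lemma jordan_integral_eq {μ ν : Measure ℝ} [IsFiniteMeasure μ] [IsFiniteMeasure ν]
    {m : SignedMeasure ℝ} (hm : m = μ.toSignedMeasure - ν.toSignedMeasure)
    {g : ℝ → ℝ} (hc : Continuous g) (hb : ∀ x, |g x| ≤ 1) :
    ∫ x, g x ∂m.toJordanDecomposition.posPart - ∫ x, g x ∂m.toJordanDecomposition.negPart
      = ∫ x, g x ∂μ - ∫ x, g x ∂ν := by
  set p := m.toJordanDecomposition.posPart with hp
  set n := m.toJordanDecomposition.negPart with hn
  have h1 : p.toSignedMeasure - n.toSignedMeasure = μ.toSignedMeasure - ν.toSignedMeasure := by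
    rw [← hm]
    exact m.toSignedMeasure_toJordanDecomposition
  have h2 : μ + n = p + ν := by
    have h3 : (μ + n).toSignedMeasure = (p + ν).toSignedMeasure := by
      rw [Measure.toSignedMeasure_add, Measure.toSignedMeasure_add]
      exact ((sub_eq_sub_iff_add_eq_add).mp h1).symm
    ext s hs
    have := congrArg (fun v => v s) h3
    simp only [Measure.toSignedMeasure_apply_measurable hs] at this
    have h4 := ENNReal.toReal_eq_toReal_iff' (measure_ne_top _ s) (measure_ne_top _ s) |>.mp this
    exact h4
  have key : ∫ x, g x ∂(μ + n) = ∫ x, g x ∂(p + ν) := by rw [h2]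
  rw [integral_add_measure (integrable_of_bdd hc hb) (integrable_of_bdd hc hb),
    integral_add_measure (integrable_of_bdd hc hb) (integrable_of_bdd hc hb)] at key
  linarith

/-- Scalar multiplication of `toSignedMeasure` by a nonnegative real. -/
lemma smul_toSignedMeasure (c : ℝ) (hc : 0 ≤ c) (μ : Measure ℝ) [IsFiniteMeasure μ] :
    c • μ.toSignedMeasure = (c.toNNReal • μ).toSignedMeasure := by
  refine VectorMeasure.ext fun s hs => ?_
  rw [VectorMeasure.smul_apply, Measure.toSignedMeasure_apply_measurable hs,
    Measure.toSignedMeasure_apply_measurable hs, measureReal_def, measureReal_def, Measure.smul_apply, ENNReal.toReal_smul,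
    NNReal.smul_def, Real.coe_toNNReal _ hc, smul_eq_mul]

end AuxProof


section MainAux

open MeasureTheory

/-- The signed measure appearing in the statement. -/
def noiseDiff (a ξ : ℝ) : MeasureTheory.SignedMeasure ℝ :=
  ξ⁻¹ •
      (densSM (Set.indicator (Set.Icc (-(a+ξ)/2) ((a+ξ)/2)) (fun _ => (a+ξ)⁻¹)) -
       densSM (Set.indicator (Set.Icc (-a/2) (a/2)) (fun _ => a⁻¹))) -
    (densSM (Set.indicator (Set.Icc (-a/2) (a/2)) (fun _ => -(a^2)⁻¹)) +
      (a⁻¹/2) • (MeasureTheory.Measure.dirac (-a/2)).toSignedMeasure +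
      (a⁻¹/2) • (MeasureTheory.Measure.dirac (a/2)).toSignedMeasure)

/-- The density of the positive part. -/
def hfun (a ξ : ℝ) (x : ℝ) : ℝ :=
  Set.indicator (Set.Icc (-(a+ξ)/2) ((a+ξ)/2)) (fun _ => ξ⁻¹*(a+ξ)⁻¹) x -
    Set.indicator (Set.Icc (-a/2) (a/2)) (fun _ => ξ⁻¹*a⁻¹ - (a^2)⁻¹) x

lemma integrable_indicator_const (l r c : ℝ) :
    Integrable (Set.indicator (Set.Icc l r) (fun _ => c)) volume := by
  rw [integrable_indicator_iff measurableSet_Icc]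
  exact integrableOn_const measure_Icc_lt_top.ne

lemma hfun_integrable (a ξ : ℝ) : Integrable (hfun a ξ) volume :=
  (integrable_indicator_const _ _ _).sub (integrable_indicator_const _ _ _)

lemma hfun_measurable (a ξ : ℝ) : Measurable (hfun a ξ) :=
  ((measurable_const.indicator measurableSet_Icc).sub
    (measurable_const.indicator measurableSet_Icc))

lemma hfun_nonneg (a ξ : ℝ) (ha : 0 < a) (hξ : 0 < ξ) (x : ℝ) : 0 ≤ hfun a ξ x := by
  have ha' : (0:ℝ) < a + ξ := by linarith
  have hsub : Set.Icc (-a/2) (a/2) ⊆ Set.Icc (-(a+ξ)/2) ((a+ξ)/2) :=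
    Set.Icc_subset_Icc (by linarith) (by linarith)
  have hc12 : ξ⁻¹*(a+ξ)⁻¹ - (ξ⁻¹*a⁻¹ - (a^2)⁻¹) = ξ / (a^2 * (a+ξ)) := by
    field_simp
    ring
  unfold hfun
  by_cases hx : x ∈ Set.Icc (-a/2) (a/2)
  · rw [Set.indicator_of_mem hx, Set.indicator_of_mem (hsub hx)]
    rw [hc12]
    positivity
  · rw [Set.indicator_of_notMem hx, sub_zero]
    exact Set.indicator_nonneg (fun _ _ => by positivity) x

/-- The positive-part measure. -/
def muA (a ξ : ℝ) : Measure ℝ := volume.withDensity fun x => ENNReal.ofReal (hfun a ξ x)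

instance (a ξ : ℝ) : IsFiniteMeasure (muA a ξ) :=
  isFiniteMeasure_withDensity_ofReal (hfun_integrable a ξ).2

/-- The negative-part measure (the Dirac part). -/
def muB (a : ℝ) : Measure ℝ :=
  (a⁻¹/2).toNNReal • MeasureTheory.Measure.dirac (-a/2) +
    (a⁻¹/2).toNNReal • MeasureTheory.Measure.dirac (a/2)

instance (a : ℝ) : IsFiniteMeasure (muB a) := by unfold muB; infer_instance

lemma noiseDiff_repr (a ξ : ℝ) (ha : 0 < a) (hξ : 0 < ξ) :
    noiseDiff a ξ = (muA a ξ).toSignedMeasure - (muB a).toSignedMeasure := by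
  have ha' : (0:ℝ) < a + ξ := by linarith
  have hsub : Set.Icc (-a/2) (a/2) ⊆ Set.Icc (-(a+ξ)/2) ((a+ξ)/2) :=
    Set.Icc_subset_Icc (by linarith) (by linarith)
  have hdA : densSM (hfun a ξ) = (muA a ξ).toSignedMeasure := by
    refine MeasureTheory.VectorMeasure.ext fun s hs => ?_
    rw [densSM, withDensityᵥ_apply (hfun_integrable a ξ) hs,
      Measure.toSignedMeasure_apply_measurable hs, muA, measureReal_def, withDensity_apply _ hs,
      ← integral_eq_lintegral_of_nonneg_ae
        (Filter.Eventually.of_forall (hfun_nonneg a ξ ha hξ))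
        (hfun_measurable a ξ).aestronglyMeasurable.restrict]
  have hfuneq :
      (ξ⁻¹ • ((Set.indicator (Set.Icc (-(a+ξ)/2) ((a+ξ)/2)) (fun _ => (a+ξ)⁻¹)) -
          (Set.indicator (Set.Icc (-a/2) (a/2)) (fun _ => a⁻¹))) -
        (Set.indicator (Set.Icc (-a/2) (a/2)) (fun _ => -(a^2)⁻¹))) = hfun a ξ := by
    funext x
    simp only [Pi.sub_apply, Pi.smul_apply, smul_eq_mul]
    unfold hfun
    by_cases hx : x ∈ Set.Icc (-a/2) (a/2)
    · simp only [Set.indicator_of_mem hx, Set.indicator_of_mem (hsub hx)]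
      ring
    · by_cases hx2 : x ∈ Set.Icc (-(a+ξ)/2) ((a+ξ)/2)
      · simp only [Set.indicator_of_mem hx2, Set.indicator_of_notMem hx]
        ring
      · simp only [Set.indicator_of_notMem hx, Set.indicator_of_notMem hx2]
        ring
  have hstep : noiseDiff a ξ =
      densSM (hfun a ξ) -
        ((a⁻¹/2) • (MeasureTheory.Measure.dirac (-a/2)).toSignedMeasure +
          (a⁻¹/2) • (MeasureTheory.Measure.dirac (a/2)).toSignedMeasure) := by
    have hre : ∀ X Y d1 d2 : MeasureTheory.SignedMeasure ℝ,
        X - (Y + d1 + d2) = (X - Y) - (d1 + d2) := fun _ _ _ _ => by abel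
    unfold noiseDiff densSM
    rw [← withDensityᵥ_sub (integrable_indicator_const _ _ _) (integrable_indicator_const _ _ _),
      ← withDensityᵥ_smul _ ξ⁻¹, hre,
      ← withDensityᵥ_sub
        (((integrable_indicator_const _ _ _).sub (integrable_indicator_const _ _ _)).smul ξ⁻¹)
        (integrable_indicator_const _ _ _),
      hfuneq]
  rw [hstep, hdA, smul_toSignedMeasure _ (by positivity) _, smul_toSignedMeasure _ (by positivity) _]
  unfold muB
  rw [Measure.toSignedMeasure_add]

lemma muB_integral (a : ℝ) (ha : 0 < a) {g : ℝ → ℝ} (hc : Continuous g) (hb : ∀ x, |g x| ≤ 1) :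
    ∫ x, g x ∂(muB a) = (a⁻¹/2) * g (-a/2) + (a⁻¹/2) * g (a/2) := by
  unfold muB
  rw [integral_add_measure (integrable_of_bdd hc hb) (integrable_of_bdd hc hb),
    integral_smul_nnreal_measure, integral_smul_nnreal_measure,
    integral_dirac, integral_dirac, NNReal.smul_def, NNReal.smul_def,
    Real.coe_toNNReal _ (by positivity : (0:ℝ) ≤ a⁻¹/2), smul_eq_mul, smul_eq_mul]

lemma muA_integral (a ξ : ℝ) (ha : 0 < a) (hξ : 0 < ξ) (g : ℝ → ℝ) :
    ∫ x, g x ∂(muA a ξ) = ∫ x, hfun a ξ x * g x := by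
  have h1 : muA a ξ = volume.withDensity fun x => (((hfun a ξ x).toNNReal : ℝ≥0) : ℝ≥0∞) := rfl
  rw [h1, integral_withDensity_eq_integral_smul ((hfun_measurable a ξ).real_toNNReal) g]
  congr 1
  funext x
  rw [NNReal.smul_def, Real.coe_toNNReal _ (hfun_nonneg a ξ ha hξ x), smul_eq_mul]

end MainAux


section Estimate

open MeasureTheory

set_option maxHeartbeats 1000000 in
lemma integral_bound (a ξ : ℝ) (ha : 0 < a) (hξ : 0 < ξ) {g : ℝ → ℝ}
    (hb : ∀ x, |g x| ≤ 1) (hl : LipschitzWith 1 g) :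
    |(∫ x, hfun a ξ x * g x) - ((a⁻¹/2) * g (-a/2) + (a⁻¹/2) * g (a/2))|
      ≤ (2/a^2 + 1/(2*a)) * ξ := by
  have ha' : (0:ℝ) < a + ξ := by linarith
  have hgc : Continuous g := hl.continuous
  have hgi : ∀ l r : ℝ, IntervalIntegrable g volume l r := fun l r => hgc.intervalIntegrable l r
  -- step 1: the integral identity
  have hpt : ∀ x, hfun a ξ x * g x =
      (ξ⁻¹*(a+ξ)⁻¹) * Set.indicator (Set.Icc (-(a+ξ)/2) ((a+ξ)/2)) g x
        - (ξ⁻¹*a⁻¹ - (a^2)⁻¹) * Set.indicator (Set.Icc (-a/2) (a/2)) g x := by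
    intro x
    unfold hfun
    by_cases hx1 : x ∈ Set.Icc (-(a+ξ)/2) ((a+ξ)/2)
    · by_cases hx2 : x ∈ Set.Icc (-a/2) (a/2)
      · rw [Set.indicator_of_mem hx1, Set.indicator_of_mem hx2, Set.indicator_of_mem hx1,
          Set.indicator_of_mem hx2]
        ring
      · rw [Set.indicator_of_mem hx1, Set.indicator_of_notMem hx2, Set.indicator_of_mem hx1,
          Set.indicator_of_notMem hx2]
        ring
    · by_cases hx2 : x ∈ Set.Icc (-a/2) (a/2)
      · rw [Set.indicator_of_notMem hx1, Set.indicator_of_mem hx2,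
          Set.indicator_of_notMem hx1, Set.indicator_of_mem hx2]
        ring
      · rw [Set.indicator_of_notMem hx1, Set.indicator_of_notMem hx2,
          Set.indicator_of_notMem hx1, Set.indicator_of_notMem hx2]
        ring
  have hIf : Integrable
      (fun x => (ξ⁻¹*(a+ξ)⁻¹) * Set.indicator (Set.Icc (-(a+ξ)/2) ((a+ξ)/2)) g x) volume :=
    (((integrable_indicator_iff measurableSet_Icc).2 hgc.integrableOn_Icc).const_mul _)
  have hIg : Integrable
      (fun x => (ξ⁻¹*a⁻¹ - (a^2)⁻¹) * Set.indicator (Set.Icc (-a/2) (a/2)) g x) volume :=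
    (((integrable_indicator_iff measurableSet_Icc).2 hgc.integrableOn_Icc).const_mul _)
  have hid : (∫ x, hfun a ξ x * g x) =
      (ξ⁻¹*(a+ξ)⁻¹) * (∫ x in Set.Icc (-(a+ξ)/2) ((a+ξ)/2), g x)
        - (ξ⁻¹*a⁻¹ - (a^2)⁻¹) * (∫ x in Set.Icc (-a/2) (a/2), g x) := by
    calc (∫ x, hfun a ξ x * g x)
        = ∫ x, ((ξ⁻¹*(a+ξ)⁻¹) * Set.indicator (Set.Icc (-(a+ξ)/2) ((a+ξ)/2)) g x
            - (ξ⁻¹*a⁻¹ - (a^2)⁻¹) * Set.indicator (Set.Icc (-a/2) (a/2)) g x) := by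
          congr 1; funext x; exact hpt x
      _ = _ := by
          rw [integral_sub hIf hIg, integral_const_mul, integral_const_mul,
            integral_indicator measurableSet_Icc, integral_indicator measurableSet_Icc]
  -- step 2: splitting into interval integrals
  have hIccξ : (∫ x in Set.Icc (-(a+ξ)/2) ((a+ξ)/2), g x) =
      (∫ x in (-(a+ξ)/2)..(-a/2), g x) + ((∫ x in (-a/2)..(a/2), g x)
        + (∫ x in (a/2)..((a+ξ)/2), g x)) := by
    rw [integral_Icc_eq_integral_Ioc,
      ← intervalIntegral.integral_of_le (by linarith : -(a+ξ)/2 ≤ (a+ξ)/2),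
      ← intervalIntegral.integral_add_adjacent_intervals
        (hgi (-(a+ξ)/2) (-a/2)) (hgi (-a/2) ((a+ξ)/2)),
      ← intervalIntegral.integral_add_adjacent_intervals (hgi (-a/2) (a/2)) (hgi (a/2) ((a+ξ)/2))]
  have hIcc0 : (∫ x in Set.Icc (-a/2) (a/2), g x) = ∫ x in (-a/2)..(a/2), g x := by
    rw [integral_Icc_eq_integral_Ioc,
      ← intervalIntegral.integral_of_le (by linarith : -a/2 ≤ a/2)]
  -- step 3: elementary bounds
  have hu : |∫ x in (-a/2)..(a/2), g x| ≤ a := by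
    have h1 := intervalIntegral.norm_integral_le_of_norm_le_const
      (C := 1) (f := g) (a := -a/2) (b := a/2)
      (fun x _ => by rw [Real.norm_eq_abs]; exact hb x)
    rw [Real.norm_eq_abs, show a/2 - (-a/2) = a by ring, abs_of_pos ha, one_mul] at h1
    exact h1
  have hwR : |(∫ x in (a/2)..((a+ξ)/2), g x) - ξ/2 * g (a/2)| ≤ ξ/2 * (ξ/2) := by
    have e : (∫ x in (a/2)..((a+ξ)/2), g x) - ξ/2 * g (a/2)
        = ∫ x in (a/2)..((a+ξ)/2), (g x - g (a/2)) := by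
      rw [intervalIntegral.integral_sub (hgi _ _) intervalIntegrable_const,
        intervalIntegral.integral_const, smul_eq_mul, show (a+ξ)/2 - a/2 = ξ/2 by ring]
    rw [e]
    have h1 := intervalIntegral.norm_integral_le_of_norm_le_const
      (C := ξ/2) (f := fun x => g x - g (a/2)) (a := a/2) (b := (a+ξ)/2)
      (fun x hx => by
        rw [Set.uIoc_of_le (by linarith : a/2 ≤ (a+ξ)/2)] at hx
        have hd := hl.dist_le_mul x (a/2)
        rw [NNReal.coe_one, one_mul, Real.dist_eq, Real.dist_eq] at hd
        rw [Real.norm_eq_abs]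
        refine le_trans hd (abs_le.mpr ⟨by linarith [hx.1], by linarith [hx.2]⟩))
    rw [Real.norm_eq_abs, show (a+ξ)/2 - a/2 = ξ/2 by ring, abs_of_pos (by linarith : (0:ℝ) < ξ/2)]
      at h1
    exact h1
  have hwL : |(∫ x in (-(a+ξ)/2)..(-a/2), g x) - ξ/2 * g (-a/2)| ≤ ξ/2 * (ξ/2) := by
    have e : (∫ x in (-(a+ξ)/2)..(-a/2), g x) - ξ/2 * g (-a/2)
        = ∫ x in (-(a+ξ)/2)..(-a/2), (g x - g (-a/2)) := by
      rw [intervalIntegral.integral_sub (hgi _ _) intervalIntegrable_const,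
        intervalIntegral.integral_const, smul_eq_mul, show -a/2 - (-(a+ξ)/2) = ξ/2 by ring]
    rw [e]
    have h1 := intervalIntegral.norm_integral_le_of_norm_le_const
      (C := ξ/2) (f := fun x => g x - g (-a/2)) (a := -(a+ξ)/2) (b := -a/2)
      (fun x hx => by
        rw [Set.uIoc_of_le (by linarith : -(a+ξ)/2 ≤ -a/2)] at hx
        have hd := hl.dist_le_mul x (-a/2)
        rw [NNReal.coe_one, one_mul, Real.dist_eq, Real.dist_eq] at hd
        rw [Real.norm_eq_abs]
        refine le_trans hd (abs_le.mpr ⟨by linarith [hx.1], by linarith [hx.2]⟩))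
    rw [Real.norm_eq_abs, show -a/2 - (-(a+ξ)/2) = ξ/2 by ring,
      abs_of_pos (by linarith : (0:ℝ) < ξ/2)] at h1
    exact h1
  -- step 4: assembling
  have hEeq : (∫ x, hfun a ξ x * g x) - ((a⁻¹/2) * g (-a/2) + (a⁻¹/2) * g (a/2)) =
      ((ξ⁻¹*(a+ξ)⁻¹) - (ξ⁻¹*a⁻¹ - (a^2)⁻¹)) * (∫ x in (-a/2)..(a/2), g x)
      + (ξ⁻¹*(a+ξ)⁻¹) * ((∫ x in (-(a+ξ)/2)..(-a/2), g x) - ξ/2 * g (-a/2))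
      + (ξ⁻¹*(a+ξ)⁻¹) * ((∫ x in (a/2)..((a+ξ)/2), g x) - ξ/2 * g (a/2))
      + ((ξ⁻¹*(a+ξ)⁻¹) * (ξ/2) - a⁻¹/2) * (g (-a/2) + g (a/2)) := by
    rw [hid, hIccξ, hIcc0]
    ring
  have hc12 : (ξ⁻¹*(a+ξ)⁻¹) - (ξ⁻¹*a⁻¹ - (a^2)⁻¹) = ξ / (a^2*(a+ξ)) := by
    field_simp
    ring
  have hc4 : (ξ⁻¹*(a+ξ)⁻¹) * (ξ/2) - a⁻¹/2 = -(ξ / (2*a*(a+ξ))) := by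
    field_simp
    ring
  have hc1n : (0:ℝ) ≤ ξ⁻¹*(a+ξ)⁻¹ := by positivity
  have b1 : |((ξ⁻¹*(a+ξ)⁻¹) - (ξ⁻¹*a⁻¹ - (a^2)⁻¹)) * (∫ x in (-a/2)..(a/2), g x)| ≤ ξ/a^2 := by
    rw [abs_mul, hc12, abs_of_nonneg (by positivity : (0:ℝ) ≤ ξ / (a^2*(a+ξ)))]
    calc ξ/(a^2*(a+ξ)) * |∫ x in (-a/2)..(a/2), g x|
        ≤ ξ/(a^2*(a+ξ)) * a := mul_le_mul_of_nonneg_left hu (by positivity)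
      _ ≤ ξ/a^2 := by
          rw [div_mul_eq_mul_div, div_le_div_iff₀ (by positivity) (by positivity)]
          nlinarith [sq_nonneg a, mul_pos ha hξ]
  have b2 : |(ξ⁻¹*(a+ξ)⁻¹) * ((∫ x in (-(a+ξ)/2)..(-a/2), g x) - ξ/2 * g (-a/2))|
      ≤ ξ/(4*a) := by
    rw [abs_mul, abs_of_nonneg hc1n]
    calc (ξ⁻¹*(a+ξ)⁻¹) * |(∫ x in (-(a+ξ)/2)..(-a/2), g x) - ξ/2 * g (-a/2)|
        ≤ (ξ⁻¹*(a+ξ)⁻¹) * (ξ/2*(ξ/2)) := mul_le_mul_of_nonneg_left hwL hc1n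
      _ = ξ/(4*(a+ξ)) := by field_simp; ring
      _ ≤ ξ/(4*a) := by gcongr <;> linarith
  have b3 : |(ξ⁻¹*(a+ξ)⁻¹) * ((∫ x in (a/2)..((a+ξ)/2), g x) - ξ/2 * g (a/2))|
      ≤ ξ/(4*a) := by
    rw [abs_mul, abs_of_nonneg hc1n]
    calc (ξ⁻¹*(a+ξ)⁻¹) * |(∫ x in (a/2)..((a+ξ)/2), g x) - ξ/2 * g (a/2)|
        ≤ (ξ⁻¹*(a+ξ)⁻¹) * (ξ/2*(ξ/2)) := mul_le_mul_of_nonneg_left hwR hc1n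
      _ = ξ/(4*(a+ξ)) := by field_simp; ring
      _ ≤ ξ/(4*a) := by gcongr <;> linarith
  have b4 : |((ξ⁻¹*(a+ξ)⁻¹) * (ξ/2) - a⁻¹/2) * (g (-a/2) + g (a/2))| ≤ ξ/a^2 := by
    rw [abs_mul, hc4, abs_neg, abs_of_nonneg (by positivity : (0:ℝ) ≤ ξ / (2*a*(a+ξ)))]
    have hg2 : |g (-a/2) + g (a/2)| ≤ 2 :=
      le_trans (abs_add_le _ _) (by linarith [hb (-a/2), hb (a/2)])
    calc ξ/(2*a*(a+ξ)) * |g (-a/2) + g (a/2)|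
        ≤ ξ/(2*a*(a+ξ)) * 2 := mul_le_mul_of_nonneg_left hg2 (by positivity)
      _ ≤ ξ/a^2 := by
          rw [div_mul_eq_mul_div, div_le_div_iff₀ (by positivity) (by positivity)]
          nlinarith [mul_pos ha hξ]
  rw [hEeq]
  have tri : ∀ A B C D : ℝ, |A + B + C + D| ≤ |A| + |B| + |C| + |D| := by
    intro A B C D
    calc |A + B + C + D| ≤ |A + B + C| + |D| := abs_add_le _ _
      _ ≤ (|A + B| + |C|) + |D| := by linarith [abs_add_le (A+B) C]
      _ ≤ ((|A| + |B|) + |C|) + |D| := by linarith [abs_add_le A B]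
  refine le_trans (tri _ _ _ _) ?_
  have hfin : ξ/a^2 + ξ/(4*a) + ξ/(4*a) + ξ/a^2 = (2/a^2 + 1/(2*a)) * ξ := by
    field_simp
    ring
  linarith [b1, b2, b3, b4]

end Estimate

/-- derivative of the uniform noise kernel with respect to the noise radius:
with `ρ_ξ = (a+ξ)⁻¹ 1_{[−(a+ξ)/2,(a+ξ)/2]}` one has `(ρ_ξ − ρ₀)/ξ → ρ̇` in the
Wasserstein–Kantorovich norm, where
`ρ̇ = −a⁻² 1_{[−a/2,a/2]} + (a⁻¹/2) δ_{−a/2} + (a⁻¹/2) δ_{a/2}`. -/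
theorem uniform_noise_kernel_derivative (a : ℝ) (ha : 0 < a) :
    Filter.Tendsto
      (fun ξ : ℝ => Wnorm (ξ⁻¹ •
          (densSM (Set.indicator (Set.Icc (-(a+ξ)/2) ((a+ξ)/2)) (fun _ => (a+ξ)⁻¹)) -
           densSM (Set.indicator (Set.Icc (-a/2) (a/2)) (fun _ => a⁻¹))) -
        (densSM (Set.indicator (Set.Icc (-a/2) (a/2)) (fun _ => -(a^2)⁻¹)) +
          (a⁻¹/2) • (MeasureTheory.Measure.dirac (-a/2)).toSignedMeasure +
          (a⁻¹/2) • (MeasureTheory.Measure.dirac (a/2)).toSignedMeasure)))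
      (nhdsWithin 0 (Set.Ioi 0)) (nhds 0) := by
  show Filter.Tendsto (fun ξ : ℝ => Wnorm (noiseDiff a ξ)) (nhdsWithin 0 (Set.Ioi 0)) (nhds 0)
  have key : ∀ ξ : ℝ, 0 < ξ → ∀ g : {g : ℝ → ℝ // (∀ x, |g x| ≤ 1) ∧ LipschitzWith 1 g},
      |∫ x, g.1 x ∂(noiseDiff a ξ).toJordanDecomposition.posPart -
        ∫ x, g.1 x ∂(noiseDiff a ξ).toJordanDecomposition.negPart|
        ≤ (2/a^2 + 1/(2*a)) * ξ := by
    rintro ξ hξ ⟨g, hb, hl⟩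
    rw [jordan_integral_eq (noiseDiff_repr a ξ ha hξ) hl.continuous hb,
      muA_integral a ξ ha hξ g, muB_integral a ha hl.continuous hb]
    exact integral_bound a ξ ha hξ hb hl
  have hW : ∀ ξ : ℝ, 0 < ξ → |Wnorm (noiseDiff a ξ)| ≤ (2/a^2 + 1/(2*a)) * ξ := by
    intro ξ hξ
    have hbdd : BddAbove (Set.range fun g : {g : ℝ → ℝ // (∀ x, |g x| ≤ 1) ∧ LipschitzWith 1 g} =>
        (∫ x, g.1 x ∂(noiseDiff a ξ).toJordanDecomposition.posPart -
          ∫ x, g.1 x ∂(noiseDiff a ξ).toJordanDecomposition.negPart)) := by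
      refine ⟨(2/a^2 + 1/(2*a)) * ξ, ?_⟩
      rintro y ⟨g, rfl⟩
      exact (abs_le.mp (key ξ hξ g)).2
    have g0 : {g : ℝ → ℝ // (∀ x, |g x| ≤ 1) ∧ LipschitzWith 1 g} :=
      ⟨fun _ => (0:ℝ), fun x => by simp, (LipschitzWith.const (0:ℝ)).weaken zero_le_one⟩
    haveI : Nonempty {g : ℝ → ℝ // (∀ x, |g x| ≤ 1) ∧ LipschitzWith 1 g} := ⟨g0⟩
    rw [abs_le]
    constructor
    · have h00 := le_ciSup hbdd
        (⟨fun _ => (0:ℝ), fun x => by simp,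
          (LipschitzWith.const (0:ℝ)).weaken zero_le_one⟩ :
          {g : ℝ → ℝ // (∀ x, |g x| ≤ 1) ∧ LipschitzWith 1 g})
    
      simp only [integral_zero, sub_zero] at h00
      have h0 : (0:ℝ) ≤ Wnorm (noiseDiff a ξ) := h00
      have hC : (0:ℝ) ≤ (2/a^2 + 1/(2*a)) * ξ := by positivity
      linarith
    · exact ciSup_le fun g => (abs_le.mp (key ξ hξ g)).2
  have hlim : Filter.Tendsto (fun ξ : ℝ => (2/a^2 + 1/(2*a)) * ξ)
      (nhdsWithin 0 (Set.Ioi 0)) (nhds 0) := by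
    have hc : Continuous (fun ξ : ℝ => (2/a^2 + 1/(2*a)) * ξ) :=
      continuous_const.mul continuous_id
    have h1 := hc.tendsto 0
    rw [mul_zero] at h1
    exact h1.mono_left nhdsWithin_le_nhds
  refine squeeze_zero_norm' ?_ hlim
  filter_upwards [self_mem_nhdsWithin] with ξ hξ
  rw [Real.norm_eq_abs]
  exact hW ξ hξ
end
end
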